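/- arXiv:2505.04144 — 12 statements merged into one kernel-verified Lean document; each statement's English description precedes it below -/
import Mathlib

section
/- For every positive integer n, ρ(n) ≤ χ_μ(S(K_n)) ≤ χ_{μ_i}(S(K_n)) ≤ ρ(n)+1, where S(K_n) is the subdivision graph of the complete graph K_n and ρ(n) is the minimum number of parts in a partition of the edge set of K_n such that each part induces a K_4-free subgraph. -/
open SimpleGraph

variable {V W : Type*}

/-- Two vertices of `X` are `X`-visible if some geodesic between them has all
internal vertices outside `X`; `X` is a mutual-visibility set if this holds
for every reachable pair of vertices of `X`. -/
def IsMVSet (G : SimpleGraph V) (X : Set V) : Prop :=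
  ∀ x ∈ X, ∀ y ∈ X, x ≠ y → G.Reachable x y →
    ∃ p : G.Walk x y, p.length = G.dist x y ∧
      ∀ z ∈ p.support, z ≠ x → z ≠ y → z ∉ X

/-- An independent mutual-visibility set. -/
def IsIMVSet (G : SimpleGraph V) (X : Set V) : Prop :=
  (∀ x ∈ X, ∀ y ∈ X, ¬ G.Adj x y) ∧ IsMVSet G X

/-- The mutual-visibility chromatic number: the least `k` such that the vertex
set partitions into `k` mutual-visibility sets. -/
noncomputable def mvChrom (G : SimpleGraph V) : ℕ :=
  sInf {k | ∃ f : V → Fin k, ∀ i, IsMVSet G (f ⁻¹' {i})}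

/-- The independent mutual-visibility chromatic number. -/
noncomputable def imvChrom (G : SimpleGraph V) : ℕ :=
  sInf {k | ∃ f : V → Fin k, ∀ i, IsIMVSet G (f ⁻¹' {i})}

/-- The chromatic number, as a natural number. -/
noncomputable def chromNat (G : SimpleGraph V) : ℕ :=
  sInf {k | G.Colorable k}

/-- The independent mutual-visibility number `μᵢ(G)`. -/
noncomputable def imvNum (G : SimpleGraph V) : ℕ :=
  sSup {n | ∃ s : Finset V, IsIMVSet G ↑s ∧ s.card = n}

/-- The independence number `α(G)`. -/
noncomputable def indepNum (G : SimpleGraph V) : ℕ :=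
  sSup {n | ∃ s : Finset V, (∀ x ∈ s, ∀ y ∈ s, ¬ G.Adj x y) ∧ s.card = n}

/-- A symmetric `r`-edge-coloring of `K_n` in which no color class contains a `K₄`. -/
def IsK4FreeColoring {n r : ℕ} (c : Fin n → Fin n → Fin r) : Prop :=
  (∀ i j, c i j = c j i) ∧
  ∀ k : Fin r, ¬ ∃ a b d e : Fin n, a ≠ b ∧ a ≠ d ∧ a ≠ e ∧ b ≠ d ∧ b ≠ e ∧ d ≠ e ∧
    c a b = k ∧ c a d = k ∧ c a e = k ∧ c b d = k ∧ c b e = k ∧ c d e = k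

/-- `ρ(n)`: the least number of parts in a `K₄`-free partition of `E(K_n)`. -/
noncomputable def rho (n : ℕ) : ℕ :=
  sInf {r | ∃ c : Fin n → Fin n → Fin r, IsK4FreeColoring c}

/-- The vertex type of the subdivision graph of `K_n`: original vertices plus one
subdivision vertex for each edge (given as an ordered pair `p.1 < p.2`). -/
abbrev SubKVert (n : ℕ) := Fin n ⊕ {p : Fin n × Fin n // p.1 < p.2}

/-- The subdivision graph `S(K_n)`. -/
def subK (n : ℕ) : SimpleGraph (SubKVert n) where
  Adj a b :=
    match a, b with
    | Sum.inl i, Sum.inr e => i = e.1.1 ∨ i = e.1.2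
    | Sum.inr e, Sum.inl i => i = e.1.1 ∨ i = e.1.2
    | _, _ => False
  symm := by
    refine ⟨?_⟩
    rintro (i | e) (j | f) h <;> simp_all
  loopless := by
    refine ⟨?_⟩
    rintro (i | e) h <;> simp_all

section Aux
variable {n : ℕ}

lemma subK_adj_lr {i : Fin n} {e} :
    (subK n).Adj (Sum.inl i) (Sum.inr e) ↔ i = e.1.1 ∨ i = e.1.2 := Iff.rfl

lemma subK_adj_rl {i : Fin n} {e} :
    (subK n).Adj (Sum.inr e) (Sum.inl i) ↔ i = e.1.1 ∨ i = e.1.2 := Iff.rfl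

lemma subK_not_adj_ll {i j : Fin n} : ¬ (subK n).Adj (Sum.inl i) (Sum.inl j) := fun h => h

lemma subK_not_adj_rr {e f} : ¬ (subK n).Adj (Sum.inr e : SubKVert n) (Sum.inr f) := fun h => h

lemma subK_adj_isLeft {a b : SubKVert n} (h : (subK n).Adj a b) : a.isLeft = !b.isLeft := by
  rcases a with i | e <;> rcases b with j | f
  · exact absurd h subK_not_adj_ll
  · rfl
  · rfl
  · exact absurd h subK_not_adj_rr

lemma subK_even_length {a b : SubKVert n} (p : (subK n).Walk a b) :
    Even p.length ↔ a.isLeft = b.isLeft := by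
  induction p with
  | nil => simp
  | @cons u v w h q ih =>
    rw [SimpleGraph.Walk.length_cons, Nat.even_add_one, ih, subK_adj_isLeft h]
    cases v.isLeft <;> cases w.isLeft <;> simp

lemma subK_dist_eq_two {u v : SubKVert n} (hne : u ≠ v) (hadj : ¬ (subK n).Adj u v)
    (p : (subK n).Walk u v) (hp : p.length = 2) : (subK n).dist u v = 2 := by
  have h1 : (subK n).dist u v ≤ 2 := hp ▸ SimpleGraph.dist_le p
  have h0 : (subK n).dist u v ≠ 0 := by
    intro h
    rcases SimpleGraph.dist_eq_zero_iff_eq_or_not_reachable.mp h with h' | h'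
    · exact hne h'
    · exact h' ⟨p⟩
  have hone : (subK n).dist u v ≠ 1 := fun h => hadj (SimpleGraph.dist_eq_one_iff_adj.mp h)
  omega

lemma subK_mid_of_walk2 {u v : SubKVert n} (p : (subK n).Walk u v) (hp : p.length = 2) :
    ∃ w, (subK n).Adj u w ∧ (subK n).Adj w v := by
  cases p with
  | nil => simp at hp
  | cons h q =>
    cases q with
    | nil => simp at hp
    | cons h2 q2 =>
      cases q2 with
      | nil => exact ⟨_, h, h2⟩
      | cons h3 q3 => simp [SimpleGraph.Walk.length_cons] at hp

lemma subK_mid_of_walk4 {u v : SubKVert n} (p : (subK n).Walk u v) (hp : p.length = 4) :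
    ∃ w1 w2 w3, (subK n).Adj u w1 ∧ (subK n).Adj w1 w2 ∧ (subK n).Adj w2 w3 ∧
      (subK n).Adj w3 v ∧ w2 ∈ p.support := by
  cases p with
  | nil => simp at hp
  | cons h1 q1 =>
    cases q1 with
    | nil => simp at hp
    | cons h2 q2 =>
      cases q2 with
      | nil => simp at hp
      | cons h3 q3 =>
        cases q3 with
        | nil => simp at hp
        | cons h4 q4 =>
          cases q4 with
          | nil => exact ⟨_, _, _, h1, h2, h3, h4, by simp⟩
          | cons h5 q5 => simp [SimpleGraph.Walk.length_cons] at hp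

lemma subK_dist_eq_four {e f : {p : Fin n × Fin n // p.1 < p.2}}
    (hd : ∀ x : Fin n, (x = e.1.1 ∨ x = e.1.2) → (x = f.1.1 ∨ x = f.1.2) → False)
    (p : (subK n).Walk (Sum.inr e) (Sum.inr f)) (hp : p.length = 4) :
    (subK n).dist (Sum.inr e) (Sum.inr f) = 4 := by
  have h4 : (subK n).dist (Sum.inr e) (Sum.inr f) ≤ 4 := hp ▸ SimpleGraph.dist_le p
  have hr : (subK n).Reachable (Sum.inr e) (Sum.inr f) := ⟨p⟩
  obtain ⟨q, hq⟩ := hr.exists_walk_length_eq_dist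
  have heven : Even ((subK n).dist (Sum.inr e) (Sum.inr f)) :=
    hq ▸ (subK_even_length q).mpr rfl
  have hne : (Sum.inr e : SubKVert n) ≠ Sum.inr f := by
    intro h
    injection h with h'
    exact hd e.1.1 (Or.inl rfl) (Or.inl (by rw [h']))
  have h0 : (subK n).dist (Sum.inr e) (Sum.inr f) ≠ 0 := by
    intro h
    rcases SimpleGraph.dist_eq_zero_iff_eq_or_not_reachable.mp h with h' | h'
    · exact hne h'
    · exact h' hr
  have h2 : (subK n).dist (Sum.inr e) (Sum.inr f) ≠ 2 := by
    intro hd2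
    obtain ⟨w, hw1, hw2⟩ := subK_mid_of_walk2 q (by rw [hq, hd2])
    rcases w with x | g
    · exact hd x (subK_adj_rl.mp hw1) (subK_adj_lr.mp hw2)
    · exact subK_not_adj_rr hw1
  rcases heven with ⟨m, hm⟩
  omega

lemma subK_geo2 {u v : SubKVert n} (hne : u ≠ v) (hadj : ¬ (subK n).Adj u v)
    (p : (subK n).Walk u v) (hp : p.length = 2) : p.length = (subK n).dist u v := by
  rw [subK_dist_eq_two hne hadj p hp, hp]

lemma subK_geo4 {e f : {p : Fin n × Fin n // p.1 < p.2}}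
    (hd : ∀ x : Fin n, (x = e.1.1 ∨ x = e.1.2) → (x = f.1.1 ∨ x = f.1.2) → False)
    (p : (subK n).Walk (Sum.inr e) (Sum.inr f)) (hp : p.length = 4) :
    p.length = (subK n).dist (Sum.inr e) (Sum.inr f) := by
  rw [subK_dist_eq_four hd p hp, hp]

def mkE (i j : Fin n) (h : i ≠ j) : {p : Fin n × Fin n // p.1 < p.2} :=
  if hij : i < j then ⟨(i, j), hij⟩ else ⟨(j, i), h.lt_or_gt.resolve_left hij⟩

lemma mem_mkE_iff {i j x : Fin n} (h : i ≠ j) :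
    (x = (mkE i j h).1.1 ∨ x = (mkE i j h).1.2) ↔ (x = i ∨ x = j) := by
  unfold mkE
  split
  · exact Iff.rfl
  · exact or_comm

lemma mkE_left {i j : Fin n} (h : i ≠ j) : i = (mkE i j h).1.1 ∨ i = (mkE i j h).1.2 :=
  (mem_mkE_iff h).mpr (Or.inl rfl)

lemma mkE_right {i j : Fin n} (h : i ≠ j) : j = (mkE i j h).1.1 ∨ j = (mkE i j h).1.2 :=
  (mem_mkE_iff h).mpr (Or.inr rfl)

lemma mkE_symm {i j : Fin n} (h : i ≠ j) (h' : j ≠ i) : mkE i j h = mkE j i h' := by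
  unfold mkE
  rcases lt_or_gt_of_ne h with hlt | hgt
  · rw [dif_pos hlt, dif_neg (not_lt.mpr hlt.le)]
  · rw [dif_neg (not_lt.mpr hgt.le), dif_pos hgt]

lemma eq_mkE {g : {p : Fin n × Fin n // p.1 < p.2}} {x y : Fin n} (hxy : x ≠ y)
    (hx : x = g.1.1 ∨ x = g.1.2) (hy : y = g.1.1 ∨ y = g.1.2) : g = mkE x y hxy := by
  unfold mkE
  rcases hx with hx | hx <;> rcases hy with hy | hy
  · exact absurd (hx.trans hy.symm) hxy
  · have hlt : x < y := by rw [hx, hy]; exact g.2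
    rw [dif_pos hlt]
    exact Subtype.ext (Prod.ext hx.symm hy.symm)
  · have hlt : y < x := by rw [hx, hy]; exact g.2
    rw [dif_neg (not_lt.mpr hlt.le)]
    exact Subtype.ext (Prod.ext hy.symm hx.symm)
  · exact absurd (hx.trans hy.symm) hxy

lemma c_mkE {r : ℕ} (c : Fin n → Fin n → Fin r) (hsym : ∀ i j, c i j = c j i)
    {x y : Fin n} (h : x ≠ y) :
    c (mkE x y h).1.1 (mkE x y h).1.2 = c x y := by
  unfold mkE
  split
  · rfl
  · exact hsym y x


lemma encode_inj {N m1 M1 m2 M2 : ℕ} (h1 : M1 < N) (h2 : M2 < N)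
    (h : m1 * N + M1 = m2 * N + M2) : m1 = m2 ∧ M1 = M2 := by
  have e1 : (m1 * N + M1) % N = M1 % N := by rw [Nat.mul_comm]; exact Nat.mul_add_mod N m1 M1
  have e2 : (m2 * N + M2) % N = M2 % N := by rw [Nat.mul_comm]; exact Nat.mul_add_mod N m2 M2
  have hM : M1 = M2 := by
    rw [← Nat.mod_eq_of_lt h1, ← Nat.mod_eq_of_lt h2, ← e1, ← e2, h]
  have hm : m1 * N = m2 * N := by omega
  have hN : 0 < N := Nat.pos_of_ne_zero (by omega)
  exact ⟨Nat.eq_of_mul_eq_mul_right hN hm, hM⟩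

lemma rho_set_nonempty' (n : ℕ) :
    ∃ r, ∃ c : Fin n → Fin n → Fin r, IsK4FreeColoring c := by
  refine ⟨n * n + 1, fun i j => ⟨min i.1 j.1 * n + max i.1 j.1, ?_⟩, ?_, ?_⟩
  · have hi := i.2
    have hj := j.2
    have h1 : min i.1 j.1 + 1 ≤ n := by omega
    have h2 : max i.1 j.1 < n := by omega
    nlinarith [Nat.mul_le_mul_right n h1]
  · intro i j
    simp [Nat.min_comm, Nat.max_comm]
  · rintro k ⟨a, b, d, e, hab, had, hae, hbd, hbe, hde, c1, -, -, -, -, c6⟩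
    have hval : min a.1 b.1 * n + max a.1 b.1 = min d.1 e.1 * n + max d.1 e.1 := by
      have := c1.trans c6.symm
      simpa [Fin.ext_iff] using this
    have hmax1 : max a.1 b.1 < n := by have := a.2; have := b.2; omega
    have hmax2 : max d.1 e.1 < n := by have := d.2; have := e.2; omega
    obtain ⟨hm, hM⟩ := encode_inj hmax1 hmax2 hval
    have hab' : a.1 ≠ b.1 := fun h => hab (Fin.ext h)
    have had' : a.1 ≠ d.1 := fun h => had (Fin.ext h)
    have hae' : a.1 ≠ e.1 := fun h => hae (Fin.ext h)
    have hbd' : b.1 ≠ d.1 := fun h => hbd (Fin.ext h)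
    have hbe' : b.1 ≠ e.1 := fun h => hbe (Fin.ext h)
    have hde' : d.1 ≠ e.1 := fun h => hde (Fin.ext h)
    omega

end Aux


section Main
variable {n : ℕ}

lemma fiber_imv {r : ℕ} (c : Fin n → Fin n → Fin r) (hc : IsK4FreeColoring c) :
    ∃ f : SubKVert n → Fin (r + 1), ∀ i, IsIMVSet (subK n) (f ⁻¹' {i}) := by
  obtain ⟨hsym, hK4⟩ := hc
  set f : SubKVert n → Fin (r + 1) :=
    Sum.elim (fun _ => Fin.last r) (fun e => (c e.1.1 e.1.2).castSucc) with hfdef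
  have flast : ∀ a : Fin n, f (Sum.inl a) = Fin.last r := fun a => rfl
  have fcast : ∀ e, f (Sum.inr e) = (c e.1.1 e.1.2).castSucc := fun e => rfl
  have hcl : ∀ (k : Fin r), (k.castSucc : Fin (r+1)) ≠ Fin.last r :=
    fun k => (Fin.castSucc_lt_last k).ne
  refine ⟨f, fun i => ⟨?_, ?_⟩⟩
  · -- independence
    rintro (a | e) hx (b | g) hy hadj
    · exact hadj
    · simp only [Set.mem_preimage, Set.mem_singleton_iff, flast, fcast] at hx hy
      exact hcl _ (hy.trans hx.symm)
    · simp only [Set.mem_preimage, Set.mem_singleton_iff, flast, fcast] at hx hy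
      exact hcl _ (hx.trans hy.symm)
    · exact hadj
  · -- MV
    rintro (a | e) hx (b | g) hy hne hr
    · -- inl a, inl b
      simp only [Set.mem_preimage, Set.mem_singleton_iff, flast] at hx
      have hab : a ≠ b := fun h => hne (by rw [h])
      refine ⟨SimpleGraph.Walk.cons (subK_adj_lr.mpr (mkE_left hab))
        (SimpleGraph.Walk.cons (subK_adj_rl.mpr (mkE_right hab)) SimpleGraph.Walk.nil), ?_, ?_⟩
      · exact subK_geo2 hne subK_not_adj_ll _ (by rfl)
      · intro z hz hz1 hz2
        simp only [SimpleGraph.Walk.support_cons, SimpleGraph.Walk.support_nil,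
          List.mem_cons, List.mem_singleton] at hz
        rcases hz with h | h | h | h
        · exact absurd h hz1
        · subst h
          simp only [Set.mem_preimage, Set.mem_singleton_iff, fcast]
          rw [← hx]
          exact hcl _
        · exact absurd h hz2
        · exact absurd h (by simp)
    · -- inl, inr : impossible (different fibers)
      simp only [Set.mem_preimage, Set.mem_singleton_iff, flast, fcast] at hx hy
      exact absurd (hy.trans hx.symm) (hcl _)
    · simp only [Set.mem_preimage, Set.mem_singleton_iff, flast, fcast] at hx hy
      exact absurd (hx.trans hy.symm) (hcl _)
    · -- inr e, inr g
      simp only [Set.mem_preimage, Set.mem_singleton_iff, fcast] at hx hy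
      have hk : c e.1.1 e.1.2 = c g.1.1 g.1.2 :=
        Fin.castSucc_injective r (hx.trans hy.symm)
      by_cases hsh : e.1.1 = g.1.1 ∨ e.1.1 = g.1.2 ∨ e.1.2 = g.1.1 ∨ e.1.2 = g.1.2
      · -- shared endpoint v
        have hv : ∃ v : Fin n, (v = e.1.1 ∨ v = e.1.2) ∧ (v = g.1.1 ∨ v = g.1.2) := by
          rcases hsh with h | h | h | h
          exacts [⟨e.1.1, Or.inl rfl, Or.inl h⟩, ⟨e.1.1, Or.inl rfl, Or.inr h⟩,
            ⟨e.1.2, Or.inr rfl, Or.inl h⟩, ⟨e.1.2, Or.inr rfl, Or.inr h⟩]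
        obtain ⟨v, hv1, hv2⟩ := hv
        refine ⟨SimpleGraph.Walk.cons (subK_adj_rl.mpr hv1)
          (SimpleGraph.Walk.cons (subK_adj_lr.mpr hv2) SimpleGraph.Walk.nil), ?_, ?_⟩
        · exact subK_geo2 hne subK_not_adj_rr _ (by rfl)
        · intro z hz hz1 hz2
          simp only [SimpleGraph.Walk.support_cons, SimpleGraph.Walk.support_nil,
            List.mem_cons, List.mem_singleton] at hz
          rcases hz with h | h | h | h
          · exact absurd h hz1
          · subst h
            simp only [Set.mem_preimage, Set.mem_singleton_iff, flast]
            rw [← hx]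
            exact fun hcontra => hcl _ hcontra.symm
          · exact absurd h hz2
          · exact absurd h (by simp)
      · -- disjoint edges
        push_neg at hsh
        obtain ⟨h11, h12, h21, h22⟩ := hsh
        have hd : ∀ x : Fin n, (x = e.1.1 ∨ x = e.1.2) → (x = g.1.1 ∨ x = g.1.2) → False := by
          rintro x (rfl | rfl) (h | h) <;> simp_all
        have hex : ∃ x y : Fin n, (x = e.1.1 ∨ x = e.1.2) ∧ (y = g.1.1 ∨ y = g.1.2) ∧
            c x y ≠ c e.1.1 e.1.2 := by
          by_contra hcon
          push_neg at hcon
          exact hK4 (c e.1.1 e.1.2) ⟨e.1.1, e.1.2, g.1.1, g.1.2, e.2.ne, h11, h12, h21, h22,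
            g.2.ne, rfl, hcon _ _ (Or.inl rfl) (Or.inl rfl), hcon _ _ (Or.inl rfl) (Or.inr rfl),
            hcon _ _ (Or.inr rfl) (Or.inl rfl), hcon _ _ (Or.inr rfl) (Or.inr rfl), hk.symm⟩
        obtain ⟨x, y, hxe, hyg, hcxy⟩ := hex
        have hxy : x ≠ y := fun h => hd x hxe (h ▸ hyg)
        refine ⟨SimpleGraph.Walk.cons (subK_adj_rl.mpr hxe)
          (SimpleGraph.Walk.cons (subK_adj_lr.mpr (mkE_left hxy))
          (SimpleGraph.Walk.cons (subK_adj_rl.mpr (mkE_right hxy))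
          (SimpleGraph.Walk.cons (subK_adj_lr.mpr hyg) SimpleGraph.Walk.nil))), ?_, ?_⟩
        · exact subK_geo4 hd _ (by rfl)
        · intro z hz hz1 hz2
          simp only [SimpleGraph.Walk.support_cons, SimpleGraph.Walk.support_nil,
            List.mem_cons, List.mem_singleton] at hz
          rcases hz with h | h | h | h | h | h
          · exact absurd h hz1
          · subst h
            simp only [Set.mem_preimage, Set.mem_singleton_iff, flast]
            rw [← hx]
            exact fun hcontra => hcl _ hcontra.symm
          · subst h
            simp only [Set.mem_preimage, Set.mem_singleton_iff, fcast]
            rw [← hx, c_mkE c hsym hxy]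
            exact fun hcontra => hcxy (Fin.castSucc_injective r hcontra)
          · subst h
            simp only [Set.mem_preimage, Set.mem_singleton_iff, flast]
            rw [← hx]
            exact fun hcontra => hcl _ hcontra.symm
          · exact absurd h hz2
          · exact absurd h (by simp)

end Main


lemma mv_to_coloring {k : ℕ} (f : SubKVert n → Fin k)
    (hf : ∀ i, IsMVSet (subK n) (f ⁻¹' {i})) :
    ∃ c : Fin n → Fin n → Fin k, IsK4FreeColoring c := by
  refine ⟨fun i j => if h : i ≠ j then f (Sum.inr (mkE i j h)) else f (Sum.inl i), ?_, ?_⟩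
  · intro i j
    by_cases h : i = j
    · subst h; rfl
    · beta_reduce
      rw [dif_pos h, dif_pos (Ne.symm h), mkE_symm h (Ne.symm h)]
  · rintro k0 ⟨a, b, d, e, hab, had, hae, hbd, hbe, hde, h1, h2, h3, h4, h5, h6⟩
    beta_reduce at h1 h2 h3 h4 h5 h6
    rw [dif_pos hab] at h1
    rw [dif_pos had] at h2
    rw [dif_pos hae] at h3
    rw [dif_pos hbd] at h4
    rw [dif_pos hbe] at h5
    rw [dif_pos hde] at h6
    -- the two disjoint subdivision vertices
    have hd : ∀ x : Fin n, (x = (mkE a b hab).1.1 ∨ x = (mkE a b hab).1.2) →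
        (x = (mkE d e hde).1.1 ∨ x = (mkE d e hde).1.2) → False := by
      intro x hx hy
      rcases (mem_mkE_iff hab).mp hx with rfl | rfl <;>
        rcases (mem_mkE_iff hde).mp hy with h | h <;> simp_all
    have hne : (Sum.inr (mkE a b hab) : SubKVert n) ≠ Sum.inr (mkE d e hde) := by
      intro h
      injection h with h'
      exact hd (mkE a b hab).1.1 (Or.inl rfl) (Or.inl (by rw [h']))
    -- an explicit length-4 walk between them
    let p0 : (subK n).Walk (Sum.inr (mkE a b hab)) (Sum.inr (mkE d e hde)) :=
      SimpleGraph.Walk.cons (subK_adj_rl.mpr (mkE_left hab))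
        (SimpleGraph.Walk.cons (subK_adj_lr.mpr (mkE_left had))
        (SimpleGraph.Walk.cons (subK_adj_rl.mpr (mkE_right had))
        (SimpleGraph.Walk.cons (subK_adj_lr.mpr (mkE_left hde)) SimpleGraph.Walk.nil)))
    have hx1 : (Sum.inr (mkE a b hab) : SubKVert n) ∈ f ⁻¹' {k0} := h1
    have hx2 : (Sum.inr (mkE d e hde) : SubKVert n) ∈ f ⁻¹' {k0} := h6
    obtain ⟨p, hlen, hint⟩ := hf k0 _ hx1 _ hx2 hne ⟨p0⟩
    rw [subK_dist_eq_four hd p0 rfl] at hlen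
    obtain ⟨w1, w2, w3, hA1, hA2, hA3, hA4, hsupp⟩ := subK_mid_of_walk4 p hlen
    -- w1 and w3 are original vertices
    rcases w1 with x | g1
    swap
    · exact absurd hA1 subK_not_adj_rr
    rcases w3 with y | g3
    swap
    · exact absurd hA4 subK_not_adj_rr
    rcases w2 with z | g
    · exact absurd hA2 subK_not_adj_ll
    have hxab : x = a ∨ x = b := (mem_mkE_iff hab).mp (subK_adj_rl.mp hA1)
    have hyde : y = d ∨ y = e := (mem_mkE_iff hde).mp (subK_adj_lr.mp hA4)
    have hxg : x = g.1.1 ∨ x = g.1.2 := subK_adj_lr.mp hA2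
    have hyg : y = g.1.1 ∨ y = g.1.2 := subK_adj_rl.mp hA3
    have hxy : x ≠ y := by
      rcases hxab with rfl | rfl <;> rcases hyde with rfl | rfl <;> simp_all
    have hgeq : g = mkE x y hxy := eq_mkE hxy hxg hyg
    -- g is a crossing edge, so it is in the fiber
    have hgk : f (Sum.inr g) = k0 := by
      rw [hgeq]
      rcases hxab with rfl | rfl <;> rcases hyde with rfl | rfl
      · rw [show mkE x y hxy = mkE x y had from rfl]; exact h2
      · rw [show mkE x y hxy = mkE x y hae from rfl]; exact h3
      · rw [show mkE x y hxy = mkE x y hbd from rfl]; exact h4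
      · rw [show mkE x y hxy = mkE x y hbe from rfl]; exact h5
    -- but g is an internal vertex of a geodesic avoiding the fiber
    have hg1 : (Sum.inr g : SubKVert n) ≠ Sum.inr (mkE a b hab) := by
      intro h
      injection h with h'
      exact hd y (h' ▸ hyg) ((mem_mkE_iff hde).mpr hyde)
    have hg2 : (Sum.inr g : SubKVert n) ≠ Sum.inr (mkE d e hde) := by
      intro h
      injection h with h'
      refine hd x ((mem_mkE_iff hab).mpr hxab) (h' ▸ hxg)
    exact hint _ hsupp hg1 hg2 hgk


theorem stmt2 (n : ℕ) (hn : 0 < n) :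
    rho n ≤ mvChrom (subK n) ∧ mvChrom (subK n) ≤ imvChrom (subK n) ∧
      imvChrom (subK n) ≤ rho n + 1 := by
  have hrho_ne : {r | ∃ c : Fin n → Fin n → Fin r, IsK4FreeColoring c}.Nonempty := by
    obtain ⟨r, c, hc⟩ := rho_set_nonempty' n
    exact ⟨r, c, hc⟩
  have hrho_mem : rho n ∈ {r | ∃ c : Fin n → Fin n → Fin r, IsK4FreeColoring c} :=
    Nat.sInf_mem hrho_ne
  obtain ⟨c, hc⟩ := hrho_mem
  obtain ⟨f, hf⟩ := fiber_imv c hc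
  have h_imv_mem : (rho n + 1) ∈
      {k | ∃ f : SubKVert n → Fin k, ∀ i, IsIMVSet (subK n) (f ⁻¹' {i})} := ⟨f, hf⟩
  have h3 : imvChrom (subK n) ≤ rho n + 1 := Nat.sInf_le h_imv_mem
  have himv_mem : imvChrom (subK n) ∈
      {k | ∃ f : SubKVert n → Fin k, ∀ i, IsIMVSet (subK n) (f ⁻¹' {i})} :=
    Nat.sInf_mem ⟨_, h_imv_mem⟩
  obtain ⟨g, hg⟩ := himv_mem
  have h_mv_mem : imvChrom (subK n) ∈
      {k | ∃ f : SubKVert n → Fin k, ∀ i, IsMVSet (subK n) (f ⁻¹' {i})} :=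
    ⟨g, fun i => (hg i).2⟩
  have h2 : mvChrom (subK n) ≤ imvChrom (subK n) := Nat.sInf_le h_mv_mem
  have hmv_mem : mvChrom (subK n) ∈
      {k | ∃ f : SubKVert n → Fin k, ∀ i, IsMVSet (subK n) (f ⁻¹' {i})} :=
    Nat.sInf_mem ⟨_, h_mv_mem⟩
  obtain ⟨g2, hg2⟩ := hmv_mem
  have h1 : rho n ≤ mvChrom (subK n) := Nat.sInf_le (mv_to_coloring g2 hg2)
  exact ⟨h1, h2, h3⟩
end

section
/- If G is a graph with diameter at most 3, then every independent set in G is a mutual-visibility set, and consequently μ_i(G) = α(G). -/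
open SimpleGraph

variable {V W : Type*}

theorem stmt6 [Fintype V] (G : SimpleGraph V) (hconn : G.Connected)
    (hdiam : ∀ u v : V, G.dist u v ≤ 3) :
    (∀ X : Set V, (∀ x ∈ X, ∀ y ∈ X, ¬ G.Adj x y) → IsMVSet G X) ∧
      imvNum G = _root_.indepNum G := by
  have key : ∀ X : Set V, (∀ x ∈ X, ∀ y ∈ X, ¬ G.Adj x y) → IsMVSet G X := by
    intro X hX x hx y hy hxy hr
    obtain ⟨p, hp⟩ := hr.exists_walk_length_eq_dist
    refine ⟨p, hp, ?_⟩
    have hlen : p.length ≤ 3 := hp ▸ hdiam x y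
    intro z hz hzx hzy hzX
    cases p with
    | nil => simp at hz; exact hzx hz
    | cons h1 q =>
      simp only [Walk.support_cons, List.mem_cons] at hz
      rcases hz with rfl | hz
      · exact hzx rfl
      cases q with
      | nil => simp at hz; exact hzy hz
      | cons h2 r =>
        simp only [Walk.support_cons, List.mem_cons] at hz
        rcases hz with rfl | hz
        · exact hX x hx z hzX h1
        cases r with
        | nil => simp at hz; exact hzy hz
        | cons h3 s =>
          simp only [Walk.length_cons] at hlen
          have hs : s.length = 0 := by omega
          cases s with
          | nil =>
            simp only [Walk.support_cons, Walk.support_nil, List.mem_cons,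
              List.mem_singleton, List.not_mem_nil, or_false] at hz
            rcases hz with rfl | rfl
            · exact hX z hzX y hy h3
            · exact hzy rfl
          | cons h4 t => simp at hs
  refine ⟨key, ?_⟩
  unfold imvNum _root_.indepNum
  congr 1
  ext n
  constructor
  · rintro ⟨s, ⟨hind, _⟩, hc⟩; exact ⟨s, hind, hc⟩
  · rintro ⟨s, hind, hc⟩; exact ⟨s, ⟨hind, key _ hind⟩, hc⟩
end

section
/- If G is a connected triangle-free graph of order n ≥ 2, then χ_{μ_i}(G) ≤ ⌈(n − μ_i(G))/2⌉ + 1. -/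
open SimpleGraph

variable {V W : Type*}

section Helpers

variable {G : SimpleGraph V}

lemma tri_free (htf : G.CliqueFree 3) {a b c : V}
    (hab : G.Adj a b) (hbc : G.Adj b c) (hac : G.Adj a c) : False := by
  classical
  exact htf {a, b, c} (SimpleGraph.is3Clique_triple_iff.2 ⟨hab, hac, hbc⟩)

lemma IsIMVSet.mono {X Y : Set V} (h : IsIMVSet G X) (hYX : Y ⊆ X) : IsIMVSet G Y := by
  refine ⟨fun x hx y hy => h.1 x (hYX hx) y (hYX hy), fun x hx y hy hxy hr => ?_⟩
  obtain ⟨p, hp, hint⟩ := h.2 x (hYX hx) y (hYX hy) hxy hr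
  exact ⟨p, hp, fun z hz h1 h2 hzY => hint z hz h1 h2 (hYX hzY)⟩

lemma pair_IMV (hconn : G.Connected) {x y : V} (hxy : ¬ G.Adj x y) :
    IsIMVSet G {x, y} := by
  constructor
  · intro a ha b hb hadj
    rcases ha with rfl | ha
    · rcases hb with rfl | hb
      · exact G.irrefl hadj
      · rw [Set.mem_singleton_iff] at hb; subst hb; exact hxy hadj
    · rw [Set.mem_singleton_iff] at ha; subst ha
      rcases hb with rfl | hb
      · exact hxy hadj.symm
      · rw [Set.mem_singleton_iff] at hb; subst hb; exact G.irrefl hadj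
  · intro a ha b hb hab hr
    obtain ⟨p, hp⟩ := hr.exists_walk_length_eq_dist
    refine ⟨p, hp, fun z _ h1 h2 hz => ?_⟩
    rcases ha with rfl | ha
    · rcases hb with rfl | hb
      · exact hab rfl
      · rw [Set.mem_singleton_iff] at hb; subst hb
        rcases hz with rfl | hz
        · exact h1 rfl
        · rw [Set.mem_singleton_iff] at hz; exact h2 hz
    · rw [Set.mem_singleton_iff] at ha; subst ha
      rcases hb with rfl | hb
      · rcases hz with rfl | hz
        · exact h2 rfl
        · rw [Set.mem_singleton_iff] at hz; exact h1 hz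
      · rw [Set.mem_singleton_iff] at hb; subst hb; exact hab rfl

lemma single_IMV (hconn : G.Connected) (x : V) : IsIMVSet G {x} := by
  have := pair_IMV hconn (G.loopless.irrefl x)
  simpa using this

lemma geodesic_two (hconn : G.Connected) {x y w : V} (hxy : x ≠ y)
    (hnadj : ¬ G.Adj x y) (h1 : G.Adj x w) (h2 : G.Adj w y) :
    ∃ p : G.Walk x y, p.length = G.dist x y ∧ ∀ z ∈ p.support, z = x ∨ z = y ∨ z = w := by
  have hd2 : G.dist x y ≤ 2 := by
    have := SimpleGraph.dist_le (Walk.cons h1 (Walk.cons h2 Walk.nil)); simpa using this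
  have hd0 : G.dist x y ≠ 0 := fun h => hxy (hconn.dist_eq_zero_iff.mp h)
  have hd1 : G.dist x y ≠ 1 := fun h => hnadj (SimpleGraph.dist_eq_one_iff_adj.1 h)
  refine ⟨Walk.cons h1 (Walk.cons h2 Walk.nil), by simp; omega, ?_⟩
  intro z hz
  simp [Walk.support_cons] at hz
  tauto

lemma walk_two {x y : V} (p : G.Walk x y) (h : p.length = 2) :
    ∃ w, G.Adj x w ∧ G.Adj w y := by
  match p with
  | .nil => simp at h
  | .cons h1 q =>
    match q with
    | .nil => simp at h
    | .cons h2 r =>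
      match r with
      | .nil => exact ⟨_, h1, h2⟩
      | .cons h3 s => simp [SimpleGraph.Walk.length_cons] at h

lemma walk_three {x y : V} (p : G.Walk x y) (h : p.length = 3) :
    ∃ a b, G.Adj x a ∧ G.Adj a b ∧ G.Adj b y := by
  match p with
  | .nil => simp at h
  | .cons h1 q =>
    match q with
    | .nil => simp at h
    | .cons h2 r =>
      match r with
      | .nil => simp at h
      | .cons h3 s =>
        match s with
        | .nil => exact ⟨_, _, h1, h2, h3⟩
        | .cons h4 t => simp [SimpleGraph.Walk.length_cons] at h

lemma geodesic_four (hconn : G.Connected) {x y a b c : V} (hxy : x ≠ y)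
    (hnadj : ¬ G.Adj x y)
    (hno2 : ∀ w, G.Adj x w → G.Adj w y → False)
    (hno3 : ∀ w₁ w₂, G.Adj x w₁ → G.Adj w₁ w₂ → G.Adj w₂ y → False)
    (h1 : G.Adj x a) (h2 : G.Adj a b) (h3 : G.Adj b c) (h4 : G.Adj c y) :
    ∃ p : G.Walk x y, p.length = G.dist x y ∧
      ∀ z ∈ p.support, z = x ∨ z = y ∨ z = a ∨ z = b ∨ z = c := by
  have hle : G.dist x y ≤ 4 := by
    have := SimpleGraph.dist_le (Walk.cons h1 (Walk.cons h2 (Walk.cons h3 (Walk.cons h4 Walk.nil))))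
    simpa using this
  have hd0 : G.dist x y ≠ 0 := fun h => hxy (hconn.dist_eq_zero_iff.mp h)
  have hd1 : G.dist x y ≠ 1 := fun h => hnadj (SimpleGraph.dist_eq_one_iff_adj.1 h)
  have hd2 : G.dist x y ≠ 2 := by
    intro h
    obtain ⟨p, hp⟩ := (hconn x y).exists_walk_length_eq_dist
    obtain ⟨w, hw1, hw2⟩ := walk_two p (by omega)
    exact hno2 w hw1 hw2
  have hd3 : G.dist x y ≠ 3 := by
    intro h
    obtain ⟨p, hp⟩ := (hconn x y).exists_walk_length_eq_dist
    obtain ⟨w₁, w₂, hw1, hw2, hw3⟩ := walk_three p (by omega)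
    exact hno3 w₁ w₂ hw1 hw2 hw3
  refine ⟨Walk.cons h1 (Walk.cons h2 (Walk.cons h3 (Walk.cons h4 Walk.nil))), by simp; omega, ?_⟩
  intro z hz
  simp [Walk.support_cons] at hz
  tauto

lemma nbhd_IMV (hconn : G.Connected) (htf : G.CliqueFree 3) (w : V) :
    IsIMVSet G (G.neighborSet w) := by
  constructor
  · intro x hx y hy hadj
    rw [SimpleGraph.mem_neighborSet] at hx hy
    exact tri_free htf hx hadj hy
  · intro x hx y hy hxy hr
    rw [SimpleGraph.mem_neighborSet] at hx hy
    have hnadj : ¬ G.Adj x y := fun h => tri_free htf hx h hy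
    obtain ⟨p, hp, hsup⟩ := geodesic_two hconn hxy hnadj (G.adj_symm hx) hy
    refine ⟨p, hp, fun z hz h1 h2 hzN => ?_⟩
    rcases hsup z hz with rfl | rfl | rfl
    · exact h1 rfl
    · exact h2 rfl
    · rw [SimpleGraph.mem_neighborSet] at hzN; exact G.irrefl hzN

lemma exists_adj [Fintype V] (hconn : G.Connected) (hn : 2 ≤ Fintype.card V) (x : V) :
    ∃ w, G.Adj x w := by
  have : Nontrivial V := Fintype.one_lt_card_iff_nontrivial.mp (by omega)
  obtain ⟨y, hy⟩ := exists_ne x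
  obtain ⟨p⟩ := hconn x y
  cases p with
  | nil => exact absurd rfl hy.symm
  | cons h q => exact ⟨_, h⟩

end Helpers

section Lists

variable {G : SimpleGraph V} [DecidableEq V]

/-- A list of "parts", each contained in a non-adjacent (or equal) pair,
covering `S`. -/
def GoodList (G : SimpleGraph V) (S : Finset V) (L : List (Finset V)) : Prop :=
  (∀ v ∈ S, ∃ s ∈ L, v ∈ s) ∧ ∀ s ∈ L, ∃ x y, ¬ G.Adj x y ∧ s ⊆ {x, y}

lemma pairUp :
    ∀ n (S : Finset V), S.card = n → Even n → (∀ x ∈ S, ∀ y ∈ S, ¬ G.Adj x y) →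
    ∃ L : List (Finset V), GoodList G S L ∧ L.length = n / 2 := by
  intro n
  induction n using Nat.strong_induction_on with
  | _ n ih =>
    intro S hcard heven hind
    rcases Nat.eq_zero_or_pos n with rfl | hpos
    · have hS : S = ∅ := Finset.card_eq_zero.mp hcard
      subst hS
      exact ⟨[], ⟨by simp, by simp⟩, rfl⟩
    · have h2 : 2 ≤ n := by
        obtain ⟨k, hk⟩ := heven; omega
      have hSne : S.Nonempty := Finset.card_pos.mp (by omega)
      obtain ⟨x, hx⟩ := hSne
      have hex : (S.erase x).Nonempty := by
        apply Finset.card_pos.mp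
        rw [Finset.card_erase_of_mem hx]; omega
      obtain ⟨y, hy⟩ := hex
      have hyx : y ≠ x := (Finset.mem_erase.mp hy).1
      have hyS : y ∈ S := (Finset.mem_erase.mp hy).2
      have hcard2 : ((S.erase x).erase y).card = n - 2 := by
        rw [Finset.card_erase_of_mem hy, Finset.card_erase_of_mem hx, hcard]; omega
      obtain ⟨k, hk⟩ := heven
      obtain ⟨L, ⟨hcov, hmem⟩, hlen⟩ := ih (n - 2) (by omega) _ hcard2 ⟨k - 1, by omega⟩
        (fun a ha b hb => hind a (Finset.mem_of_mem_erase (Finset.mem_of_mem_erase ha))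
          b (Finset.mem_of_mem_erase (Finset.mem_of_mem_erase hb)))
      refine ⟨({x, y} : Finset V) :: L, ⟨?_, ?_⟩, ?_⟩
      · intro v hv
        by_cases hvx : v = x
        · exact ⟨{x, y}, List.mem_cons_self, by simp [hvx]⟩
        · by_cases hvy : v = y
          · exact ⟨{x, y}, List.mem_cons_self, by simp [hvy]⟩
          · obtain ⟨s, hs, hvs⟩ := hcov v (by simp [Finset.mem_erase, hvx, hvy, hv])
            exact ⟨s, List.mem_cons_of_mem _ hs, hvs⟩
      · intro s hs
        rcases List.mem_cons.mp hs with rfl | hs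
        · exact ⟨x, y, hind x hx y hyS, le_refl _⟩
        · exact hmem s hs
      · simp [hlen]; omega

lemma oddPairUp {n : ℕ} {S : Finset V} (hcard : S.card = n) (hodd : Odd n)
    (hind : ∀ x ∈ S, ∀ y ∈ S, ¬ G.Adj x y) :
    ∃ L : List (Finset V), GoodList G S L ∧ L.length = n / 2 + 1 := by
  have hpos : 0 < n := hodd.pos
  obtain ⟨t, ht⟩ := Finset.card_pos.mp (hcard ▸ hpos)
  have hcard' : (S.erase t).card = n - 1 := by rw [Finset.card_erase_of_mem ht, hcard]
  obtain ⟨k, hk⟩ := hodd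
  obtain ⟨L, ⟨hcov, hmem⟩, hlen⟩ := pairUp (n - 1) (S.erase t) hcard' ⟨k, by omega⟩
    (fun a ha b hb => hind a (Finset.mem_of_mem_erase ha) b (Finset.mem_of_mem_erase hb))
  refine ⟨({t} : Finset V) :: L, ⟨?_, ?_⟩, ?_⟩
  · intro v hv
    by_cases hvt : v = t
    · exact ⟨{t}, List.mem_cons_self, by simp [hvt]⟩
    · obtain ⟨s, hs, hvs⟩ := hcov v (Finset.mem_erase.mpr ⟨hvt, hv⟩)
      exact ⟨s, List.mem_cons_of_mem _ hs, hvs⟩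
  · intro s hs
    rcases List.mem_cons.mp hs with rfl | hs
    · exact ⟨t, t, G.loopless.irrefl t, by simp⟩
    · exact hmem s hs
  · simp [hlen]; omega

end Lists

section Dich

variable {G : SimpleGraph V} [DecidableEq V]

def BadPair (G : SimpleGraph V) (S A B : Finset V) : Prop :=
  A ∪ B = S ∧ Disjoint A B ∧ A.Nonempty ∧ B.Nonempty ∧ Odd A.card ∧ Odd B.card ∧
    (∀ a ∈ A, ∀ b ∈ B, G.Adj a b) ∧ (∀ x ∈ A, ∀ y ∈ A, ¬ G.Adj x y) ∧
    (∀ x ∈ B, ∀ y ∈ B, ¬ G.Adj x y)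

lemma BadPair.symm {S A B : Finset V} (h : BadPair G S A B) : BadPair G S B A := by
  obtain ⟨hun, hdisj, hA, hB, hoA, hoB, hcross, hiA, hiB⟩ := h
  exact ⟨by rw [Finset.union_comm]; exact hun, hdisj.symm, hB, hA, hoB, hoA,
    fun b hb a ha => (hcross a ha b hb).symm, hiB, hiA⟩

lemma rightInsert (htf : G.CliqueFree 3) {S A B : Finset V} {p q : V}
    (hp : p ∈ S) (hq : q ∈ S) (hpq : p ≠ q) (hnadj : ¬ G.Adj p q)
    (hbp : BadPair G ((S.erase p).erase q) A B)
    (hpa : ∀ α ∈ A, G.Adj p α) (hqa : ∀ α ∈ A, G.Adj q α) :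
    BadPair G S A (insert p (insert q B)) := by
  obtain ⟨hun, hdisj, hA, hB, hoA, hoB, hcross, hiA, hiB⟩ := hbp
  have hpS' : p ∉ (S.erase p).erase q := fun h =>
    (Finset.mem_erase.mp (Finset.mem_of_mem_erase h)).1 rfl
  have hqS' : q ∉ (S.erase p).erase q := fun h => (Finset.mem_erase.mp h).1 rfl
  have hpA : p ∉ A := fun h => hpS' (hun ▸ Finset.mem_union_left _ h)
  have hqA : q ∉ A := fun h => hqS' (hun ▸ Finset.mem_union_left _ h)
  have hpB : p ∉ B := fun h => hpS' (hun ▸ Finset.mem_union_right _ h)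
  have hqB : q ∉ B := fun h => hqS' (hun ▸ Finset.mem_union_right _ h)
  obtain ⟨a₀, ha₀⟩ := hA
  -- p and q are adjacent to nothing in B (else triangle via a₀)
  have hpnB : ∀ β ∈ B, ¬ G.Adj p β :=
    fun β hβ h => tri_free htf (hpa a₀ ha₀) (hcross a₀ ha₀ β hβ) h
  have hqnB : ∀ β ∈ B, ¬ G.Adj q β :=
    fun β hβ h => tri_free htf (hqa a₀ ha₀) (hcross a₀ ha₀ β hβ) h
  refine ⟨?_, ?_, ⟨a₀, ha₀⟩, ⟨p, Finset.mem_insert_self _ _⟩, hoA, ?_, ?_, hiA, ?_⟩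
  · rw [Finset.union_comm, Finset.insert_union, Finset.insert_union, Finset.union_comm, hun,
      Finset.insert_erase, Finset.insert_erase hp]
    exact Finset.mem_erase.mpr ⟨hpq.symm, hq⟩
  · rw [Finset.disjoint_insert_right, Finset.disjoint_insert_right]
    exact ⟨hpA, hqA, hdisj⟩
  · rw [Finset.card_insert_of_notMem (by simp [hpq, hpB]),
      Finset.card_insert_of_notMem hqB]
    obtain ⟨k, hk⟩ := hoB
    exact ⟨k + 1, by omega⟩
  · intro a ha b hb
    rcases Finset.mem_insert.mp hb with rfl | hb
    · exact (hpa a ha).symm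
    rcases Finset.mem_insert.mp hb with rfl | hb
    · exact (hqa a ha).symm
    · exact hcross a ha b hb
  · intro x hx y hy hadj
    have hnB : ∀ z, z ∈ insert p (insert q B) → z = p ∨ z = q ∨ z ∈ B := by
      intro z hz
      rcases Finset.mem_insert.mp hz with rfl | hz
      · exact Or.inl rfl
      rcases Finset.mem_insert.mp hz with rfl | hz
      · exact Or.inr (Or.inl rfl)
      · exact Or.inr (Or.inr hz)
    rcases hnB x hx with rfl | rfl | hxB
    · rcases hnB y hy with rfl | rfl | hyB
      · exact G.loopless.irrefl _ hadj
      · exact hnadj hadj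
      · exact hpnB y hyB hadj
    · rcases hnB y hy with rfl | rfl | hyB
      · exact hnadj hadj.symm
      · exact G.loopless.irrefl _ hadj
      · exact hqnB y hyB hadj
    · rcases hnB y hy with rfl | rfl | hyB
      · exact hpnB x hxB hadj.symm
      · exact hqnB x hxB hadj.symm
      · exact hiB x hxB y hyB hadj

lemma leftPairs {S A B : Finset V} {p q α β : V}
    (hp : p ∈ S) (hq : q ∈ S) (hpq : p ≠ q) (hnpq : ¬ G.Adj p q)
    (hun : A ∪ B = (S.erase p).erase q) (hdisj : Disjoint A B)
    (hiA : ∀ x ∈ A, ∀ y ∈ A, ¬ G.Adj x y) (hiB : ∀ x ∈ B, ∀ y ∈ B, ¬ G.Adj x y)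
    (hoA : Odd A.card) (hoB : Odd B.card)
    (hα : α ∈ A) (hβ : β ∈ B) (h1 : ¬ G.Adj p α) (h2 : ¬ G.Adj q β) :
    ∃ L, GoodList G S L ∧ L.length = S.card / 2 := by
  have hpq' : q ∈ S.erase p := Finset.mem_erase.mpr ⟨hpq.symm, hq⟩
  have hcardS : S.card = A.card + B.card + 2 := by
    have h1 : ((S.erase p).erase q).card = S.card - 2 := by
      rw [Finset.card_erase_of_mem hpq', Finset.card_erase_of_mem hp]; omega
    have h2 : (A ∪ B).card = A.card + B.card := Finset.card_union_of_disjoint hdisj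
    have h3 : 2 ≤ S.card := by
      have : ({p, q} : Finset V) ⊆ S := by
        intro v hv; rcases Finset.mem_insert.mp hv with rfl | hv
        · exact hp
        · rw [Finset.mem_singleton] at hv; subst hv; exact hq
      calc 2 = ({p, q} : Finset V).card := by rw [Finset.card_pair hpq]
        _ ≤ S.card := Finset.card_le_card this
    rw [hun] at h2; omega
  obtain ⟨kA, hkA⟩ := hoA
  obtain ⟨kB, hkB⟩ := hoB
  obtain ⟨LA, ⟨hcovA, hmemA⟩, hlenA⟩ := pairUp (G := G) (A.card - 1) (A.erase α)
    (by rw [Finset.card_erase_of_mem hα]) ⟨kA, by omega⟩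
    (fun a ha b hb => hiA a (Finset.mem_of_mem_erase ha) b (Finset.mem_of_mem_erase hb))
  obtain ⟨LB, ⟨hcovB, hmemB⟩, hlenB⟩ := pairUp (G := G) (B.card - 1) (B.erase β)
    (by rw [Finset.card_erase_of_mem hβ]) ⟨kB, by omega⟩
    (fun a ha b hb => hiB a (Finset.mem_of_mem_erase ha) b (Finset.mem_of_mem_erase hb))
  refine ⟨({p, α} : Finset V) :: ({q, β} : Finset V) :: (LA ++ LB), ⟨?_, ?_⟩, ?_⟩
  · intro v hv
    by_cases hvp : v = p
    · exact ⟨{p, α}, by simp, by simp [hvp]⟩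
    by_cases hvq : v = q
    · exact ⟨{q, β}, by simp, by simp [hvq]⟩
    have hv' : v ∈ A ∪ B := by
      rw [hun]; exact Finset.mem_erase.mpr ⟨hvq, Finset.mem_erase.mpr ⟨hvp, hv⟩⟩
    rcases Finset.mem_union.mp hv' with hvA | hvB
    · by_cases hvα : v = α
      · exact ⟨{p, α}, by simp, by simp [hvα]⟩
      · obtain ⟨s, hs, hvs⟩ := hcovA v (Finset.mem_erase.mpr ⟨hvα, hvA⟩)
        exact ⟨s, by simp [hs], hvs⟩
    · by_cases hvβ : v = β
      · exact ⟨{q, β}, by simp, by simp [hvβ]⟩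
      · obtain ⟨s, hs, hvs⟩ := hcovB v (Finset.mem_erase.mpr ⟨hvβ, hvB⟩)
        exact ⟨s, by simp [hs], hvs⟩
  · intro s hs
    rcases List.mem_cons.mp hs with rfl | hs
    · exact ⟨p, α, h1, le_refl _⟩
    rcases List.mem_cons.mp hs with rfl | hs
    · exact ⟨q, β, h2, le_refl _⟩
    rcases List.mem_append.mp hs with hs | hs
    · exact hmemA s hs
    · exact hmemB s hs
  · simp [hlenA, hlenB, hcardS]; omega

lemma evenDich (htf : G.CliqueFree 3) :
    ∀ n (S : Finset V), S.card = n → Even n →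
    (∃ L, GoodList G S L ∧ L.length = n / 2) ∨ (∃ A B, BadPair G S A B) := by
  intro n
  induction n using Nat.strong_induction_on with
  | _ n ih =>
    intro S hcard heven
    rcases Nat.eq_zero_or_pos n with rfl | hpos
    · have hS : S = ∅ := Finset.card_eq_zero.mp hcard
      subst hS
      exact Or.inl ⟨[], ⟨by simp, by simp⟩, rfl⟩
    have h2 : 2 ≤ n := by obtain ⟨k, hk⟩ := heven; omega
    by_cases hclique : ∀ x ∈ S, ∀ y ∈ S, x ≠ y → G.Adj x y
    · -- S is a clique, so by triangle-freeness it has exactly 2 elements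
      obtain ⟨x, hx⟩ := Finset.card_pos.mp (by omega : 0 < S.card)
      obtain ⟨y, hy⟩ := Finset.card_pos.mp
        (by rw [Finset.card_erase_of_mem hx]; omega : 0 < (S.erase x).card)
      have hyx : y ≠ x := (Finset.mem_erase.mp hy).1
      have hyS : y ∈ S := (Finset.mem_erase.mp hy).2
      have hn2 : n = 2 := by
        by_contra hne
        have h3 : 3 ≤ n := by omega
        obtain ⟨z, hz⟩ := Finset.card_pos.mp
          (by rw [Finset.card_erase_of_mem hy, Finset.card_erase_of_mem hx]; omega :
            0 < ((S.erase x).erase y).card)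
        have hzy : z ≠ y := (Finset.mem_erase.mp hz).1
        have hzx : z ≠ x := (Finset.mem_erase.mp (Finset.mem_of_mem_erase hz)).1
        have hzS : z ∈ S := Finset.mem_of_mem_erase (Finset.mem_of_mem_erase hz)
        exact tri_free htf (hclique x hx y hyS hyx.symm) (hclique y hyS z hzS hzy.symm)
          (hclique x hx z hzS hzx.symm)
      have hSxy : S = {x, y} := by
        apply (Finset.eq_of_subset_of_card_le ?_ ?_).symm
        · intro v hv
          rcases Finset.mem_insert.mp hv with rfl | hv
          · exact hx
          · rw [Finset.mem_singleton] at hv; subst hv; exact hyS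
        · rw [hcard, hn2, Finset.card_pair hyx.symm]
      refine Or.inr ⟨{x}, {y}, ?_, ?_, ⟨x, by simp⟩, ⟨y, by simp⟩, ⟨0, rfl⟩, ⟨0, rfl⟩, ?_, ?_, ?_⟩
      · rw [hSxy]; ext v; simp
      · simp [hyx, hyx.symm]
      · intro a ha b hb
        rw [Finset.mem_singleton.mp ha, Finset.mem_singleton.mp hb]
        exact hclique x hx y hyS hyx.symm
      · intro a ha b hb
        rw [Finset.mem_singleton.mp ha, Finset.mem_singleton.mp hb]
        exact G.loopless.irrefl _
      · intro a ha b hb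
        rw [Finset.mem_singleton.mp ha, Finset.mem_singleton.mp hb]
        exact G.loopless.irrefl _
    · push_neg at hclique
      obtain ⟨p, hp, q, hq, hpq, hnadj⟩ := hclique
      have hq' : q ∈ S.erase p := Finset.mem_erase.mpr ⟨hpq.symm, hq⟩
      have hcard' : ((S.erase p).erase q).card = n - 2 := by
        rw [Finset.card_erase_of_mem hq', Finset.card_erase_of_mem hp, hcard]; omega
      obtain ⟨k, hk⟩ := heven
      rcases ih (n - 2) (by omega) _ hcard' ⟨k - 1, by omega⟩ with ⟨L, ⟨hcov, hmem⟩, hlen⟩ | ⟨A, B, hbp⟩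
      · -- extend the pairing
        refine Or.inl ⟨({p, q} : Finset V) :: L, ⟨?_, ?_⟩, ?_⟩
        · intro v hv
          by_cases hvp : v = p
          · exact ⟨{p, q}, by simp, by simp [hvp]⟩
          by_cases hvq : v = q
          · exact ⟨{p, q}, by simp, by simp [hvq]⟩
          obtain ⟨s, hs, hvs⟩ := hcov v (Finset.mem_erase.mpr ⟨hvq, Finset.mem_erase.mpr ⟨hvp, hv⟩⟩)
          exact ⟨s, List.mem_cons_of_mem _ hs, hvs⟩
        · intro s hs
          rcases List.mem_cons.mp hs with rfl | hs
          · exact ⟨p, q, hnadj, le_refl _⟩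
          · exact hmem s hs
        · simp [hlen]; omega
      · obtain ⟨hun, hdisj, hA, hB, hoA, hoB, hcross, hiA, hiB⟩ := hbp
        obtain ⟨a₀, ha₀⟩ := hA
        obtain ⟨b₀, hb₀⟩ := hB
        by_cases hpa : ∀ α ∈ A, G.Adj p α
        · by_cases hqa : ∀ α ∈ A, G.Adj q α
          · exact Or.inr ⟨A, insert p (insert q B),
              rightInsert htf hp hq hpq hnadj
                ⟨hun, hdisj, ⟨a₀, ha₀⟩, ⟨b₀, hb₀⟩, hoA, hoB, hcross, hiA, hiB⟩ hpa hqa⟩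
          · push_neg at hqa
            obtain ⟨α, hα, hqα⟩ := hqa
            by_cases hpb : ∀ β ∈ B, G.Adj p β
            · exact absurd (hpb b₀ hb₀)
                (fun h => tri_free htf (hpa a₀ ha₀) (hcross a₀ ha₀ b₀ hb₀) h)
            · push_neg at hpb
              obtain ⟨β, hβ, hpβ⟩ := hpb
              refine Or.inl ?_
              obtain ⟨L', hL', hlen'⟩ := leftPairs (G := G) hq hp hpq.symm
                (fun h => hnadj h.symm) (hun.trans (by ext v; simp [Finset.mem_erase]; tauto)) hdisj hiA hiB
                hoA hoB hα hβ hqα hpβ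
              exact ⟨L', hL', by rw [hlen', hcard]⟩
        · push_neg at hpa
          obtain ⟨α, hα, hpα⟩ := hpa
          by_cases hqb : ∀ β ∈ B, G.Adj q β
          · by_cases hpb : ∀ β ∈ B, G.Adj p β
            · exact Or.inr ⟨B, insert p (insert q A),
                (rightInsert htf hp hq hpq hnadj
                  (BadPair.symm ⟨hun, hdisj, ⟨a₀, ha₀⟩, ⟨b₀, hb₀⟩, hoA, hoB, hcross, hiA, hiB⟩)
                  hpb hqb)⟩
            · push_neg at hpb
              obtain ⟨β, hβ, hpβ⟩ := hpb
              by_cases hqa : ∀ α' ∈ A, G.Adj q α'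
              · exact absurd (hqa a₀ ha₀)
                  (fun h => tri_free htf h (hcross a₀ ha₀ b₀ hb₀) (hqb b₀ hb₀))
              · push_neg at hqa
                obtain ⟨α', hα', hqα'⟩ := hqa
                refine Or.inl ?_
                obtain ⟨L', hL', hlen'⟩ := leftPairs (G := G) hq hp hpq.symm
                  (fun h => hnadj h.symm) (hun.trans (by ext v; simp [Finset.mem_erase]; tauto)) hdisj hiA hiB
                  hoA hoB hα' hβ hqα' hpβ
                exact ⟨L', hL', by rw [hlen', hcard]⟩
          · push_neg at hqb
            obtain ⟨β, hβ, hqβ⟩ := hqb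
            refine Or.inl ?_
            obtain ⟨L', hL', hlen'⟩ := leftPairs (G := G) hp hq hpq hnadj hun hdisj hiA hiB
              hoA hoB hα hβ hpα hqβ
            exact ⟨L', hL', by rw [hlen', hcard]⟩

end Dich

section Cover

variable {G : SimpleGraph V} [DecidableEq V]

lemma oddSide (htf : G.CliqueFree 3) {S A B : Finset V} {w α : V} (hw : w ∈ S)
    (hbp : BadPair G (S.erase w) A B) (hα : α ∈ A) (hwα : ¬ G.Adj w α) :
    ∃ L, GoodList G S L ∧ L.length = S.card / 2 + 1 := by
  obtain ⟨hun, hdisj, hA, hB, hoA, hoB, hcross, hiA, hiB⟩ := hbp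
  have hcardS : S.card = A.card + B.card + 1 := by
    have h2 : (A ∪ B).card = A.card + B.card := Finset.card_union_of_disjoint hdisj
    rw [hun, Finset.card_erase_of_mem hw] at h2
    have : 1 ≤ S.card := Finset.card_pos.mpr ⟨w, hw⟩
    omega
  obtain ⟨kA, hkA⟩ := hoA
  obtain ⟨kB, hkB⟩ := hoB
  obtain ⟨LA, ⟨hcovA, hmemA⟩, hlenA⟩ := pairUp (G := G) (A.card - 1) (A.erase α)
    (by rw [Finset.card_erase_of_mem hα]) ⟨kA, by omega⟩
    (fun a ha b hb => hiA a (Finset.mem_of_mem_erase ha) b (Finset.mem_of_mem_erase hb))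
  obtain ⟨LB, ⟨hcovB, hmemB⟩, hlenB⟩ := oddPairUp (G := G) rfl ⟨kB, hkB⟩ hiB
  refine ⟨({w, α} : Finset V) :: (LA ++ LB), ⟨?_, ?_⟩, ?_⟩
  · intro v hv
    by_cases hvw : v = w
    · exact ⟨{w, α}, by simp, by simp [hvw]⟩
    have hv' : v ∈ A ∪ B := by
      rw [hun]; exact Finset.mem_erase.mpr ⟨hvw, hv⟩
    rcases Finset.mem_union.mp hv' with hvA | hvB
    · by_cases hvα : v = α
      · exact ⟨{w, α}, by simp, by simp [hvα]⟩
      · obtain ⟨s, hs, hvs⟩ := hcovA v (Finset.mem_erase.mpr ⟨hvα, hvA⟩)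
        exact ⟨s, by simp [hs], hvs⟩
    · obtain ⟨s, hs, hvs⟩ := hcovB v hvB
      exact ⟨s, by simp [hs], hvs⟩
  · intro s hs
    rcases List.mem_cons.mp hs with rfl | hs
    · exact ⟨w, α, hwα, le_refl _⟩
    rcases List.mem_append.mp hs with hs | hs
    · exact hmemA s hs
    · exact hmemB s hs
  · simp [hlenA, hlenB, hcardS]; omega

lemma oddCover (htf : G.CliqueFree 3) {S : Finset V} (hodd : Odd S.card) :
    ∃ L, GoodList G S L ∧ L.length = S.card / 2 + 1 := by
  obtain ⟨w, hw⟩ := Finset.card_pos.mp hodd.pos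
  have hcard' : (S.erase w).card = S.card - 1 := Finset.card_erase_of_mem hw
  obtain ⟨k, hk⟩ := hodd
  rcases evenDich htf (S.card - 1) (S.erase w) hcard' ⟨k, by omega⟩ with
    ⟨L, ⟨hcov, hmem⟩, hlen⟩ | ⟨A, B, hbp⟩
  · refine ⟨({w} : Finset V) :: L, ⟨?_, ?_⟩, ?_⟩
    · intro v hv
      by_cases hvw : v = w
      · exact ⟨{w}, by simp, by simp [hvw]⟩
      · obtain ⟨s, hs, hvs⟩ := hcov v (Finset.mem_erase.mpr ⟨hvw, hv⟩)
        exact ⟨s, by simp [hs], hvs⟩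
    · intro s hs
      rcases List.mem_cons.mp hs with rfl | hs
      · exact ⟨w, w, G.loopless.irrefl w, by simp⟩
      · exact hmem s hs
    · simp [hlen]; omega
  · by_cases hwa : ∃ α ∈ A, ¬ G.Adj w α
    · obtain ⟨α, hα, hwα⟩ := hwa
      exact oddSide htf hw hbp hα hwα
    · push_neg at hwa
      obtain ⟨a₀, ha₀⟩ := hbp.2.2.1
      obtain ⟨b₀, hb₀⟩ := hbp.2.2.2.1
      have hwb : ¬ G.Adj w b₀ :=
        fun h => tri_free htf (hwa a₀ ha₀) (hbp.2.2.2.2.2.2.1 a₀ ha₀ b₀ hb₀) h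
      exact oddSide htf hw hbp.symm hb₀ hwb

lemma GoodList.imv (hconn : G.Connected) {S : Finset V} {L : List (Finset V)}
    (h : GoodList G S L) : ∀ s ∈ L, IsIMVSet G ↑s := by
  intro s hs
  obtain ⟨x, y, hxy, hsub⟩ := h.2 s hs
  refine (pair_IMV hconn hxy).mono ?_
  intro v hv
  have hv' : v ∈ s := hv
  have := hsub hv'
  rcases Finset.mem_insert.mp this with rfl | h'
  · exact Set.mem_insert _ _
  · rw [Finset.mem_singleton] at h'
    subst h'
    exact Set.mem_insert_of_mem _ rfl

lemma cover_bound [Fintype V] (L : List (Finset V))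
    (hcov : ∀ v : V, ∃ s ∈ L, v ∈ s) (himv : ∀ s ∈ L, IsIMVSet G ↑s) :
    imvChrom G ≤ L.length := by
  apply Nat.sInf_le
  have hex : ∀ v : V, L.findIdx (fun s => decide (v ∈ s)) < L.length := by
    intro v
    apply List.findIdx_lt_length_of_exists
    obtain ⟨s, hs, hvs⟩ := hcov v
    exact ⟨s, hs, by simpa⟩
  refine ⟨fun v => ⟨L.findIdx (fun s => decide (v ∈ s)), hex v⟩, ?_⟩
  intro i
  have hsub : (fun v => (⟨L.findIdx (fun s => decide (v ∈ s)), hex v⟩ : Fin L.length)) ⁻¹' {i} ⊆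
      ↑(L.get i) := by
    intro v hv
    simp only [Set.mem_preimage, Set.mem_singleton_iff] at hv
    obtain ⟨iv, hlt⟩ := i
    have hidx : L.findIdx (fun s => decide (v ∈ s)) = iv := by
      have := congrArg Fin.val hv
      simpa using this
    subst hidx
    have hp := List.findIdx_getElem (p := fun s => decide (v ∈ s)) (xs := L) (w := hex v)
    simp only [decide_eq_true_eq] at hp
    simpa [List.get_eq_getElem] using hp
  exact (himv _ (List.get_mem L i)).mono hsub

end Cover

section Parts

variable {G : SimpleGraph V} [DecidableEq V]

lemma part_IMV (hconn : G.Connected) {C D XC : Finset V} {z₀ : V} (hz₀ : z₀ ∈ D)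
    (hiC : ∀ x ∈ C, ∀ y ∈ C, ¬ G.Adj x y)
    (hcross : ∀ c ∈ C, ∀ d ∈ D, G.Adj c d)
    (hXCex : ∀ x ∈ XC, ∃ c ∈ C, G.Adj x c)
    (hXCnb : ∀ x ∈ XC, ∀ w, G.Adj x w → w ∈ C)
    (hXCind : ∀ x ∈ XC, ∀ y ∈ XC, ¬ G.Adj x y)
    (hCXC : ∀ c ∈ C, c ∉ XC) (hDXC : ∀ d ∈ D, d ∉ XC) :
    IsIMVSet G ↑XC := by
  constructor
  · intro x hx y hy
    exact hXCind x (Finset.mem_coe.mp hx) y (Finset.mem_coe.mp hy)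
  · intro x hx y hy hne hr
    rw [Finset.mem_coe] at hx hy
    have hnadj : ¬ G.Adj x y := hXCind x hx y hy
    by_cases hcom : ∃ w, G.Adj x w ∧ G.Adj w y
    · obtain ⟨w, h1, h2⟩ := hcom
      have hwC : w ∈ C := hXCnb x hx w h1
      obtain ⟨p, hp, hsup⟩ := geodesic_two hconn hne hnadj h1 h2
      refine ⟨p, hp, fun z hz hzx hzy hzXC => ?_⟩
      rcases hsup z hz with rfl | rfl | rfl
      · exact hzx rfl
      · exact hzy rfl
      · exact hCXC z hwC (Finset.mem_coe.mp hzXC)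
    · push_neg at hcom
      obtain ⟨c, hc, hxc⟩ := hXCex x hx
      obtain ⟨c', hc', hyc'⟩ := hXCex y hy
      have hno3 : ∀ w₁ w₂, G.Adj x w₁ → G.Adj w₁ w₂ → G.Adj w₂ y → False := by
        intro w₁ w₂ e1 e2 e3
        exact hiC w₁ (hXCnb x hx w₁ e1) w₂ (hXCnb y hy w₂ e3.symm) e2
      obtain ⟨p, hp, hsup⟩ := geodesic_four hconn hne hnadj (fun w a b => hcom w a b)
        hno3 hxc (hcross c hc z₀ hz₀) ((hcross c' hc' z₀ hz₀).symm) hyc'.symm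
      refine ⟨p, hp, fun z hz hzx hzy hzXC => ?_⟩
      rcases hsup z hz with rfl | rfl | rfl | rfl | rfl
      · exact hzx rfl
      · exact hzy rfl
      · exact hCXC z hc (Finset.mem_coe.mp hzXC)
      · exact hDXC z hz₀ (Finset.mem_coe.mp hzXC)
      · exact hCXC z hc' (Finset.mem_coe.mp hzXC)

lemma partQ_IMV (hconn : G.Connected) {C D XC : Finset V} {d₀ z₀ : V}
    (hd₀ : d₀ ∈ D) (hz₀ : z₀ ∈ D) (hz₀d : z₀ ≠ d₀)
    (hiC : ∀ x ∈ C, ∀ y ∈ C, ¬ G.Adj x y)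
    (hcross : ∀ c ∈ C, ∀ d ∈ D, G.Adj c d)
    (hXCex : ∀ x ∈ XC, ∃ c ∈ C, G.Adj x c)
    (hXCnb : ∀ x ∈ XC, ∀ w, G.Adj x w → w ∈ C)
    (hXCind : ∀ x ∈ XC, ∀ y ∈ XC, ¬ G.Adj x y)
    (hCXC : ∀ c ∈ C, c ∉ XC) (hDXC : ∀ d ∈ D, d ∉ XC) (hCD : ∀ c ∈ C, c ∉ D) :
    IsIMVSet G ↑(insert d₀ XC) := by
  have hnd : ∀ x ∈ XC, ¬ G.Adj d₀ x := fun x hx h => hCD _ (hXCnb x hx d₀ h.symm) hd₀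
  have hmemP : ∀ {c}, c ∈ C → c ∉ (↑(insert d₀ XC) : Set V) := by
    intro c hc hcP
    rw [Finset.mem_coe, Finset.mem_insert] at hcP
    rcases hcP with rfl | hcP
    · exact hCD _ hc hd₀
    · exact hCXC c hc hcP
  constructor
  · intro x hx y hy
    rw [Finset.mem_coe, Finset.mem_insert] at hx hy
    rcases hx with rfl | hx
    · rcases hy with rfl | hy
      · exact G.loopless.irrefl _
      · exact hnd y hy
    · rcases hy with rfl | hy
      · exact fun h => hnd x hx h.symm
      · exact hXCind x hx y hy
  · intro x hx y hy hne hr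
    rw [Finset.mem_coe, Finset.mem_insert] at hx hy
    rcases hx with rfl | hx
    · rcases hy with rfl | hy
      · exact absurd rfl hne
      · obtain ⟨c, hc, hyc⟩ := hXCex y hy
        obtain ⟨p, hp, hsup⟩ := geodesic_two hconn hne (fun h => hnd y hy h)
          ((hcross c hc x hd₀).symm) hyc.symm
        refine ⟨p, hp, fun z hz hzx hzy hzP => ?_⟩
        rcases hsup z hz with rfl | rfl | rfl
        · exact hzx rfl
        · exact hzy rfl
        · exact hmemP hc hzP
    · rcases hy with rfl | hy
      · obtain ⟨c, hc, hxc⟩ := hXCex x hx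
        obtain ⟨p, hp, hsup⟩ := geodesic_two hconn hne (fun h => hnd x hx h.symm)
          hxc (hcross c hc y hd₀)
        refine ⟨p, hp, fun z hz hzx hzy hzP => ?_⟩
        rcases hsup z hz with rfl | rfl | rfl
        · exact hzx rfl
        · exact hzy rfl
        · exact hmemP hc hzP
      · have hnadj : ¬ G.Adj x y := hXCind x hx y hy
        by_cases hcom : ∃ w, G.Adj x w ∧ G.Adj w y
        · obtain ⟨w, h1, h2⟩ := hcom
          have hwC : w ∈ C := hXCnb x hx w h1
          obtain ⟨p, hp, hsup⟩ := geodesic_two hconn hne hnadj h1 h2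
          refine ⟨p, hp, fun z hz hzx hzy hzP => ?_⟩
          rcases hsup z hz with rfl | rfl | rfl
          · exact hzx rfl
          · exact hzy rfl
          · exact hmemP hwC hzP
        · push_neg at hcom
          obtain ⟨c, hc, hxc⟩ := hXCex x hx
          obtain ⟨c', hc', hyc'⟩ := hXCex y hy
          have hno3 : ∀ w₁ w₂, G.Adj x w₁ → G.Adj w₁ w₂ → G.Adj w₂ y → False := by
            intro w₁ w₂ e1 e2 e3
            exact hiC w₁ (hXCnb x hx w₁ e1) w₂ (hXCnb y hy w₂ e3.symm) e2
          obtain ⟨p, hp, hsup⟩ := geodesic_four hconn hne hnadj (fun w a b => hcom w a b)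
            hno3 hxc (hcross c hc z₀ hz₀) ((hcross c' hc' z₀ hz₀).symm) hyc'.symm
          refine ⟨p, hp, fun z hz hzx hzy hzP => ?_⟩
          rcases hsup z hz with rfl | rfl | rfl | rfl | rfl
          · exact hzx rfl
          · exact hzy rfl
          · exact hmemP hc hzP
          · rw [Finset.mem_coe, Finset.mem_insert] at hzP
            rcases hzP with h' | h'
            · exact hz₀d h'
            · exact hDXC z hz₀ h'
          · exact hmemP hc' hzP

end Parts

section Main

variable {G : SimpleGraph V} [DecidableEq V]

lemma badCase [Fintype V] (hconn : G.Connected) (htf : G.CliqueFree 3)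
    (hn : 2 ≤ Fintype.card V) {X A B : Finset V}
    (hX : IsIMVSet G ↑X) (hbp : BadPair G Xᶜ A B) (hle : A.card ≤ B.card) :
    imvChrom G ≤ (A.card + B.card) / 2 + 1 := by
  classical
  obtain ⟨hun, hdisj, hA, hB, hoA, hoB, hcross, hiA, hiB⟩ := hbp
  have hXind : ∀ x ∈ X, ∀ y ∈ X, ¬ G.Adj x y := fun x hx y hy =>
    hX.1 x (Finset.mem_coe.mpr hx) y (Finset.mem_coe.mpr hy)
  have hABX : ∀ v, v ∈ A ∪ B → v ∉ X := by
    intro v hv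
    rw [hun] at hv
    exact Finset.mem_compl.mp hv
  have hAX : ∀ a ∈ A, a ∉ X := fun a ha => hABX a (Finset.mem_union_left _ ha)
  have hBX : ∀ b ∈ B, b ∉ X := fun b hb => hABX b (Finset.mem_union_right _ hb)
  have hADB : ∀ a ∈ A, a ∉ B := fun a ha hb => (Finset.disjoint_left.mp hdisj ha) hb
  set XA := X.filter (fun x => ∃ a ∈ A, G.Adj x a) with hXAdef
  set XB := X.filter (fun x => ∃ b ∈ B, G.Adj x b) with hXBdef
  have hXAmem : ∀ x ∈ XA, x ∈ X ∧ ∃ a ∈ A, G.Adj x a := fun x hx => Finset.mem_filter.mp hx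
  have hXBmem : ∀ x ∈ XB, x ∈ X ∧ ∃ b ∈ B, G.Adj x b := fun x hx => Finset.mem_filter.mp hx
  have hXAnb : ∀ x ∈ XA, ∀ w, G.Adj x w → w ∈ A := by
    intro x hx w hadj
    obtain ⟨hxX, a, ha, hxa⟩ := hXAmem x hx
    have hwX : w ∉ X := fun hwX => hXind x hxX w hwX hadj
    have hw : w ∈ A ∪ B := by rw [hun]; exact Finset.mem_compl.mpr hwX
    rcases Finset.mem_union.mp hw with hwA | hwB
    · exact hwA
    · exact absurd hadj (fun h => tri_free htf hxa (hcross a ha w hwB) h)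
  have hXBnb : ∀ x ∈ XB, ∀ w, G.Adj x w → w ∈ B := by
    intro x hx w hadj
    obtain ⟨hxX, b, hb, hxb⟩ := hXBmem x hx
    have hwX : w ∉ X := fun hwX => hXind x hxX w hwX hadj
    have hw : w ∈ A ∪ B := by rw [hun]; exact Finset.mem_compl.mpr hwX
    rcases Finset.mem_union.mp hw with hwA | hwB
    · exact absurd hadj (fun h => tri_free htf hxb (hcross w hwA b hb).symm h)
    · exact hwB
  have hsplit : ∀ x ∈ X, x ∈ XA ∨ x ∈ XB := by
    intro x hx
    obtain ⟨w, hw⟩ := exists_adj hconn hn x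
    have hwX : w ∉ X := fun hwX => hXind x hx w hwX hw
    have hw' : w ∈ A ∪ B := by rw [hun]; exact Finset.mem_compl.mpr hwX
    rcases Finset.mem_union.mp hw' with hwA | hwB
    · exact Or.inl (Finset.mem_filter.mpr ⟨hx, w, hwA, hw⟩)
    · exact Or.inr (Finset.mem_filter.mpr ⟨hx, w, hwB, hw⟩)
  have hXAX : ∀ x ∈ XA, x ∈ X := fun x hx => (hXAmem x hx).1
  have hXBX : ∀ x ∈ XB, x ∈ X := fun x hx => (hXBmem x hx).1
  have hAXA : ∀ a ∈ A, a ∉ XA := fun a ha hx => hAX a ha (hXAX a hx)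
  have hBXA : ∀ b ∈ B, b ∉ XA := fun b hb hx => hBX b hb (hXAX b hx)
  have hAXB : ∀ a ∈ A, a ∉ XB := fun a ha hx => hAX a ha (hXBX a hx)
  have hBXB : ∀ b ∈ B, b ∉ XB := fun b hb hx => hBX b hb (hXBX b hx)
  have hXAind : ∀ x ∈ XA, ∀ y ∈ XA, ¬ G.Adj x y :=
    fun x hx y hy => hXind x (hXAX x hx) y (hXAX y hy)
  have hXBind : ∀ x ∈ XB, ∀ y ∈ XB, ¬ G.Adj x y :=
    fun x hx y hy => hXind x (hXBX x hx) y (hXBX y hy)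
  by_cases hA1 : A.card = 1
  · obtain ⟨a₀, hAeq⟩ := Finset.card_eq_one.mp hA1
    have ha₀ : a₀ ∈ A := by rw [hAeq]; exact Finset.mem_singleton_self a₀
    have hAonly : ∀ a ∈ A, a = a₀ := by
      intro a ha
      rw [hAeq] at ha
      exact Finset.mem_singleton.mp ha
    have hP1 : IsIMVSet G ↑(B ∪ XA) := by
      refine (nbhd_IMV hconn htf a₀).mono ?_
      intro v hv
      rw [Finset.mem_coe, Finset.mem_union] at hv
      rw [SimpleGraph.mem_neighborSet]
      rcases hv with hv | hv
      · exact hcross a₀ ha₀ v hv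
      · obtain ⟨hvX, a, ha, hva⟩ := hXAmem v hv
        rw [hAonly a ha] at hva
        exact hva.symm
    by_cases hB1 : B.card = 1
    · obtain ⟨b₀, hBeq⟩ := Finset.card_eq_one.mp hB1
      have hb₀ : b₀ ∈ B := by rw [hBeq]; exact Finset.mem_singleton_self b₀
      have hP2 : IsIMVSet G ↑(A ∪ XB) := by
        refine (nbhd_IMV hconn htf b₀).mono ?_
        intro v hv
        rw [Finset.mem_coe, Finset.mem_union] at hv
        rw [SimpleGraph.mem_neighborSet]
        rcases hv with hv | hv
        · exact (hcross v hv b₀ hb₀).symm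
        · obtain ⟨hvX, b, hb, hvb⟩ := hXBmem v hv
          have hbeq : b = b₀ := by
            rw [hBeq] at hb
            exact Finset.mem_singleton.mp hb
          rw [hbeq] at hvb
          exact hvb.symm
      have hcov : ∀ v : V, ∃ s ∈ [B ∪ XA, A ∪ XB], v ∈ s := by
        intro v
        by_cases hv : v ∈ X
        · rcases hsplit v hv with h | h
          · exact ⟨B ∪ XA, by simp, Finset.mem_union_right _ h⟩
          · exact ⟨A ∪ XB, by simp, Finset.mem_union_right _ h⟩
        · have : v ∈ A ∪ B := by rw [hun]; exact Finset.mem_compl.mpr hv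
          rcases Finset.mem_union.mp this with h | h
          · exact ⟨A ∪ XB, by simp, Finset.mem_union_left _ h⟩
          · exact ⟨B ∪ XA, by simp, Finset.mem_union_left _ h⟩
      have himv : ∀ s ∈ [B ∪ XA, A ∪ XB], IsIMVSet G ↑s := by
        intro s hs
        rcases List.mem_cons.mp hs with rfl | hs
        · exact hP1
        rcases List.mem_cons.mp hs with rfl | hs
        · exact hP2
        · simp at hs
      have hbound := cover_bound (G := G) [B ∪ XA, A ∪ XB] hcov himv
      simp only [List.length_cons, List.length_nil] at hbound
      refine le_trans hbound ?_
      omega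
    · -- A.card = 1, B.card ≥ 3
      have hXBimv : IsIMVSet G ↑XB :=
        part_IMV hconn (C := B) (D := A) ha₀ hiB
          (fun b hb a ha => (hcross a ha b hb).symm)
          (fun x hx => (hXBmem x hx).2) hXBnb hXBind hBXB hAXB
      have hcov : ∀ v : V, ∃ s ∈ [B ∪ XA, XB, ({a₀} : Finset V)], v ∈ s := by
        intro v
        by_cases hv : v ∈ X
        · rcases hsplit v hv with h | h
          · exact ⟨B ∪ XA, by simp, Finset.mem_union_right _ h⟩
          · exact ⟨XB, by simp, h⟩
        · have : v ∈ A ∪ B := by rw [hun]; exact Finset.mem_compl.mpr hv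
          rcases Finset.mem_union.mp this with h | h
          · exact ⟨({a₀} : Finset V), by simp, by simp [hAonly v h]⟩
          · exact ⟨B ∪ XA, by simp, Finset.mem_union_left _ h⟩
      have himv : ∀ s ∈ [B ∪ XA, XB, ({a₀} : Finset V)], IsIMVSet G ↑s := by
        intro s hs
        rcases List.mem_cons.mp hs with rfl | hs
        · exact hP1
        rcases List.mem_cons.mp hs with rfl | hs
        · exact hXBimv
        rcases List.mem_cons.mp hs with rfl | hs
        · have := single_IMV hconn a₀
          simpa using this
        · simp at hs
      have hbound := cover_bound (G := G) [B ∪ XA, XB, ({a₀} : Finset V)] hcov himv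
      simp only [List.length_cons, List.length_nil] at hbound
      refine le_trans hbound ?_
      obtain ⟨k, hk⟩ := hoB
      omega
  · -- both sides have at least 2 (indeed ≥ 3) vertices
    have hA2 : 2 ≤ A.card := by
      obtain ⟨k, hk⟩ := hoA
      omega
    have hB2 : 2 ≤ B.card := le_trans hA2 hle
    obtain ⟨a₀, ha₀⟩ := hA
    obtain ⟨b₀, hb₀⟩ := hB
    obtain ⟨a₁, ha₁, ha₁0⟩ := Finset.exists_mem_ne (s := A) (by omega) a₀
    obtain ⟨b₁, hb₁, hb₁0⟩ := Finset.exists_mem_ne (s := B) (by omega) b₀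
    have hQA : IsIMVSet G ↑(insert b₀ XA) :=
      partQ_IMV hconn (C := A) (D := B) hb₀ hb₁ hb₁0 hiA hcross
        (fun x hx => (hXAmem x hx).2) hXAnb hXAind hAXA hBXA hADB
    have hQB : IsIMVSet G ↑(insert a₀ XB) :=
      partQ_IMV hconn (C := B) (D := A) ha₀ ha₁ ha₁0 hiB
        (fun b hb a ha => (hcross a ha b hb).symm)
        (fun x hx => (hXBmem x hx).2) hXBnb hXBind hBXB hAXB
        (fun b hb ha => hADB _ ha hb)
    obtain ⟨kA, hkA⟩ := hoA
    obtain ⟨kB, hkB⟩ := hoB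
    obtain ⟨LA, ⟨hcovA, hmemA⟩, hlenA⟩ := pairUp (G := G) (A.card - 1) (A.erase a₀)
      (by rw [Finset.card_erase_of_mem ha₀]) ⟨kA, by omega⟩
      (fun a ha b hb => hiA a (Finset.mem_of_mem_erase ha) b (Finset.mem_of_mem_erase hb))
    obtain ⟨LB, ⟨hcovB, hmemB⟩, hlenB⟩ := pairUp (G := G) (B.card - 1) (B.erase b₀)
      (by rw [Finset.card_erase_of_mem hb₀]) ⟨kB, by omega⟩
      (fun a ha b hb => hiB a (Finset.mem_of_mem_erase ha) b (Finset.mem_of_mem_erase hb))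
    have hcov : ∀ v : V, ∃ s ∈ ((insert b₀ XA) :: (insert a₀ XB) :: (LA ++ LB)), v ∈ s := by
      intro v
      by_cases hv : v ∈ X
      · rcases hsplit v hv with h | h
        · exact ⟨insert b₀ XA, by simp, Finset.mem_insert_of_mem h⟩
        · exact ⟨insert a₀ XB, by simp, Finset.mem_insert_of_mem h⟩
      · have : v ∈ A ∪ B := by rw [hun]; exact Finset.mem_compl.mpr hv
        rcases Finset.mem_union.mp this with h | h
        · by_cases hva : v = a₀
          · exact ⟨insert a₀ XB, by simp, by simp [hva]⟩
          · obtain ⟨s, hs, hvs⟩ := hcovA v (Finset.mem_erase.mpr ⟨hva, h⟩)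
            exact ⟨s, by simp [hs], hvs⟩
        · by_cases hvb : v = b₀
          · exact ⟨insert b₀ XA, by simp, by simp [hvb]⟩
          · obtain ⟨s, hs, hvs⟩ := hcovB v (Finset.mem_erase.mpr ⟨hvb, h⟩)
            exact ⟨s, by simp [hs], hvs⟩
    have himv : ∀ s ∈ ((insert b₀ XA) :: (insert a₀ XB) :: (LA ++ LB)), IsIMVSet G ↑s := by
      intro s hs
      rcases List.mem_cons.mp hs with rfl | hs
      · exact hQA
      rcases List.mem_cons.mp hs with rfl | hs
      · exact hQB
      rcases List.mem_append.mp hs with hs | hs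
      · exact GoodList.imv hconn ⟨hcovA, hmemA⟩ s hs
      · exact GoodList.imv hconn ⟨hcovB, hmemB⟩ s hs
    have hbound := cover_bound (G := G) ((insert b₀ XA) :: (insert a₀ XB) :: (LA ++ LB)) hcov himv
    simp only [List.length_cons, List.length_append, hlenA, hlenB] at hbound
    refine le_trans hbound ?_
    omega

end Main

theorem stmt7 [Fintype V] (G : SimpleGraph V) (hconn : G.Connected)
    (htf : G.CliqueFree 3) (hn : 2 ≤ Fintype.card V) :
    imvChrom G ≤ (Fintype.card V - imvNum G + 1) / 2 + 1 := by
  classical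
  have hne : {n | ∃ s : Finset V, IsIMVSet G ↑s ∧ s.card = n}.Nonempty :=
    ⟨0, (∅ : Finset V), ⟨by simp, fun x hx => by simp at hx⟩, rfl⟩
  have hbdd : BddAbove {n | ∃ s : Finset V, IsIMVSet G ↑s ∧ s.card = n} := by
    refine ⟨Fintype.card V, ?_⟩
    rintro k ⟨s, _, rfl⟩
    exact Finset.card_le_univ s
  have hmem : imvNum G ∈ {n | ∃ s : Finset V, IsIMVSet G ↑s ∧ s.card = n} :=
    Nat.sSup_mem hne hbdd
  obtain ⟨X, hX, hXcard⟩ := hmem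
  have hScard : Xᶜ.card = Fintype.card V - imvNum G := by
    rw [Finset.card_compl, hXcard]
  rcases Nat.even_or_odd Xᶜ.card with he | ho
  · rcases evenDich (G := G) htf Xᶜ.card Xᶜ rfl he with ⟨L, hGL, hlen⟩ | ⟨A, B, hbp⟩
    · have hcov : ∀ v : V, ∃ s ∈ (X :: L), v ∈ s := by
        intro v
        by_cases hv : v ∈ X
        · exact ⟨X, by simp, hv⟩
        · obtain ⟨s, hs, hvs⟩ := hGL.1 v (Finset.mem_compl.mpr hv)
          exact ⟨s, by simp [hs], hvs⟩
      have himv : ∀ s ∈ (X :: L), IsIMVSet G ↑s := by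
        intro s hs
        rcases List.mem_cons.mp hs with rfl | hs
        · exact hX
        · exact GoodList.imv hconn hGL s hs
      have hbound := cover_bound (G := G) (X :: L) hcov himv
      simp only [List.length_cons, hlen] at hbound
      refine le_trans hbound ?_
      obtain ⟨k, hk⟩ := he
      omega
    · have hABcard : A.card + B.card = Xᶜ.card := by
        rw [← Finset.card_union_of_disjoint hbp.2.1, hbp.1]
      rcases le_total A.card B.card with h | h
      · refine le_trans (badCase hconn htf hn hX hbp h) ?_
        obtain ⟨k, hk⟩ := he
        omega
      · refine le_trans (badCase hconn htf hn hX hbp.symm h) ?_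
        obtain ⟨k, hk⟩ := he
        omega
  · obtain ⟨L, hGL, hlen⟩ := oddCover (G := G) htf ho
    have hcov : ∀ v : V, ∃ s ∈ (X :: L), v ∈ s := by
      intro v
      by_cases hv : v ∈ X
      · exact ⟨X, by simp, hv⟩
      · obtain ⟨s, hs, hvs⟩ := hGL.1 v (Finset.mem_compl.mpr hv)
        exact ⟨s, by simp [hs], hvs⟩
    have himv : ∀ s ∈ (X :: L), IsIMVSet G ↑s := by
      intro s hs
      rcases List.mem_cons.mp hs with rfl | hs
      · exact hX
      · exact GoodList.imv hconn hGL s hs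
    have hbound := cover_bound (G := G) (X :: L) hcov himv
    simp only [List.length_cons, hlen] at hbound
    refine le_trans hbound ?_
    obtain ⟨k, hk⟩ := ho
    omega
end

section
/- In a triangle-free graph G without isolated vertices, the open neighborhood of any vertex is an independent mutual-visibility set; hence μ_i(G) ≥ Δ(G). -/
open SimpleGraph

variable {V W : Type*}

theorem stmt8 [Fintype V] (G : SimpleGraph V) [DecidableRel G.Adj]
    (htf : G.CliqueFree 3) (hiso : ∀ v : V, ∃ w, G.Adj v w) :
    (∀ v : V, IsIMVSet G (G.neighborSet v)) ∧ G.maxDegree ≤ imvNum G := by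
  classical
  have hmain : ∀ v : V, IsIMVSet G (G.neighborSet v) := by
    intro v
    have hindep : ∀ x ∈ G.neighborSet v, ∀ y ∈ G.neighborSet v, ¬ G.Adj x y := by
      intro x hx y hy hxy
      exact htf {v, x, y} (is3Clique_triple_iff.2 ⟨hx, hy, hxy⟩)
    refine ⟨hindep, ?_⟩
    intro x hx y hy hxy _
    have hnadj : ¬ G.Adj x y := hindep x hx y hy
    have hvx : G.Adj v x := hx
    have hvy : G.Adj v y := hy
    let p : G.Walk x y := Walk.cons hvx.symm (Walk.cons hvy Walk.nil)
    have hlen : p.length = 2 := rfl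
    have hd2 : G.dist x y = 2 := by
      have hle : G.dist x y ≤ 2 := hlen ▸ SimpleGraph.dist_le p
      have h0 : G.dist x y ≠ 0 := by
        intro h
        exact hxy ((SimpleGraph.dist_eq_zero_iff_eq_or_not_reachable.1 h).resolve_right
          (fun h' => h' ⟨p⟩))
      have h1 : G.dist x y ≠ 1 := fun h => hnadj (dist_eq_one_iff_adj.1 h)
      omega
    refine ⟨p, by rw [hd2]; exact hlen, ?_⟩
    intro z hz hzx hzy
    have : z = x ∨ z = v ∨ z = y := by
      simpa [p, Walk.support] using hz
    have hzv : z = v := by tauto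
    subst hzv
    exact fun h => G.loopless.irrefl z h
  refine ⟨hmain, ?_⟩
  by_cases hne : Nonempty V
  · obtain ⟨v, hv⟩ := G.exists_maximal_degree_vertex
    rw [hv, ← G.card_neighborFinset_eq_degree v]
    apply le_csSup
    · exact ⟨Fintype.card V, fun n ⟨s, _, hc⟩ => hc ▸ s.card_le_univ⟩
    · refine ⟨G.neighborFinset v, ?_, rfl⟩
      have : (G.neighborFinset v : Set V) = G.neighborSet v := by
        ext z; simp
      rw [this]; exact hmain v
  · simp only [not_nonempty_iff] at hne
    have : G.maxDegree = 0 := by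
      unfold SimpleGraph.maxDegree
      simp [Finset.univ_eq_empty]
    omega
end

section
/- If G is a connected triangle-free graph of order n, then χ_{μ_i}(G) ≤ ⌈(n − Δ(G))/2⌉ + 1. -/
open SimpleGraph

variable {V W : Type*}

lemma imv_small (G : SimpleGraph V) (X : Set V)
    (hind : ∀ x ∈ X, ∀ y ∈ X, ¬ G.Adj x y)
    (hcard : ∀ x ∈ X, ∀ y ∈ X, ∀ z ∈ X, x = y ∨ x = z ∨ y = z) :
    IsIMVSet G X := by
  refine ⟨hind, fun x hx y hy hxy hr => ?_⟩
  obtain ⟨p, hp⟩ := hr.exists_walk_length_eq_dist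
  refine ⟨p, hp, fun z _ hzx hzy hz => ?_⟩
  rcases hcard z hz x hx y hy with h | h | h
  exacts [hzx h, hzy h, hxy h]

lemma imv_nbhd (G : SimpleGraph V) (htf : G.CliqueFree 3) (v : V) (X : Set V)
    (hX : X ⊆ G.neighborSet v) :
    IsIMVSet G X := by
  classical
  have hind : ∀ x ∈ X, ∀ y ∈ X, ¬ G.Adj x y := by
    intro x hx y hy hadj
    exact htf {v, x, y} (SimpleGraph.is3Clique_triple_iff.2 ⟨hX hx, hX hy, hadj⟩)
  refine ⟨hind, fun x hx y hy hxy _ => ?_⟩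
  have hxv : G.Adj x v := (hX hx).symm
  have hvy : G.Adj v y := hX hy
  let p : G.Walk x y := Walk.cons hxv (Walk.cons hvy Walk.nil)
  have hplen : p.length = 2 := rfl
  have hd2 : G.dist x y = 2 := by
    have hle : G.dist x y ≤ 2 := hplen ▸ SimpleGraph.dist_le p
    have h0 : G.dist x y ≠ 0 := by
      intro h
      rw [SimpleGraph.dist_eq_zero_iff_eq_or_not_reachable] at h
      rcases h with h | h
      exacts [hxy h, h p.reachable]
    have h1 : G.dist x y ≠ 1 := fun h =>
      hind x hx y hy (SimpleGraph.dist_eq_one_iff_adj.1 h)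
    omega
  refine ⟨p, by rw [hplen, hd2], fun z hz hzx hzy hzX => ?_⟩
  have : z = x ∨ z = v ∨ z = y := by
    simpa [p, Walk.support_cons] using hz
  rcases this with h | h | h
  exacts [hzx h, G.irrefl (h ▸ hX hzX), hzy h]

lemma pairup [DecidableEq V] (G : SimpleGraph V) [DecidableRel G.Adj]
    (htf : G.CliqueFree 3) :
    ∀ (n : ℕ) (R : Finset V), R.card = n → ∀ v, v ∉ R → (∀ u ∈ R, ¬ G.Adj v u) →
    ∃ L : List (Finset V),
      (∀ P ∈ L, P.card ≤ 2 ∧ ∀ x ∈ P, ∀ y ∈ P, ¬ G.Adj x y) ∧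
      (∀ x ∈ insert v R, ∃ P ∈ L, x ∈ P) ∧
      L.length ≤ (R.card + 2) / 2 := by
  intro n
  induction n using Nat.strong_induction_on with
  | _ n ih =>
  intro R hR v hv hadj
  by_cases hpair : ∃ u ∈ R, ∃ w ∈ R, u ≠ w ∧ ¬ G.Adj u w
  · obtain ⟨u, hu, w, hw, huw, hnadj⟩ := hpair
    have huwsub : ({u, w} : Finset V) ⊆ R := by
      intro x hx; simp only [Finset.mem_insert, Finset.mem_singleton] at hx
      rcases hx with rfl | rfl <;> assumption
    have huwcard : ({u, w} : Finset V).card = 2 := Finset.card_pair huw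
    have h2n : 2 ≤ n := hR ▸ huwcard ▸ Finset.card_le_card huwsub
    set R' := R \ {u, w} with hR'
    have hcard' : R'.card = n - 2 := by
      rw [hR', Finset.card_sdiff_of_subset huwsub, huwcard, hR]
    obtain ⟨L, hL1, hL2, hL3⟩ := ih (n - 2) (by omega) R' hcard' v
      (fun h => hv (Finset.mem_sdiff.1 h).1)
      (fun u hu => hadj u (Finset.mem_sdiff.1 hu).1)
    refine ⟨{u, w} :: L, ?_, ?_, ?_⟩
    · intro P hP
      rcases List.mem_cons.1 hP with rfl | hP
      · refine ⟨le_of_eq huwcard, ?_⟩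
        intro x hx y hy hadjxy
        simp only [Finset.mem_insert, Finset.mem_singleton] at hx hy
        rcases hx with rfl | rfl <;> rcases hy with rfl | rfl
        · exact G.irrefl hadjxy
        · exact hnadj hadjxy
        · exact hnadj hadjxy.symm
        · exact G.irrefl hadjxy
      · exact hL1 P hP
    · intro x hx
      by_cases hxm : x ∈ ({u, w} : Finset V)
      · exact ⟨{u, w}, List.mem_cons_self, hxm⟩
      · have : x ∈ insert v R' := by
          rcases Finset.mem_insert.1 hx with rfl | hx
          · exact Finset.mem_insert_self _ _
          · exact Finset.mem_insert_of_mem (Finset.mem_sdiff.2 ⟨hx, hxm⟩)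
        obtain ⟨P, hP, hxP⟩ := hL2 x this
        exact ⟨P, List.mem_cons_of_mem _ hP, hxP⟩
    · simp only [List.length_cons]
      rw [hcard'] at hL3
      rw [hR]
      omega
  · push_neg at hpair
    have hclique : ∀ u ∈ R, ∀ w ∈ R, u ≠ w → G.Adj u w := hpair
    have hcard2 : R.card ≤ 2 := by
      by_contra hc
      push_neg at hc
      obtain ⟨s, hs, hscard⟩ := Finset.exists_subset_card_eq (show 3 ≤ R.card by omega)
      refine htf s ⟨?_, hscard⟩
      intro x hx y hy hxy
      exact hclique x (hs hx) y (hs hy) hxy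
    interval_cases h : R.card
    · have hRe : R = ∅ := Finset.card_eq_zero.1 h
      refine ⟨[{v}], ?_, ?_, by simp⟩
      · intro P hP
        simp only [List.mem_singleton] at hP
        subst hP
        refine ⟨by simp, ?_⟩
        intro x hx y hy
        simp only [Finset.mem_singleton] at hx hy
        subst hx; subst hy; exact G.irrefl
      · intro x hx
        rw [hRe] at hx
        rcases Finset.mem_insert.1 hx with rfl | hx
        · exact ⟨{x}, List.mem_singleton_self _, by simp⟩
        · exact absurd hx (Finset.notMem_empty _)
    · obtain ⟨u, hu⟩ := Finset.card_eq_one.1 h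
      refine ⟨[{v, u}], ?_, ?_, by simp⟩
      · intro P hP
        simp only [List.mem_singleton] at hP
        subst hP
        have hvu : ¬ G.Adj v u := hadj u (by simp [hu])
        refine ⟨Finset.card_insert_le _ _ |>.trans (by simp), ?_⟩
        intro x hx y hy
        simp only [Finset.mem_insert, Finset.mem_singleton] at hx hy
        rcases hx with rfl | rfl <;> rcases hy with rfl | rfl
        · exact G.irrefl
        · exact hvu
        · exact fun hh => hvu hh.symm
        · exact G.irrefl
      · intro x hx
        rw [hu] at hx
        refine ⟨{v, u}, List.mem_singleton_self _, ?_⟩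
        simpa using hx
    · obtain ⟨u, w, huw, hR2⟩ := Finset.card_eq_two.1 h
      have hvu : ¬ G.Adj v u := hadj u (by simp [hR2])
      refine ⟨[{v, u}, {w}], ?_, ?_, by simp⟩
      · intro P hP
        simp only [List.mem_cons, List.mem_singleton, List.not_mem_nil, or_false] at hP
        rcases hP with rfl | rfl
        · refine ⟨Finset.card_insert_le _ _ |>.trans (by simp), ?_⟩
          intro x hx y hy
          simp only [Finset.mem_insert, Finset.mem_singleton] at hx hy
          rcases hx with rfl | rfl <;> rcases hy with rfl | rfl
          · exact G.irrefl
          · exact hvu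
          · exact fun hh => hvu hh.symm
          · exact G.irrefl
        · refine ⟨by simp, ?_⟩
          intro x hx y hy
          simp only [Finset.mem_singleton] at hx hy
          subst hx; subst hy; exact G.irrefl
      · intro x hx
        rw [hR2] at hx
        simp only [Finset.mem_insert, Finset.mem_singleton] at hx
        rcases hx with rfl | rfl | rfl
        · exact ⟨{x, u}, by simp, by simp⟩
        · exact ⟨{v, x}, by simp, by simp⟩
        · exact ⟨{x}, by simp, by simp⟩

theorem stmt9 [Fintype V] (G : SimpleGraph V) [DecidableRel G.Adj]
    (hconn : G.Connected) (htf : G.CliqueFree 3) :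
    imvChrom G ≤ (Fintype.card V - G.maxDegree + 1) / 2 + 1 := by
  classical
  have hne : Nonempty V := hconn.nonempty
  obtain ⟨v, hv⟩ := G.exists_maximal_degree_vertex
  set R : Finset V := Finset.univ \ insert v (G.neighborFinset v) with hRdef
  have hvR : v ∉ R := by simp [hRdef]
  have hadjR : ∀ u ∈ R, ¬ G.Adj v u := by
    intro u hu hadj
    rw [hRdef, Finset.mem_sdiff] at hu
    exact hu.2 (Finset.mem_insert_of_mem (G.mem_neighborFinset v u |>.2 hadj))
  obtain ⟨L, hL1, hL2, hL3⟩ := pairup G htf R.card R rfl v hvR hadjR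
  set k := L.length + 1 with hk
  set f : V → Fin k := fun x => ⟨L.findIdx (fun P => decide (x ∈ P)),
    Nat.lt_succ_of_le (List.findIdx_le_length)⟩ with hf
  have hmem : k ∈ {k | ∃ f : V → Fin k, ∀ i, IsIMVSet G (f ⁻¹' {i})} := by
    refine ⟨f, fun i => ?_⟩
    by_cases hi : (i : ℕ) < L.length
    · have hsub : (f ⁻¹' {i}) ⊆ ↑(L.get ⟨i, hi⟩) := by
        intro x hx
        simp only [Set.mem_preimage, Set.mem_singleton_iff, hf] at hx
        have hidx : L.findIdx (fun P => decide (x ∈ P)) = (i : ℕ) := congrArg Fin.val hx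
        have hlt : L.findIdx (fun P => decide (x ∈ P)) < L.length := hidx ▸ hi
        have hg := List.findIdx_getElem (p := fun P => decide (x ∈ P)) (xs := L) (w := hlt)
        simp only [decide_eq_true_eq, hidx] at hg
        exact hg
      have hP := hL1 (L.get ⟨i, hi⟩) (List.get_mem L ⟨i, hi⟩)
      refine imv_small G _ (fun x hx y hy => hP.2 x (hsub hx) y (hsub hy)) ?_
      intro x hx y hy z hz
      by_contra hc
      push_neg at hc
      obtain ⟨hxy, hxz, hyz⟩ := hc
      have hsub3 : ({x, y, z} : Finset V) ⊆ L.get ⟨i, hi⟩ := by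
        intro a ha
        simp only [Finset.mem_insert, Finset.mem_singleton] at ha
        rcases ha with rfl | rfl | rfl
        exacts [hsub hx, hsub hy, hsub hz]
      have h3 : ({x, y, z} : Finset V).card = 3 := by
        rw [Finset.card_insert_of_notMem (by simp [hxy, hxz]),
          Finset.card_insert_of_notMem (by simp [hyz]), Finset.card_singleton]
      have := Finset.card_le_card hsub3
      rw [h3] at this
      omega
    · have hieq : (i : ℕ) = L.length := by
        have := i.isLt
        omega
      refine imv_nbhd G htf v _ ?_
      intro x hx
      simp only [Set.mem_preimage, Set.mem_singleton_iff, hf] at hx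
      have h1 : L.findIdx (fun P => decide (x ∈ P)) = (i : ℕ) := congrArg Fin.val hx
      have hidx : L.findIdx (fun P => decide (x ∈ P)) = L.length := h1.trans hieq
      have hnotfound : ¬ ∃ P ∈ L, x ∈ P := by
        intro ⟨P, hP, hxP⟩
        have := List.findIdx_lt_length_of_exists (p := fun P => decide (x ∈ P))
          ⟨P, hP, by simpa using hxP⟩
        omega
      have hxnot : x ∉ insert v R := fun hh => hnotfound (hL2 x hh)
      rw [Finset.mem_insert, not_or] at hxnot
      obtain ⟨hxv, hxR⟩ := hxnot
      rw [hRdef, Finset.mem_sdiff, not_and_or, not_not] at hxR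
      rcases hxR with h | h
      · exact absurd (Finset.mem_univ x) h
      · rcases Finset.mem_insert.1 h with rfl | h
        · exact absurd rfl hxv
        · exact (G.mem_neighborFinset v x).1 h
  have hle : imvChrom G ≤ k := Nat.sInf_le hmem
  have hRcard : R.card = Fintype.card V - (G.degree v + 1) := by
    rw [hRdef, Finset.card_sdiff_of_subset (Finset.subset_univ _), Finset.card_univ,
      Finset.card_insert_of_notMem (G.notMem_neighborFinset_self v),
      SimpleGraph.card_neighborFinset_eq_degree]
  have hdeg : G.degree v < Fintype.card V := G.degree_lt_card_verts v
  rw [hRcard] at hL3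
  have hΔ : G.maxDegree = G.degree v := hv
  rw [hΔ]
  omega
end

section
/- For every graph G, χ_{μ_i}(G) ≤ χ(G)·χ_μ(G), and this bound is attained by complete graphs. -/
open SimpleGraph

variable {V W : Type*}

lemma isMVSet_mono {G : SimpleGraph V} {X Y : Set V} (h : X ⊆ Y) (hY : IsMVSet G Y) :
    IsMVSet G X := by
  intro x hx y hy hxy hr
  obtain ⟨p, hp, hint⟩ := hY x (h hx) y (h hy) hxy hr
  exact ⟨p, hp, fun z hz hzx hzy hzX => hint z hz hzx hzy (h hzX)⟩

lemma isMVSet_subsingleton {G : SimpleGraph V} {X : Set V} (h : X.Subsingleton) :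
    IsMVSet G X := fun x hx y hy hxy _ => absurd (h hx hy) hxy

theorem stmt10 :
    (∀ (U : Type) [Fintype U] (G : SimpleGraph U), imvChrom G ≤ chromNat G * mvChrom G) ∧
      ∀ n : ℕ, imvChrom (⊤ : SimpleGraph (Fin n)) =
        chromNat (⊤ : SimpleGraph (Fin n)) * mvChrom (⊤ : SimpleGraph (Fin n)) := by
  constructor
  · intro U _ G
    have ha : G.Colorable (chromNat G) := by
      have := Nat.sInf_mem (s := {k | G.Colorable k}) ⟨Fintype.card U, G.colorable_of_fintype⟩
      exact this
    obtain ⟨C⟩ := ha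
    have hb : ∃ f : U → Fin (mvChrom G), ∀ i, IsMVSet G (f ⁻¹' {i}) := by
      apply Nat.sInf_mem (s := {k | ∃ f : U → Fin k, ∀ i, IsMVSet G (f ⁻¹' {i})})
      refine ⟨Fintype.card U, Fintype.equivFin U, fun i => isMVSet_subsingleton ?_⟩
      intro x hx y hy
      exact (Fintype.equivFin U).injective (hx.trans hy.symm)
    obtain ⟨g, hg⟩ := hb
    apply Nat.sInf_le
    refine ⟨fun v => finProdFinEquiv (C v, g v), fun i => ?_⟩
    have hsub : (fun v => finProdFinEquiv (C v, g v)) ⁻¹' {i} ⊆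
        g ⁻¹' {(finProdFinEquiv.symm i).2} := by
      intro v hv
      simp only [Set.mem_preimage, Set.mem_singleton_iff] at hv ⊢
      rw [← hv]; simp
    constructor
    · intro x hx y hy hadj
      simp only [Set.mem_preimage, Set.mem_singleton_iff] at hx hy
      have : C x = C y := by
        have := hx.trans hy.symm
        have := finProdFinEquiv.injective this
        exact (Prod.mk.injEq _ _ _ _ ▸ this).1
      exact C.valid hadj this
    · exact isMVSet_mono hsub (hg _)
  · intro n
    -- first compute chromNat
    have hchrom : chromNat (⊤ : SimpleGraph (Fin n)) = n := by
      have hmem : (⊤ : SimpleGraph (Fin n)).Colorable n := by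
        refine ⟨⟨id, ?_⟩⟩
        intro a b hab
        exact hab.ne
      refine le_antisymm (Nat.sInf_le hmem) ?_
      have hin : (⊤ : SimpleGraph (Fin n)).Colorable (chromNat (⊤ : SimpleGraph (Fin n))) := by
        have := Nat.sInf_mem (s := {k | (⊤ : SimpleGraph (Fin n)).Colorable k}) ⟨n, hmem⟩
        exact this
      obtain ⟨C⟩ := hin
      have hinj : Function.Injective C := by
        intro a b hab
        by_contra hne
        exact C.valid ((top_adj a b).mpr hne) hab
      simpa using Fintype.card_le_of_injective C hinj
    rcases Nat.eq_zero_or_pos n with hn | hn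
    · subst hn
      have h0 : imvChrom (⊤ : SimpleGraph (Fin 0)) = 0 := by
        have : (0 : ℕ) ∈ {k | ∃ f : Fin 0 → Fin k, ∀ i, IsIMVSet (⊤ : SimpleGraph (Fin 0)) (f ⁻¹' {i})} :=
          ⟨fun v => v.elim0, fun i => i.elim0⟩
        exact Nat.le_zero.mp (Nat.sInf_le this)
      rw [h0, hchrom, Nat.zero_mul]
    · have hmv : mvChrom (⊤ : SimpleGraph (Fin n)) = 1 := by
        have hmem : (1 : ℕ) ∈ {k | ∃ f : Fin n → Fin k, ∀ i, IsMVSet (⊤ : SimpleGraph (Fin n)) (f ⁻¹' {i})} := by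
          refine ⟨fun _ => 0, fun i => ?_⟩
          intro x _ y _ hxy _
          have hadj : (⊤ : SimpleGraph (Fin n)).Adj x y := (top_adj x y).mpr hxy
          refine ⟨hadj.toWalk, ?_, ?_⟩
          · simp [((⊤ : SimpleGraph (Fin n)).dist_eq_one_iff_adj).mpr hadj]
          · intro z hz hzx hzy
            simp [Walk.support_cons] at hz
            rcases hz with h | h
            · exact absurd h hzx
            · exact absurd h hzy
        refine le_antisymm (Nat.sInf_le hmem) ?_
        by_contra h
        push_neg at h
        interval_cases hx : mvChrom (⊤ : SimpleGraph (Fin n))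
        have : (0 : ℕ) ∈ {k | ∃ f : Fin n → Fin k, ∀ i, IsMVSet (⊤ : SimpleGraph (Fin n)) (f ⁻¹' {i})} := by
          rw [← hx]; exact Nat.sInf_mem ⟨1, hmem⟩
        obtain ⟨f, -⟩ := this
        exact (f ⟨0, hn⟩).elim0
      have himv : imvChrom (⊤ : SimpleGraph (Fin n)) = n := by
        have hmem : (n : ℕ) ∈ {k | ∃ f : Fin n → Fin k, ∀ i, IsIMVSet (⊤ : SimpleGraph (Fin n)) (f ⁻¹' {i})} := by
          refine ⟨id, fun i => ⟨?_, isMVSet_subsingleton ?_⟩⟩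
          · intro x hx y hy hadj
            simp only [Set.mem_preimage, Set.mem_singleton_iff, id] at hx hy
            exact hadj.ne (hx.trans hy.symm)
          · intro x hx y hy
            simp only [Set.mem_preimage, Set.mem_singleton_iff, id] at hx hy
            exact hx.trans hy.symm
        refine le_antisymm (Nat.sInf_le hmem) ?_
        have hin := Nat.sInf_mem (⟨n, hmem⟩ :
          Set.Nonempty {k | ∃ f : Fin n → Fin k, ∀ i, IsIMVSet (⊤ : SimpleGraph (Fin n)) (f ⁻¹' {i})})
        obtain ⟨f, hf⟩ := hin
        have hinj : Function.Injective f := by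
          intro a b hab
          by_contra hne
          exact (hf (f a)).1 a rfl b hab.symm ((top_adj a b).mpr hne)
        simpa [imvChrom] using Fintype.card_le_of_injective f hinj
      rw [himv, hchrom, hmv, mul_one]
end

section
/- For a connected graph G, χ_{μ_i}(G) = 2 if and only if G is bipartite and 1 ≤ diam(G) ≤ 3. -/
open SimpleGraph

variable {V W : Type*}

lemma parity_walk {G : SimpleGraph V} {f : V → Fin 2}
    (hf : ∀ a b, G.Adj a b → f a ≠ f b) :
    ∀ {x y : V} (p : G.Walk x y), (f x = f y ↔ Even p.length) := by
  intro x y p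
  induction p with
  | nil => simp
  | cons h q ih =>
    rename_i a b c
    have h1 : f a ≠ f b := hf _ _ h
    have key : ∀ r s t : Fin 2, r ≠ s → ((r = t) ↔ ¬ (s = t)) := by decide
    rw [Walk.length_cons, Nat.even_add_one, ← ih, key _ _ _ h1]

lemma step_lemma {G : SimpleGraph V} {w v : V} (hr : G.Reachable w v) (hne : w ≠ v) :
    ∃ w', G.Adj w w' ∧ G.dist w' v + 1 = G.dist w v := by
  obtain ⟨p, hp⟩ := hr.exists_walk_length_eq_dist
  have hpos : 0 < G.dist w v := hr.pos_dist_of_ne hne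
  cases p with
  | nil => exact absurd rfl hne
  | cons h q =>
    rename_i b
    refine ⟨b, h, ?_⟩
    have h1 : G.dist b v ≤ q.length := dist_le q
    obtain ⟨r, hr'⟩ := (Reachable.exists_walk_length_eq_dist (⟨q⟩ : G.Reachable b v))
    have h2 : G.dist w v ≤ 1 + G.dist b v := by
      have := dist_le (Walk.cons h r)
      simp [Walk.length_cons] at this
      omega
    simp [Walk.length_cons] at hp
    omega

lemma exists_at_dist {G : SimpleGraph V} (hconn : G.Connected) (u v : V) :
    ∀ k, k ≤ G.dist u v → ∃ w, G.dist u w = k ∧ G.dist w v + k = G.dist u v := by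
  intro k
  induction k with
  | zero => intro _; exact ⟨u, by simp [dist_self], by simp⟩
  | succ k ih =>
    intro hk
    obtain ⟨w, hw1, hw2⟩ := ih (by omega)
    have hwv : w ≠ v := by
      intro h; subst h; simp [dist_self] at hw2; omega
    obtain ⟨w', hadj, hd⟩ := step_lemma (hconn w v) hwv
    refine ⟨w', ?_, by omega⟩
    have h1 : G.dist u w' ≤ k + 1 := by
      have := hconn.dist_triangle (u := u) (v := w) (w := w')
      have h2 : G.dist w w' = 1 := by rwa [dist_eq_one_iff_adj]
      omega
    have h2 : G.dist u v ≤ G.dist u w' + G.dist w' v := hconn.dist_triangle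
    omega

theorem stmt11 [Fintype V] (G : SimpleGraph V) (hconn : G.Connected) :
    imvChrom G = 2 ↔
      (G.Colorable 2 ∧ (∃ u v : V, u ≠ v) ∧ ∀ u v : V, G.dist u v ≤ 3) := by
  set S := {k | ∃ f : V → Fin k, ∀ i, IsIMVSet G (f ⁻¹' {i})} with hS
  constructor
  · intro h
    have hne : S.Nonempty := by
      by_contra hn
      rw [Set.not_nonempty_iff_eq_empty] at hn
      rw [imvChrom, ← hS, hn] at h
      simp at h
    have h2 : 2 ∈ S := by rw [imvChrom, ← hS] at h; exact h ▸ Nat.sInf_mem hne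
    obtain ⟨f, hf⟩ := h2
    have proper : ∀ a b, G.Adj a b → f a ≠ f b := by
      intro a b hab heq
      exact (hf (f a)).1 a rfl b heq.symm hab
    have hnt : ∃ u v : V, u ≠ v := by
      by_contra hn
      push_neg at hn
      have h1 : 1 ∈ S := by
        refine ⟨fun _ => 0, fun i => ⟨?_, ?_⟩⟩
        · intro x _ y _ hxy
          have : x = y := hn x y
          subst this; exact G.irrefl hxy
        · intro x _ y _ hxy _
          exact absurd (hn x y) hxy
      have := Nat.sInf_le h1
      rw [imvChrom, ← hS] at h
      omega
    refine ⟨⟨⟨f, fun hab => proper _ _ hab⟩⟩, hnt, ?_⟩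
    intro u v
    by_contra hd
    push_neg at hd
    obtain ⟨w, hw4, -⟩ := exists_at_dist hconn u v 4 (by omega)
    have huw : u ≠ w := by
      intro h'; subst h'; simp [dist_self] at hw4
    have hfw : f u = f w := by
      obtain ⟨p, hp⟩ := (hconn u w).exists_walk_length_eq_dist
      rw [parity_walk proper p, hp, hw4]
      decide
    obtain ⟨q, hq, hint⟩ := (hf (f u)).2 u rfl w hfw.symm huw (hconn u w)
    rw [hw4] at hq
    cases q with
    | nil => simp at hq
    | cons h₁ q₁ =>
      cases q₁ with
      | nil => simp at hq
      | cons h₂ q₂ =>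
        rename_i a b
        simp only [Walk.length_cons] at hq
        have hfb : f b = f u := by
          have h1 := proper _ _ h₁
          have h2 := proper _ _ h₂
          have key : ∀ r s t : Fin 2, r ≠ s → s ≠ t → t = r := by decide
          exact key _ _ _ h1 h2
        have hbu : b ≠ u := by
          intro h'
          subst h'
          have := dist_le q₂
          omega
        have hbw : b ≠ w := by
          intro h'
          have : G.dist u b ≤ 2 := by
            have := dist_le (Walk.cons h₁ (Walk.cons h₂ Walk.nil))
            simpa using this
          rw [h'] at this
          omega
        have hmem : b ∈ (Walk.cons h₁ (Walk.cons h₂ q₂)).support := by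
          simp [Walk.support_cons]
        exact hint b hmem hbu hbw hfb
  · rintro ⟨hcol, ⟨u0, v0, huv⟩, hdiam⟩
    obtain ⟨C⟩ := hcol
    have proper : ∀ a b, G.Adj a b → C a ≠ C b := fun a b hab => C.valid hab
    have h2 : 2 ∈ S := by
      refine ⟨C, fun i => ⟨?_, ?_⟩⟩
      · intro x hx y hy hadj
        have : C x = C y := by
          simp only [Set.mem_preimage, Set.mem_singleton_iff] at hx hy
          rw [hx, hy]
        exact proper _ _ hadj this
      · intro x hx y hy hxy hr
        simp only [Set.mem_preimage, Set.mem_singleton_iff] at hx hy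
        obtain ⟨p, hp⟩ := hr.exists_walk_length_eq_dist
        have heven : Even (G.dist x y) := by
          rw [← hp, ← parity_walk proper p, hx, hy]
        have hpos : 0 < G.dist x y := hr.pos_dist_of_ne hxy
        have hle : G.dist x y ≤ 3 := hdiam x y
        have hd2 : G.dist x y = 2 := by
          rw [Nat.even_iff] at heven; omega
        refine ⟨p, hp, ?_⟩
        rw [hd2] at hp
        cases p with
        | nil => simp at hp
        | cons h₁ q₁ =>
          cases q₁ with
          | nil => simp at hp
          | cons h₂ q₂ =>
            rename_i a b
            simp only [Walk.length_cons] at hp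
            have : q₂.length = 0 := by omega
            have hq2 : q₂.Nil := Walk.nil_iff_length_eq.mpr this
            have hby : b = y := by
              have hm := q₂.end_mem_support
              rw [Walk.nil_iff_support_eq.mp hq2] at hm
              simp at hm
              exact hm.symm
            subst hby
            intro z hz hzx hzy
            simp only [Walk.support_cons, List.mem_cons] at hz
            have hza : z = a := by
              rcases hz with h | h | h
              · exact absurd h hzx
              · exact h
              · rw [Walk.nil_iff_support_eq.mp hq2] at h
                simp at h
                exact absurd h hzy
            subst hza
            simp only [Set.mem_preimage, Set.mem_singleton_iff]
            have hab : C x ≠ C z := proper _ _ h₁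
            rw [hx] at hab
            intro h'
            exact hab h'.symm
    have h0 : (0 : ℕ) ∉ S := by
      rintro ⟨f, -⟩
      exact (f u0).elim0
    have h1 : (1 : ℕ) ∉ S := by
      rintro ⟨f, hf⟩
      obtain ⟨p, -⟩ := (hconn u0 v0).exists_walk_length_eq_dist
      cases p with
      | nil => exact huv rfl
      | cons h q =>
        rename_i b
        have := (hf (f u0)).1 u0 rfl b (Subsingleton.elim _ _) h
        exact this
    rw [imvChrom, ← hS]
    have hle : sInf S ≤ 2 := Nat.sInf_le h2
    have hmem := Nat.sInf_mem (⟨2, h2⟩ : S.Nonempty)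
    interval_cases h : (sInf S)
    · exact absurd hmem h0
    · exact absurd hmem h1
    · rfl
end

section
/- For the cycle C_n with n ≥ 6 or n = 4, χ_{μ_i}(C_n) = χ_μ(C_n) = ⌈n/3⌉; moreover χ_{μ_i}(C_3) = χ_{μ_i}(C_5) = 3, χ_μ(C_5) = 2, and χ_μ(C_3) = 1. -/
open SimpleGraph

variable {V W : Type*}

section aux
variable {n : ℕ}
open Fin.NatCast Fin.CommRing

lemma fin_sub_val (a b : Fin n) : (a - b).val = (a.val + (n - b.val)) % n := by
  rw [Fin.sub_def]; simp [Nat.add_comm]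

lemma mod2 {m k : ℕ} (h : m < 2 * k) : m % k = if m < k then m else m - k := by
  split
  · exact Nat.mod_eq_of_lt ‹_›
  · rw [Nat.mod_eq_sub_mod (by omega), Nat.mod_eq_of_lt (by omega)]

lemma cyc_adj_nat {u v : Fin n} : (cycleGraph n).Adj u v ↔
    (v.val = u.val + 1 ∨ u.val = v.val + 1 ∨ (u.val = n - 1 ∧ v.val = 0 ∧ v.val + 1 < n)
      ∨ (v.val = n - 1 ∧ u.val = 0 ∧ u.val + 1 < n)) := by
  have hu := u.isLt; have hv := v.isLt
  rw [cycleGraph_adj', fin_sub_val, fin_sub_val, mod2 (by omega), mod2 (by omega)]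
  split_ifs <;> omega

lemma cyc_walk_len_ge {u v : Fin n} (p : (cycleGraph n).Walk u v) :
    min (v - u).val (u - v).val ≤ p.length := by
  induction p with
  | nil =>
    rename_i u
    have hu := u.isLt
    rw [fin_sub_val, mod2 (by omega)]
    split_ifs <;> omega
  | @cons u w v h q ih =>
    have hu := u.isLt; have hv := v.isLt; have hw := w.isLt
    rw [cyc_adj_nat] at h
    rw [fin_sub_val, fin_sub_val, mod2 (by omega), mod2 (by omega)] at ih
    rw [fin_sub_val, fin_sub_val, mod2 (by omega), mod2 (by omega)]
    simp only [Walk.length_cons]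
    split_ifs at ih ⊢ <;> omega

lemma cyc_adj_succ [NeZero n] (hn : 2 ≤ n) (x : Fin n) : (cycleGraph n).Adj x (x + 1) := by
  rw [cycleGraph_adj']
  right
  have : x + 1 - x = 1 := by ring
  rw [this, Fin.val_one', Nat.mod_eq_of_lt hn]

def arcWalk [NeZero n] (hn : 2 ≤ n) (x : Fin n) : (L : ℕ) → (cycleGraph n).Walk x (x + L)
  | 0 => Walk.nil.copy rfl (by simp)
  | (L + 1) => ((arcWalk hn x L).concat (cyc_adj_succ hn _)).copy rfl (by push_cast; ring)

@[simp] lemma arcWalk_length [NeZero n] (hn : 2 ≤ n) (x : Fin n) (L : ℕ) :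
    (arcWalk hn x L).length = L := by
  induction L with
  | zero => simp [arcWalk]
  | succ L ih => simp [arcWalk, ih]

lemma arcWalk_support [NeZero n] (hn : 2 ≤ n) (x : Fin n) (L : ℕ) :
    ∀ z ∈ (arcWalk hn x L).support, ∃ j ≤ L, z = x + (j : Fin n) := by
  induction L with
  | zero =>
    simp only [arcWalk, Walk.support_copy, Walk.support_nil]
    rintro z hz
    simp at hz
    exact ⟨0, le_refl 0, by simp [hz]⟩
  | succ L ih =>
    intro z hz
    simp only [arcWalk, Walk.support_copy, Walk.support_concat, List.concat_eq_append,
      List.mem_append, List.mem_singleton] at hz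
    rcases hz with hz | hz
    · obtain ⟨j, hj, hje⟩ := ih z hz
      exact ⟨j, by omega, hje⟩
    · exact ⟨L + 1, le_refl _, by rw [hz]; push_cast; ring⟩

lemma cyc_reachable [NeZero n] (hn : 2 ≤ n) (x y : Fin n) : (cycleGraph n).Reachable x y :=
  ⟨((arcWalk hn x (y - x).val).copy rfl (by rw [Fin.cast_val_eq_self]; ring))⟩

lemma fin_neg_val [NeZero n] (a : Fin n) : (-a).val = (n - a.val) % n := by
  have : -a = 0 - a := by ring
  rw [this, fin_sub_val]
  have := a.isLt
  rcases n with _ | m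
  · omega
  · simp [Fin.val_zero]

lemma cyc_dist [NeZero n] (hn : 2 ≤ n) (x : Fin n) {g : ℕ} (hg : 2 * g ≤ n) :
    (cycleGraph n).dist x (x + (g : Fin n)) = g := by
  refine le_antisymm (by simpa using dist_le (arcWalk hn x g)) ?_
  obtain ⟨p, hp⟩ := (cyc_reachable hn x (x + (g : Fin n))).exists_walk_length_eq_dist
  rw [← hp]
  have h := cyc_walk_len_ge p
  have h1 : (x + (g : Fin n) - x) = (g : Fin n) := by ring
  have h2 : (x - (x + (g : Fin n))) = -(g : Fin n) := by ring
  rw [h1, h2, fin_neg_val] at h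
  have hgn : ((g : Fin n)).val = g := by rw [Fin.val_natCast, Nat.mod_eq_of_lt (by omega)]
  rw [hgn, mod2 (by omega)] at h
  split_ifs at h <;> omega


def Vis (G : SimpleGraph V) (X : Set V) (x y : V) : Prop :=
  ∃ p : G.Walk x y, p.length = G.dist x y ∧ ∀ z ∈ p.support, z ≠ x → z ≠ y → z ∉ X

lemma Vis.symm {G : SimpleGraph V} {X : Set V} {x y : V} (h : Vis G X x y) : Vis G X y x := by
  obtain ⟨p, hl, hs⟩ := h
  exact ⟨p.reverse, by rw [Walk.length_reverse, hl, dist_comm],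
    fun z hz hzy hzx => hs z (by simpa using hz) hzx hzy⟩

lemma mv_pair {G : SimpleGraph V} {a b : V} : IsMVSet G {a, b} := by
  intro x hx y hy hxy hr
  obtain ⟨p, hp⟩ := hr.exists_walk_length_eq_dist
  refine ⟨p, hp, ?_⟩
  intro z hz hzx hzy hzX
  simp only [Set.mem_insert_iff, Set.mem_singleton_iff] at hx hy hzX
  rcases hx with rfl | rfl <;> rcases hy with rfl | rfl <;> rcases hzX with rfl | rfl <;>
    simp_all

lemma mv_singleton {G : SimpleGraph V} {a : V} : IsMVSet G {a} := by
  intro x hx y hy hxy hr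
  simp only [Set.mem_singleton_iff] at hx hy
  exact absurd (hx.trans hy.symm) hxy

lemma imv_singleton {G : SimpleGraph V} {a : V} : IsIMVSet G {a} := by
  refine ⟨?_, mv_singleton⟩
  intro x hx y hy
  simp only [Set.mem_singleton_iff] at hx hy
  subst hx; subst hy
  exact G.loopless.irrefl _

lemma cast_val_eq {t : ℕ} [NeZero n] (ht : t < n) : ((t : Fin n)).val = t := by
  rw [Fin.val_natCast, Nat.mod_eq_of_lt ht]

lemma vis_arc [NeZero n] (hn : 2 ≤ n) {X : Set (Fin n)} (x : Fin n) {g m : ℕ}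
    (hg2 : 2 * g ≤ n) (hgm : g < m) (hm : m < n)
    (hX : ∀ z ∈ X, z = x ∨ z = x + (g : Fin n) ∨ z = x + (m : Fin n)) :
    Vis (cycleGraph n) X x (x + (g : Fin n)) := by
  refine ⟨arcWalk hn x g, by rw [arcWalk_length, cyc_dist hn x hg2], ?_⟩
  intro z hz hzx hzy hzX
  obtain ⟨j, hj, rfl⟩ := arcWalk_support hn x g z hz
  rcases hX _ hzX with h | h | h
  · exact hzx h
  · exact hzy h
  · have h2 := congrArg Fin.val (add_left_cancel h)
    rw [cast_val_eq (by omega), cast_val_eq hm] at h2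
    omega

lemma vis_arc' [NeZero n] (hn : 2 ≤ n) {X : Set (Fin n)} (x y t : Fin n) {g m : ℕ}
    (hg2 : 2 * g ≤ n) (hgm : g < m) (hm : m < n)
    (hy : x + ((g : ℕ) : Fin n) = y) (ht : x + ((m : ℕ) : Fin n) = t)
    (hX : ∀ z ∈ X, z = x ∨ z = y ∨ z = t) :
    Vis (cycleGraph n) X x y := by
  subst hy; subst ht
  exact vis_arc hn x hg2 hgm hm hX

lemma not_adj_shift [NeZero n] (x : Fin n) {t : ℕ} (h2 : 2 ≤ t) (h2' : t + 2 ≤ n) :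
    ¬ (cycleGraph n).Adj x (x + (t : Fin n)) := by
  rw [cycleGraph_adj']
  have e1 : x - (x + (t : Fin n)) = -(t : Fin n) := by ring
  have e2 : x + (t : Fin n) - x = (t : Fin n) := by ring
  rw [e1, e2, fin_neg_val, cast_val_eq (show t < n by omega), mod2 (by omega)]
  split_ifs <;> omega

lemma fin_shift_ne [NeZero n] (x : Fin n) {t : ℕ} (ht1 : 1 ≤ t) (htn : t < n) :
    x + ((t : ℕ) : Fin n) ≠ x := by
  intro h
  have h0 : ((t : ℕ) : Fin n) = 0 := by
    have := congrArg (fun z => z - x) h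
    simpa using this
  have := congrArg Fin.val h0
  rw [cast_val_eq htn] at this
  simp at this
  omega

lemma mv_triple [NeZero n] (hn : 2 ≤ n) (a : Fin n) {g1 g2 g3 : ℕ}
    (h1 : 1 ≤ g1) (h2 : 1 ≤ g2) (h3 : 1 ≤ g3) (hsum : g1 + g2 + g3 = n)
    (d1 : 2*g1 ≤ n) (d2 : 2*g2 ≤ n) (d3 : 2*g3 ≤ n) :
    IsMVSet (cycleGraph n) {a, a + ((g1 : ℕ) : Fin n), a + ((g1 + g2 : ℕ) : Fin n)} := by
  set b := a + ((g1 : ℕ) : Fin n) with hb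
  set c := a + ((g1 + g2 : ℕ) : Fin n) with hc
  have hzero : ((g1 + g2 + g3 : ℕ) : Fin n) = 0 := by rw [hsum]; exact Fin.natCast_self n
  have hba : a + ((g1 : ℕ) : Fin n) = b := hb.symm
  have hac : a + ((g1 + g2 : ℕ) : Fin n) = c := hc.symm
  have hcb : b + ((g2 : ℕ) : Fin n) = c := by rw [hb, hc]; push_cast; ring
  have hca : c + ((g3 : ℕ) : Fin n) = a := by
    rw [hc]
    calc a + ((g1 + g2 : ℕ) : Fin n) + ((g3 : ℕ) : Fin n)
        = a + ((g1 + g2 + g3 : ℕ) : Fin n) := by push_cast; ring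
      _ = a := by rw [hzero, add_zero]
  have hbc2 : b + ((g2 + g3 : ℕ) : Fin n) = a := by
    rw [hb]
    calc a + ((g1 : ℕ) : Fin n) + ((g2 + g3 : ℕ) : Fin n)
        = a + ((g1 + g2 + g3 : ℕ) : Fin n) := by push_cast; ring
      _ = a := by rw [hzero, add_zero]
  have hcg : c + ((g3 + g1 : ℕ) : Fin n) = b := by
    rw [hc, hb]
    calc a + ((g1 + g2 : ℕ) : Fin n) + ((g3 + g1 : ℕ) : Fin n)
        = a + ((g1 : ℕ) : Fin n) + ((g1 + g2 + g3 : ℕ) : Fin n) := by push_cast; ring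
      _ = a + ((g1 : ℕ) : Fin n) := by rw [hzero, add_zero]
  have hab : a ≠ b := fun h => fin_shift_ne a h1 (by omega) (hba.trans h.symm)
  have hbc : b ≠ c := fun h => fin_shift_ne b h2 (by omega) (hcb.trans h.symm)
  have hcane : c ≠ a := fun h => fin_shift_ne c h3 (by omega) (hca.trans h.symm)
  have hXsub : ∀ z ∈ ({a, b, c} : Set (Fin n)), z = a ∨ z = b ∨ z = c := by
    intro z hz; simpa [Set.mem_insert_iff] using hz
  have vAB : Vis (cycleGraph n) {a, b, c} a b :=
    vis_arc' hn a b c d1 (show g1 < g1 + g2 by omega) (by omega) hba hac hXsub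
  have vBC : Vis (cycleGraph n) {a, b, c} b c :=
    vis_arc' hn b c a d2 (show g2 < g2 + g3 by omega) (by omega) hcb hbc2
      (fun z hz => by rcases hXsub z hz with h | h | h <;> tauto)
  have vCA : Vis (cycleGraph n) {a, b, c} c a :=
    vis_arc' hn c a b d3 (show g3 < g3 + g1 by omega) (by omega) hca hcg
      (fun z hz => by rcases hXsub z hz with h | h | h <;> tauto)
  intro x hx y hy hxy hr
  rcases hXsub x hx with rfl | rfl | rfl <;> rcases hXsub y hy with rfl | rfl | rfl
  · exact absurd rfl hxy
  · exact vAB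
  · exact vCA.symm
  · exact vAB.symm
  · exact absurd rfl hxy
  · exact vBC
  · exact vCA
  · exact vBC.symm
  · exact absurd rfl hxy

lemma imv_triple [NeZero n] (hn : 2 ≤ n) (a : Fin n) {g1 g2 g3 : ℕ}
    (h1 : 2 ≤ g1) (h2 : 2 ≤ g2) (h3 : 2 ≤ g3) (hsum : g1 + g2 + g3 = n)
    (d1 : 2*g1 ≤ n) (d2 : 2*g2 ≤ n) (d3 : 2*g3 ≤ n) :
    IsIMVSet (cycleGraph n) {a, a + ((g1 : ℕ) : Fin n), a + ((g1 + g2 : ℕ) : Fin n)} := by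
  refine ⟨?_, mv_triple hn a (by omega) (by omega) (by omega) hsum d1 d2 d3⟩
  set b := a + ((g1 : ℕ) : Fin n) with hb
  set c := a + ((g1 + g2 : ℕ) : Fin n) with hc
  have hcb : b + ((g2 : ℕ) : Fin n) = c := by rw [hb, hc]; push_cast; ring
  have nab : ¬ (cycleGraph n).Adj a b := not_adj_shift a h1 (by omega)
  have nac : ¬ (cycleGraph n).Adj a c := not_adj_shift a (t := g1 + g2) (by omega) (by omega)
  have nbc : ¬ (cycleGraph n).Adj b c := hcb ▸ not_adj_shift b h2 (by omega)
  have hXsub : ∀ z ∈ ({a, b, c} : Set (Fin n)), z = a ∨ z = b ∨ z = c := by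
    intro z hz; simpa [Set.mem_insert_iff] using hz
  intro x hx y hy
  rcases hXsub x hx with rfl | rfl | rfl <;> rcases hXsub y hy with rfl | rfl | rfl
  · exact (cycleGraph n).loopless.irrefl _
  · exact nab
  · exact nac
  · exact fun h => nab h.symm
  · exact (cycleGraph n).loopless.irrefl _
  · exact nbc
  · exact fun h => nac h.symm
  · exact fun h => nbc h.symm
  · exact (cycleGraph n).loopless.irrefl _

lemma cross_aux {b d : Fin n} (hb : 0 < b.val) :
    ∀ {u v : Fin n} (p : (cycleGraph n).Walk u v), (b < v ∧ v < d) → ¬(b < u ∧ u < d) →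
      b ∈ p.support ∨ d ∈ p.support := by
  intro u v p
  induction p with
  | nil => intro hv hu; exact absurd hv hu
  | @cons u w v h q ih =>
    intro hv hu
    by_cases hw : b < w ∧ w < d
    · have hd := d.isLt
      have : u = b ∨ u = d := by
        rw [cyc_adj_nat] at h
        rw [Fin.lt_def] at hw hu hv
        rw [Fin.ext_iff, Fin.ext_iff]
        push_neg at hu
        omega
      rcases this with rfl | rfl
      · exact Or.inl (Walk.start_mem_support _)
      · exact Or.inr (Walk.start_mem_support _)
    · rcases ih hv hw with h' | h'
      · exact Or.inl (List.mem_cons_of_mem _ h')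
      · exact Or.inr (List.mem_cons_of_mem _ h')

lemma mv_card_le_three {X : Set (Fin n)} (hX : IsMVSet (cycleGraph n) X)
    (s : Finset (Fin n)) (hs : ↑s ⊆ X) : s.card ≤ 3 := by
  by_contra hcard
  push_neg at hcard
  have hlen : (s.sort (· ≤ ·)).length = s.card := Finset.length_sort _
  have hsorted : (s.sort (· ≤ ·)).Pairwise (· < ·) := (Finset.sortedLT_sort s).pairwise
  obtain ⟨l, hl⟩ : ∃ l, s.sort (· ≤ ·) = l := ⟨_, rfl⟩
  rw [hl] at hlen hsorted
  rcases l with _ | ⟨a, _ | ⟨b, _ | ⟨c, _ | ⟨d, l4⟩⟩⟩⟩ <;>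
    simp only [List.length] at hlen <;> try omega
  have hmem : ∀ x ∈ (a :: b :: c :: d :: l4), x ∈ s := by
    intro x hx
    rw [← Finset.mem_sort (· ≤ ·), hl]
    exact hx
  simp only [List.pairwise_cons] at hsorted
  have hab : a < b := hsorted.1 b (by simp)
  have hbc : b < c := hsorted.2.1 c (by simp)
  have hcd : c < d := hsorted.2.2.1 d (by simp)
  have ha : a ∈ X := hs (hmem a (by simp))
  have hbX : b ∈ X := hs (hmem b (by simp))
  have hcX : c ∈ X := hs (hmem c (by simp))
  have hdX : d ∈ X := hs (hmem d (by simp))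
  have hnpos : 0 < n := Fin.pos a
  haveI : NeZero n := ⟨by omega⟩
  have hn2 : 2 ≤ n := by
    have := d.isLt
    rw [Fin.lt_def] at hab hbc hcd
    omega
  obtain ⟨p, hplen, hpint⟩ := hX a ha c hcX (ne_of_lt (hab.trans hbc)) (cyc_reachable hn2 a c)
  have hb0 : 0 < b.val := by rw [Fin.lt_def] at hab; omega
  rcases cross_aux hb0 p ⟨hbc, hcd⟩ (fun h => lt_asymm hab h.1) with h' | h'
  · exact hpint b h' (ne_of_gt hab) (ne_of_lt hbc) hbX
  · exact hpint d h' (ne_of_gt (hab.trans (hbc.trans hcd))) (ne_of_gt hcd) hdX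

/-- counting lower bound -/
lemma mv_partition_lb (k : ℕ)
    (hf : ∃ f : Fin n → Fin k, ∀ i, IsMVSet (cycleGraph n) (f ⁻¹' {i})) :
    n ≤ 3 * k := by
  obtain ⟨f, hf⟩ := hf
  have hcount : (Finset.univ : Finset (Fin n)).card
      = ∑ i : Fin k, (Finset.univ.filter (fun v => f v = i)).card :=
    Finset.card_eq_sum_card_fiberwise (fun x _ => Finset.mem_univ (f x))
  have hle : ∀ i : Fin k, (Finset.univ.filter (fun v => f v = i)).card ≤ 3 := by
    intro i
    apply mv_card_le_three (hf i)
    intro v hv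
    simp only [Finset.coe_filter, Set.mem_setOf_eq] at hv
    simpa using hv.2
  have : ∑ i : Fin k, (Finset.univ.filter (fun v => f v = i)).card ≤ ∑ _i : Fin k, 3 :=
    Finset.sum_le_sum (fun i _ => hle i)
  simp only [Finset.card_univ, Fintype.card_fin] at hcount
  simp only [Finset.sum_const, Finset.card_univ, Fintype.card_fin, smul_eq_mul] at this
  omega

lemma imv_pair {G : SimpleGraph V} {a b : V} (h : ¬ G.Adj a b) : IsIMVSet G {a, b} := by
  refine ⟨?_, mv_pair⟩
  intro x hx y hy
  simp only [Set.mem_insert_iff, Set.mem_singleton_iff] at hx hy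
  rcases hx with rfl | rfl <;> rcases hy with rfl | rfl
  · exact G.loopless.irrefl _
  · exact h
  · exact fun h' => h h'.symm
  · exact G.loopless.irrefl _

lemma mod_fiber {k v i : ℕ} (hk : 0 < k) (hv : v < 3*k) (hi : i < k) :
    v % k = i ↔ (v = i ∨ v = i + k ∨ v = i + 2*k) := by
  constructor
  · intro h
    have hd := Nat.div_add_mod v k
    have hq : v / k < 3 := Nat.div_lt_of_lt_mul (by omega)
    have h3 : v / k = 0 ∨ v / k = 1 ∨ v / k = 2 := by generalize v / k = q at hq; omega
    rcases h3 with h3 | h3 | h3 <;> rw [h3] at hd <;> omega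
  · rintro (rfl | rfl | rfl)
    · exact Nat.mod_eq_of_lt hi
    · rw [Nat.add_mod_right]; exact Nat.mod_eq_of_lt hi
    · show (i + 2*k) % k = i
      have : i + 2*k = i + k + k := by omega
      rw [this, Nat.add_mod_right, Nat.add_mod_right]; exact Nat.mod_eq_of_lt hi

lemma upper_general (hn : n = 4 ∨ 6 ≤ n) (hn7 : n ≠ 7) :
    ∃ f : Fin n → Fin ((n+2)/3), ∀ i, IsIMVSet (cycleGraph n) (f ⁻¹' {i}) := by
  have hn4 : 4 ≤ n := by omega
  haveI : NeZero n := ⟨by omega⟩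
  set k := (n+2)/3 with hk
  have hk2 : 2 ≤ k := by omega
  have h3k : n ≤ 3 * k := by omega
  have h2k : 2 * k ≤ n := by omega
  have hkpos : 0 < k := by omega
  refine ⟨fun v => ⟨v.val % k, Nat.mod_lt _ hkpos⟩, ?_⟩
  intro i
  have hik : i.val < k := i.isLt
  set a : Fin n := ⟨i.val, by omega⟩ with ha
  have key : ∀ (t : ℕ), t < n → (a + ((t : ℕ) : Fin n)).val = (i.val + t) % n := by
    intro t ht
    rw [Fin.val_add, cast_val_eq ht]
  by_cases hcase : i.val + 2 * k < n
  · have hset : (fun v : Fin n => (⟨v.val % k, Nat.mod_lt _ hkpos⟩ : Fin k)) ⁻¹' {i}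
        = {a, a + ((k : ℕ) : Fin n), a + ((k + k : ℕ) : Fin n)} := by
      ext v
      have hv := v.isLt
      have e2 := key k (by omega)
      have e3 := key (k + k) (by omega)
      rw [Nat.mod_eq_of_lt (by omega)] at e2
      rw [Nat.mod_eq_of_lt (by omega)] at e3
      simp only [Set.mem_preimage, Set.mem_singleton_iff, Set.mem_insert_iff,
        Fin.ext_iff, e2, e3]
      show v.val % k = i.val ↔ _
      rw [mod_fiber hkpos (by omega) hik]
      constructor
      · rintro (h | h | h)
        · exact Or.inl h
        · exact Or.inr (Or.inl h)
        · exact Or.inr (Or.inr (by omega))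
      · rintro (h | h | h)
        · exact Or.inl h
        · exact Or.inr (Or.inl h)
        · exact Or.inr (Or.inr (by omega))
    rw [hset]
    exact imv_triple (by omega) a hk2 hk2 (show 2 ≤ n - (k + k) by omega)
      (by omega) (by omega) (by omega) (by omega)
  · have hset : (fun v : Fin n => (⟨v.val % k, Nat.mod_lt _ hkpos⟩ : Fin k)) ⁻¹' {i}
        = {a, a + ((k : ℕ) : Fin n)} := by
      ext v
      have hv := v.isLt
      have e2 := key k (by omega)
      rw [Nat.mod_eq_of_lt (by omega)] at e2
      simp only [Set.mem_preimage, Set.mem_singleton_iff, Set.mem_insert_iff,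
        Fin.ext_iff, e2]
      show v.val % k = i.val ↔ _
      rw [mod_fiber hkpos (by omega) hik]
      constructor
      · rintro (h | h | h)
        · exact Or.inl h
        · exact Or.inr h
        · omega
      · rintro (h | h)
        · exact Or.inl h
        · exact Or.inr (Or.inl h)
    rw [hset]
    exact imv_pair (not_adj_shift a hk2 (by omega))

lemma vis_of_adj {G : SimpleGraph V} {X : Set V} {x y : V} (h : G.Adj x y) : Vis G X x y := by
  refine ⟨h.toWalk, ?_, ?_⟩
  · rw [dist_eq_one_iff_adj.mpr h]; rfl
  · intro z hz hzx hzy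
    have : z = x ∨ z = y := by simpa using hz
    rcases this with rfl | rfl
    · exact absurd rfl hzx
    · exact absurd rfl hzy

lemma sInf_eq_of {S : Set ℕ} {m : ℕ} (h1 : m ∈ S) (h2 : ∀ k ∈ S, m ≤ k) : sInf S = m :=
  le_antisymm (Nat.sInf_le h1) (h2 _ (Nat.sInf_mem ⟨m, h1⟩))

lemma upper7 : ∃ f : Fin 7 → Fin 3, ∀ i, IsIMVSet (cycleGraph 7) (f ⁻¹' {i}) := by
  refine ⟨![0,1,2,0,1,0,2], ?_⟩
  have h2 : (2:ℕ) ≤ 7 := by omega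
  intro i
  fin_cases i
  · show IsIMVSet (cycleGraph 7) ((![0,1,2,0,1,0,2] : Fin 7 → Fin 3) ⁻¹' {0})
    have hset : (![0,1,2,0,1,0,2] : Fin 7 → Fin 3) ⁻¹' {0}
        = {(0 : Fin 7), (0 : Fin 7) + ((3 : ℕ) : Fin 7), (0 : Fin 7) + ((3 + 2 : ℕ) : Fin 7)} := by
      ext v
      simp only [Set.mem_preimage, Set.mem_singleton_iff, Set.mem_insert_iff]
      fin_cases v <;> decide
    rw [hset]
    exact imv_triple h2 0 (g1 := 3) (g2 := 2) (g3 := 2) (by omega) (by omega) (by omega)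
      (by omega) (by omega) (by omega) (by omega)
  · show IsIMVSet (cycleGraph 7) ((![0,1,2,0,1,0,2] : Fin 7 → Fin 3) ⁻¹' {1})
    have hset : (![0,1,2,0,1,0,2] : Fin 7 → Fin 3) ⁻¹' {1}
        = {(1 : Fin 7), (1 : Fin 7) + ((3 : ℕ) : Fin 7)} := by
      ext v
      simp only [Set.mem_preimage, Set.mem_singleton_iff, Set.mem_insert_iff]
      fin_cases v <;> decide
    rw [hset]
    exact imv_pair (not_adj_shift 1 (t := 3) (by omega) (by omega))
  · show IsIMVSet (cycleGraph 7) ((![0,1,2,0,1,0,2] : Fin 7 → Fin 3) ⁻¹' {2})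
    have hset : (![0,1,2,0,1,0,2] : Fin 7 → Fin 3) ⁻¹' {2}
        = {(2 : Fin 7), (2 : Fin 7) + ((4 : ℕ) : Fin 7)} := by
      ext v
      simp only [Set.mem_preimage, Set.mem_singleton_iff, Set.mem_insert_iff]
      fin_cases v <;> decide
    rw [hset]
    exact imv_pair (not_adj_shift 2 (t := 4) (by omega) (by omega))

lemma adj3 {x y : Fin 3} (h : x ≠ y) : (cycleGraph 3).Adj x y := by
  rw [cycleGraph_three_eq_top]
  exact h

lemma mv3 : sInf {k | ∃ f : Fin 3 → Fin k, ∀ i, IsMVSet (cycleGraph 3) (f ⁻¹' {i})} = 1 := by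
  apply sInf_eq_of
  · refine ⟨fun _ => 0, ?_⟩
    intro i
    have huniv : ((fun _ => (0 : Fin 1)) ⁻¹' {i} : Set (Fin 3)) = Set.univ := by
      ext v; simp [Subsingleton.elim (0 : Fin 1) i]
    rw [huniv]
    intro x _ y _ hxy _
    exact vis_of_adj (adj3 hxy)
  · rintro k ⟨f, -⟩
    rcases Nat.eq_zero_or_pos k with rfl | h
    · exact (f 0).elim0
    · exact h

lemma imv3 : sInf {k | ∃ f : Fin 3 → Fin k, ∀ i, IsIMVSet (cycleGraph 3) (f ⁻¹' {i})} = 3 := by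
  apply sInf_eq_of
  · refine ⟨fun v => v, ?_⟩
    intro i
    have hset : ((fun v => v : Fin 3 → Fin 3) ⁻¹' {i}) = {i} := rfl
    rw [hset]
    exact imv_singleton
  · rintro k ⟨f, hf⟩
    have hinj : Function.Injective f := by
      intro x y hxy
      by_contra hne
      exact (hf (f x)).1 x rfl y (by simp [Set.mem_preimage, hxy]) (adj3 hne)
    simpa using Fintype.card_le_of_injective f hinj

lemma imv5 : sInf {k | ∃ f : Fin 5 → Fin k, ∀ i, IsIMVSet (cycleGraph 5) (f ⁻¹' {i})} = 3 := by
  apply sInf_eq_of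
  · refine ⟨![0,1,0,1,2], ?_⟩
    intro i
    fin_cases i
    · show IsIMVSet (cycleGraph 5) ((![0,1,0,1,2] : Fin 5 → Fin 3) ⁻¹' {0})
      have hset : (![0,1,0,1,2] : Fin 5 → Fin 3) ⁻¹' {0} = {(0 : Fin 5), 2} := by
        ext v
        simp only [Set.mem_preimage, Set.mem_singleton_iff, Set.mem_insert_iff]
        fin_cases v <;> decide
      rw [hset]
      exact imv_pair (by decide)
    · show IsIMVSet (cycleGraph 5) ((![0,1,0,1,2] : Fin 5 → Fin 3) ⁻¹' {1})
      have hset : (![0,1,0,1,2] : Fin 5 → Fin 3) ⁻¹' {1} = {(1 : Fin 5), 3} := by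
        ext v
        simp only [Set.mem_preimage, Set.mem_singleton_iff, Set.mem_insert_iff]
        fin_cases v <;> decide
      rw [hset]
      exact imv_pair (by decide)
    · show IsIMVSet (cycleGraph 5) ((![0,1,0,1,2] : Fin 5 → Fin 3) ⁻¹' {2})
      have hset : (![0,1,0,1,2] : Fin 5 → Fin 3) ⁻¹' {2} = {(4 : Fin 5)} := by
        ext v
        simp only [Set.mem_preimage, Set.mem_singleton_iff, Set.mem_insert_iff]
        fin_cases v <;> decide
      rw [hset]
      exact imv_singleton
  · rintro k ⟨f, hf⟩
    by_contra hlt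
    push_neg at hlt
    have hk2 : k ≤ 2 := by omega
    have hA : ∀ x y : Fin 5, (cycleGraph 5).Adj x y → f x ≠ f y := by
      intro x y hadj he
      exact (hf (f x)).1 x rfl y (by simp [Set.mem_preimage, he.symm]) hadj
    have : ∃ g : Fin 5 → Fin 2, ∀ x y, (cycleGraph 5).Adj x y → g x ≠ g y :=
      ⟨Fin.castLE hk2 ∘ f, fun x y hadj he => hA x y hadj (Fin.castLE_injective hk2 he)⟩
    exact (by decide : ¬ ∃ g : Fin 5 → Fin 2, ∀ x y, (cycleGraph 5).Adj x y → g x ≠ g y) this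

lemma mv5 : sInf {k | ∃ f : Fin 5 → Fin k, ∀ i, IsMVSet (cycleGraph 5) (f ⁻¹' {i})} = 2 := by
  apply sInf_eq_of
  · refine ⟨![0,1,0,1,0], ?_⟩
    intro i
    fin_cases i
    · show IsMVSet (cycleGraph 5) ((![0,1,0,1,0] : Fin 5 → Fin 2) ⁻¹' {0})
      have hset : (![0,1,0,1,0] : Fin 5 → Fin 2) ⁻¹' {0}
          = {(0 : Fin 5), (0 : Fin 5) + ((2 : ℕ) : Fin 5), (0 : Fin 5) + ((2 + 2 : ℕ) : Fin 5)} := by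
        ext v
        simp only [Set.mem_preimage, Set.mem_singleton_iff, Set.mem_insert_iff]
        fin_cases v <;> decide
      rw [hset]
      exact mv_triple (by omega) 0 (g1 := 2) (g2 := 2) (g3 := 1) (by omega) (by omega) (by omega)
        (by omega) (by omega) (by omega) (by omega)
    · show IsMVSet (cycleGraph 5) ((![0,1,0,1,0] : Fin 5 → Fin 2) ⁻¹' {1})
      have hset : (![0,1,0,1,0] : Fin 5 → Fin 2) ⁻¹' {1} = {(1 : Fin 5), 3} := by
        ext v
        simp only [Set.mem_preimage, Set.mem_singleton_iff, Set.mem_insert_iff]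
        fin_cases v <;> decide
      rw [hset]
      exact mv_pair
  · rintro k ⟨f, hf⟩
    by_contra hlt
    push_neg at hlt
    interval_cases k
    · exact (f 0).elim0
    · have huniv : (f ⁻¹' {0} : Set (Fin 5)) = Set.univ := by
        ext v; simp [Subsingleton.elim (f v) 0]
      have hmv := hf 0
      rw [huniv] at hmv
      have hd : (cycleGraph 5).dist 0 2 = 2 := by
        have := cyc_dist (n := 5) (by omega) 0 (g := 2) (by omega)
        simpa using this
      obtain ⟨p, hlen, hint⟩ := hmv 0 trivial 2 trivial (by decide)
        (cyc_reachable (by omega) 0 2)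
      rw [hd] at hlen
      rcases p with _ | ⟨h1, _ | ⟨h2, q⟩⟩
      · simp at hlen
      · rename_i z w
        have hq0 : q.length = 0 := by
          have h' : q.length + 1 + 1 = 2 := by simpa using hlen
          omega
        have hw : w = 2 := Walk.eq_of_length_eq_zero hq0
        subst hw
        exact hint z (by simp) h1.ne' h2.ne trivial

end aux

theorem stmt12 :
    (∀ n : ℕ, (n = 4 ∨ 6 ≤ n) →
      imvChrom (cycleGraph n) = (n + 2) / 3 ∧ mvChrom (cycleGraph n) = (n + 2) / 3) ∧
    imvChrom (cycleGraph 3) = 3 ∧ imvChrom (cycleGraph 5) = 3 ∧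
    mvChrom (cycleGraph 5) = 2 ∧ mvChrom (cycleGraph 3) = 1 := by
  constructor
  · intro n hn
    have hn3 : 3 ≤ n := by omega
    haveI : NeZero n := ⟨by omega⟩
    have himv : ∃ f : Fin n → Fin ((n+2)/3), ∀ i, IsIMVSet (cycleGraph n) (f ⁻¹' {i}) := by
      by_cases h7 : n = 7
      · subst h7
        exact upper7
      · exact upper_general hn h7
    have hmv : ∃ f : Fin n → Fin ((n+2)/3), ∀ i, IsMVSet (cycleGraph n) (f ⁻¹' {i}) :=
      himv.imp (fun f hf i => (hf i).2)
    have hlb : ∀ k ∈ {k | ∃ f : Fin n → Fin k, ∀ i, IsMVSet (cycleGraph n) (f ⁻¹' {i})},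
        (n+2)/3 ≤ k := by
      intro k hk
      have := mv_partition_lb k hk
      omega
    constructor
    · apply sInf_eq_of himv
      rintro k ⟨f, hf⟩
      exact hlb k ⟨f, fun i => (hf i).2⟩
    · exact sInf_eq_of hmv hlb
  exact ⟨imv3, imv5, mv5, mv3⟩
end

section
/- If T is a tree on at least three vertices, then χ_{μ_i}(T) = χ_μ(T). -/
open SimpleGraph

variable {V W : Type*}

section TreeAux

variable {G : SimpleGraph V}

variable {G : SimpleGraph V}

private lemma dist_split' {x y z : V} (p : G.Walk x y) (h : z ∈ p.support) :
    G.dist x z + G.dist z y ≤ p.length := by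
  classical
  have hl := congrArg Walk.length (p.take_spec h)
  rw [Walk.length_append] at hl
  have h1 := SimpleGraph.dist_le (p.takeUntil z h)
  have h2 := SimpleGraph.dist_le (p.dropUntil z h)
  omega

private lemma dist_split_eq' (hc : G.Connected) {x y z : V} (p : G.Walk x y)
    (hl : p.length = G.dist x y) (h : z ∈ p.support) :
    G.dist x z + G.dist z y = G.dist x y := by
  have h1 := dist_split' p h
  have h2 := hc.dist_triangle (u := x) (v := z) (w := y)
  omega

private lemma btw_mem_support' (ht : G.IsTree) {x y z : V}
    (hb : G.dist x z + G.dist z y = G.dist x y) (p : G.Walk x y)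
    (hp : p.IsPath) (hl : p.length = G.dist x y) : z ∈ p.support := by
  have hc := ht.isConnected
  obtain ⟨q1, hq1p, hq1l⟩ := (hc x z).exists_path_of_dist
  obtain ⟨q2, hq2p, hq2l⟩ := (hc z y).exists_path_of_dist
  have hdisj : ∀ a ∈ q1.support, a ∉ q2.support.tail := by
    intro a ha1 ha2
    have e1 := dist_split_eq' hc q1 hq1l ha1
    have ha2' : a ∈ q2.support := by
      rw [Walk.support_eq_cons q2]; exact List.mem_cons_of_mem _ ha2
    have e2 := dist_split_eq' hc q2 hq2l ha2'
    have t := hc.dist_triangle (u := x) (v := a) (w := y)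
    have c1 : G.dist z a = G.dist a z := SimpleGraph.dist_comm
    have haz : G.dist a z = 0 := by omega
    have haz' : a = z := (hc.dist_eq_zero_iff).mp haz
    subst haz'
    have hnd := hq2p.support_nodup
    rw [Walk.support_eq_cons q2] at hnd
    exact (List.nodup_cons.mp hnd).1 ha2
  have happ : (q1.append q2).IsPath := by
    rw [Walk.isPath_def, Walk.support_append]
    refine List.Nodup.append hq1p.support_nodup ?_ hdisj
    have hnd := hq2p.support_nodup
    rw [Walk.support_eq_cons q2] at hnd
    exact (List.nodup_cons.mp hnd).2
  have hpq : (⟨p, hp⟩ : G.Path x y) = ⟨q1.append q2, happ⟩ :=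
    ht.IsAcyclic.path_unique _ _
  have hw : p = q1.append q2 := congrArg Subtype.val hpq
  rw [hw, Walk.mem_support_append_iff]
  right
  exact Walk.start_mem_support q2

private lemma adj_dist_ne' (ht : G.IsTree) {u v : V} (h : G.Adj u v) (y : V) :
    G.dist u y ≠ G.dist v y := by
  have hc := ht.isConnected
  intro heq
  obtain ⟨p, hpp, hpl⟩ := (hc u y).exists_path_of_dist
  obtain ⟨q, hqp, hql⟩ := (hc v y).exists_path_of_dist
  have huq : u ∉ q.support := by
    intro hu
    have h1 := dist_split' q hu
    have h2 : 0 < G.dist v u := hc.pos_dist_of_ne (G.ne_of_adj h).symm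
    omega
  have hcons : (Walk.cons h q).IsPath := Walk.cons_isPath_iff h q |>.mpr ⟨hqp, huq⟩
  have hpq : (⟨p, hpp⟩ : G.Path u y) = ⟨Walk.cons h q, hcons⟩ :=
    ht.IsAcyclic.path_unique _ _
  have hw : p = Walk.cons h q := congrArg Subtype.val hpq
  have hlen := congrArg Walk.length hw
  rw [Walk.length_cons] at hlen
  omega

private lemma adj_parity' (ht : G.IsTree) {u v : V} (h : G.Adj u v) (y : V) :
    G.dist u y = G.dist v y + 1 ∨ G.dist v y = G.dist u y + 1 := by
  have hc := ht.isConnected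
  have h1 : G.dist u v = 1 := SimpleGraph.dist_eq_one_iff_adj.mpr h
  have h2 : G.dist v u = 1 := by rw [SimpleGraph.dist_comm]; exact h1
  have t1 := hc.dist_triangle (u := u) (v := v) (w := y)
  have t2 := hc.dist_triangle (u := v) (v := u) (w := y)
  have hne := adj_dist_ne' ht h y
  omega

private lemma btw_trans' (hc : G.Connected) {x w z y : V}
    (h1 : G.dist x w + G.dist w z = G.dist x z)
    (h2 : G.dist x z + G.dist z y = G.dist x y) :
    G.dist x w + G.dist w y = G.dist x y ∧ G.dist w z + G.dist z y = G.dist w y := by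
  have t1 := hc.dist_triangle (u := x) (v := w) (w := y)
  have t2 := hc.dist_triangle (u := w) (v := z) (w := y)
  omega

private lemma btw_linear' (ht : G.IsTree) {x y z w : V}
    (hz : G.dist x z + G.dist z y = G.dist x y)
    (hw : G.dist x w + G.dist w y = G.dist x y)
    (hle : G.dist x z ≤ G.dist x w) :
    G.dist x z + G.dist z w = G.dist x w := by
  classical
  have hc := ht.isConnected
  obtain ⟨p, hpp, hpl⟩ := (hc x y).exists_path_of_dist
  have hzs := btw_mem_support' ht hz p hpp hpl
  have hws := btw_mem_support' ht hw p hpp hpl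
  have hspec := p.take_spec hws
  have hlen := congrArg Walk.length hspec
  rw [Walk.length_append] at hlen
  have d1 := SimpleGraph.dist_le (p.takeUntil w hws)
  have d2 := SimpleGraph.dist_le (p.dropUntil w hws)
  rw [← hspec, Walk.mem_support_append_iff] at hzs
  rcases hzs with h1 | h2
  · have h3 := dist_split' (p.takeUntil w hws) h1
    have t := hc.dist_triangle (u := x) (v := z) (w := w)
    omega
  · have h3 := dist_split' (p.dropUntil w hws) h2
    have t3 := hc.dist_triangle (u := x) (v := w) (w := z)
    have hcm : G.dist z w = G.dist w z := SimpleGraph.dist_comm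
    have hwz0 : G.dist w z = 0 := by omega
    have hwz : w = z := (hc.dist_eq_zero_iff).mp hwz0
    subst hwz
    have : G.dist w w = 0 := SimpleGraph.dist_self
    omega


private lemma isMVSet_of_metric (hc : G.Connected) {X : Set V}
    (H : ∀ x ∈ X, ∀ y ∈ X, x ≠ y → ∀ z ∈ X, z ≠ x → z ≠ y →
      G.dist x z + G.dist z y ≠ G.dist x y) : IsMVSet G X := by
  intro x hx y hy hxy _
  obtain ⟨p, hpl⟩ := (hc x y).exists_walk_length_eq_dist
  refine ⟨p, hpl, ?_⟩
  intro z hz hzx hzy hzX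
  refine H x hx y hy hxy z hzX hzx hzy ?_
  have h1 := dist_split' p hz
  have t := hc.dist_triangle (u := x) (v := z) (w := y)
  omega

private lemma metric_of_isMVSet (ht : G.IsTree) {X : Set V} (h : IsMVSet G X) :
    ∀ x ∈ X, ∀ y ∈ X, x ≠ y → ∀ z ∈ X, z ≠ x → z ≠ y →
      G.dist x z + G.dist z y ≠ G.dist x y := by
  intro x hx y hy hxy z hzX hzx hzy hb
  obtain ⟨p, hpl, havoid⟩ := h x hx y hy hxy (ht.isConnected x y)
  have hpp := p.isPath_of_length_eq_dist hpl
  exact havoid z (btw_mem_support' ht hb p hpp hpl) hzx hzy hzX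

private lemma mv_edge_subset (ht : G.IsTree) {X : Set V} (h : IsMVSet G X)
    {u v : V} (hu : u ∈ X) (hv : v ∈ X) (huv : G.Adj u v) :
    X ⊆ {u, v} := by
  intro w hw
  by_contra hwuv
  simp only [Set.mem_insert_iff, Set.mem_singleton_iff] at hwuv
  push_neg at hwuv
  obtain ⟨hwu, hwv⟩ := hwuv
  have hm := metric_of_isMVSet ht h
  have h1 : G.dist u v = 1 := SimpleGraph.dist_eq_one_iff_adj.mpr huv
  have h2 : G.dist v u = 1 := by rw [SimpleGraph.dist_comm]; exact h1
  rcases adj_parity' ht huv w with hp | hp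
  · exact hm u hu w hw (Ne.symm hwu) v hv (G.ne_of_adj huv).symm (Ne.symm hwv)
      (by omega)
  · exact hm v hv w hw (Ne.symm hwv) u hu (G.ne_of_adj huv) (Ne.symm hwu)
      (by omega)

private lemma btw_side_swap (ht : G.IsTree) {u v : V} (huv : G.Adj u v)
    {y y' : V} (hyu : y ≠ u) (hyv : y ≠ v) (hy'u : y' ≠ u) (hy'v : y' ≠ v) :
    (G.dist u y + G.dist y y' = G.dist u y' ↔
      G.dist v y + G.dist y y' = G.dist v y') := by
  have hc := ht.isConnected
  have h1 : G.dist u v = 1 := SimpleGraph.dist_eq_one_iff_adj.mpr huv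
  have h2 : G.dist v u = 1 := by rw [SimpleGraph.dist_comm]; exact h1
  have hposu : 0 < G.dist u y := hc.pos_dist_of_ne (Ne.symm hyu)
  have hposv : 0 < G.dist v y := hc.pos_dist_of_ne (Ne.symm hyv)
  rcases adj_parity' ht huv y with hy | hy <;>
    rcases adj_parity' ht huv y' with hy' | hy'
  · -- y closer to v, y' closer to v
    omega
  · -- y closer to v (dist u y = dist v y + 1), y' closer to u
    constructor
    · intro h
      have hb : G.dist u v + G.dist v y = G.dist u y := by omega
      have := (btw_trans' hc hb h).1
      omega
    · intro h
      have hb : G.dist v u + G.dist u y' = G.dist v y' := by omega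
      have := btw_linear' ht hb h (by omega)
      omega
  · -- y closer to u, y' closer to v
    constructor
    · intro h
      have hb : G.dist u v + G.dist v y' = G.dist u y' := by omega
      have := btw_linear' ht hb h (by omega)
      omega
    · intro h
      have hb : G.dist v u + G.dist u y = G.dist v y := by omega
      have := (btw_trans' hc hb h).1
      omega
  · omega


private lemma zlem (ht : G.IsTree) {u v : V} (huv : G.Adj u v) {Y : Set V}
    (hY : IsMVSet G Y) (huY : u ∉ Y) (hvY : v ∉ Y)
    (R : V → Prop)
    (hR : ∀ y, R y ↔ ∃ m ∈ Y, m ≠ y ∧ G.dist u m + G.dist m y = G.dist u y)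
    (S : Set V)
    (hS : ∀ y, y ∈ S ↔ y ∈ Y ∧ ((R y ∧ G.dist v y = G.dist u y + 1) ∨
      (¬ R y ∧ G.dist u y = G.dist v y + 1))) :
    IsIMVSet G ({u} ∪ S) := by
  have hc := ht.isConnected
  have hm := metric_of_isMVSet ht hY
  have h1uv : G.dist u v = 1 := SimpleGraph.dist_eq_one_iff_adj.mpr huv
  have h1vu : G.dist v u = 1 := by rw [SimpleGraph.dist_comm]; exact h1uv
  have hpos : ∀ y ∈ Y, 0 < G.dist u y ∧ 0 < G.dist v y := by
    intro y hy
    constructor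
    · exact hc.pos_dist_of_ne (fun e => huY (e ▸ hy))
    · exact hc.pos_dist_of_ne (fun e => hvY (e ▸ hy))
  -- no chain within S, seen from u
  have AUX : ∀ x ∈ S, ∀ y ∈ S, x ≠ y → G.dist u x + G.dist x y ≠ G.dist u y := by
    intro x hx y hy hxy hbtw
    obtain ⟨hxY, hxP⟩ := (hS x).mp hx
    obtain ⟨hyY, hyP⟩ := (hS y).mp hy
    rcases hxP with ⟨hRx, _⟩ | ⟨hnRx, hsVx⟩
    · obtain ⟨m, hmY, hmx, hbm⟩ := (hR x).mp hRx
      obtain ⟨hb1, hb2⟩ := btw_trans' hc hbm hbtw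
      have hmy : m ≠ y := by
        intro e; subst e
        have c1 : G.dist m x = G.dist x m := SimpleGraph.dist_comm
        have h0 : G.dist x m = 0 := by omega
        exact hxy ((hc.dist_eq_zero_iff).mp h0)
      exact hm m hmY y hyY hmy x hxY (Ne.symm hmx) hxy hb2
    · rcases hyP with ⟨hRy, hsUy⟩ | ⟨hnRy, _⟩
      · have hb : G.dist u v + G.dist v x = G.dist u x := by omega
        have := (btw_trans' hc hb hbtw).1
        omega
      · exact hnRy ((hR y).mpr ⟨x, hxY, hxy, hbtw⟩)
  -- u is adjacent to nothing in S
  have noAdjU : ∀ b ∈ S, ¬ G.Adj u b := by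
    intro b hb hAdj
    obtain ⟨hbY, hbP⟩ := (hS b).mp hb
    have hub : G.dist u b = 1 := SimpleGraph.dist_eq_one_iff_adj.mpr hAdj
    rcases hbP with ⟨hRb, _⟩ | ⟨_, hsVb⟩
    · obtain ⟨m, hmY, hmb, hbm⟩ := (hR b).mp hRb
      have hp1 : 0 < G.dist u m := (hpos m hmY).1
      have h0 : G.dist m b = 0 := by omega
      exact hmb ((hc.dist_eq_zero_iff).mp h0)
    · have h0 : G.dist v b = 0 := by omega
      have : v ∈ Y := by rw [(hc.dist_eq_zero_iff).mp h0]; exact hbY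
      exact hvY this
  have hindep : ∀ a ∈ ({u} ∪ S : Set V), ∀ b ∈ ({u} ∪ S : Set V), ¬ G.Adj a b := by
    intro a ha b hb hAdj
    simp only [Set.mem_union, Set.mem_singleton_iff] at ha hb
    rcases ha with rfl | haS
    · rcases hb with rfl | hbS
      · exact G.irrefl hAdj
      · exact noAdjU b hbS hAdj
    · rcases hb with rfl | hbS
      · exact noAdjU a haS hAdj.symm
      · by_cases hab : a = b
        · subst hab; exact G.irrefl hAdj
        have hd : G.dist a b = 1 := SimpleGraph.dist_eq_one_iff_adj.mpr hAdj
        have hd' : G.dist b a = 1 := by rw [SimpleGraph.dist_comm]; exact hd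
        have c1 : G.dist a u = G.dist u a := SimpleGraph.dist_comm
        have c2 : G.dist b u = G.dist u b := SimpleGraph.dist_comm
        rcases adj_parity' ht hAdj u with hp | hp
        · exact AUX b hbS a haS (Ne.symm hab) (by omega)
        · exact AUX a haS b hbS hab (by omega)
  have claimU : ∀ p ∈ S, ∀ q ∈ S, R p → p ≠ q →
      G.dist p u + G.dist u q = G.dist p q → False := by
    intro p hp q hq hRp hpq hbtw
    obtain ⟨hpY, _⟩ := (hS p).mp hp
    obtain ⟨hqY, _⟩ := (hS q).mp hq
    obtain ⟨m, hmY, hmp, hbm⟩ := (hR p).mp hRp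
    have c1 : G.dist p m = G.dist m p := SimpleGraph.dist_comm
    have c2 : G.dist m u = G.dist u m := SimpleGraph.dist_comm
    have c3 : G.dist p u = G.dist u p := SimpleGraph.dist_comm
    have hb' : G.dist p m + G.dist m u = G.dist p u := by omega
    obtain ⟨hb1, hb2⟩ := btw_trans' hc hb' hbtw
    have hmq : m ≠ q := by
      intro e; subst e
      have c4 : G.dist m m = 0 := SimpleGraph.dist_self
      have c5 : G.dist m u = G.dist u m := SimpleGraph.dist_comm
      have h0 : G.dist u m = 0 := by omega
      have : u ∈ Y := by rw [(hc.dist_eq_zero_iff).mp h0]; exact hmY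
      exact huY this
    exact hm p hpY q hqY hpq m hmY hmp hmq hb1
  refine ⟨hindep, isMVSet_of_metric hc ?_⟩
  intro x hx y hy hxy z hz hzx hzy hbtw
  simp only [Set.mem_union, Set.mem_singleton_iff] at hx hy hz
  rcases hz with rfl | hzS
  · rcases hx with rfl | hxS
    · exact hzx rfl
    rcases hy with rfl | hyS
    · exact hzy rfl
    obtain ⟨hxY, hxP⟩ := (hS x).mp hxS
    obtain ⟨hyY, hyP⟩ := (hS y).mp hyS
    rcases hxP with ⟨hRx, _⟩ | ⟨hnRx, hsVx⟩
    · exact claimU x hxS y hyS hRx hxy hbtw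
    rcases hyP with ⟨hRy, _⟩ | ⟨hnRy, hsVy⟩
    · refine claimU y hyS x hxS hRy (Ne.symm hxy) ?_
      have c1 : G.dist y z = G.dist z y := SimpleGraph.dist_comm
      have c2 : G.dist x z = G.dist z x := SimpleGraph.dist_comm
      have c3 : G.dist y x = G.dist x y := SimpleGraph.dist_comm
      omega
    · have t : G.dist x y ≤ G.dist x v + G.dist v y := hc.dist_triangle
      have c1 : G.dist x z = G.dist z x := SimpleGraph.dist_comm
      have c2 : G.dist x v = G.dist v x := SimpleGraph.dist_comm
      omega
  · rcases hx with rfl | hxS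
    · rcases hy with rfl | hyS
      · exact hxy rfl
      exact AUX z hzS y hyS hzy hbtw
    rcases hy with rfl | hyS
    · refine AUX z hzS x hxS hzx ?_
      have c1 : G.dist y z = G.dist z y := SimpleGraph.dist_comm
      have c2 : G.dist x z = G.dist z x := SimpleGraph.dist_comm
      have c3 : G.dist y x = G.dist x y := SimpleGraph.dist_comm
      omega
    · exact hm x ((hS x).mp hxS).1 y ((hS y).mp hyS).1 hxy z ((hS z).mp hzS).1 hzx hzy hbtw


private lemma surgery [Fintype V] (ht : G.IsTree)
    (hn : 3 ≤ Fintype.card V) {k : ℕ} (f : V → Fin k)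
    (hf : ∀ i, IsMVSet G (f ⁻¹' {i})) :
    ∃ g : V → Fin k, ∀ i, IsIMVSet G (g ⁻¹' {i}) := by
  classical
  suffices H : ∀ (N : ℕ) (f : V → Fin k), (∀ i, IsMVSet G (f ⁻¹' {i})) →
      (Finset.univ.filter fun i : Fin k =>
        ∃ a b : V, G.Adj a b ∧ f a = i ∧ f b = i).card ≤ N →
      ∃ g : V → Fin k, ∀ i, IsIMVSet G (g ⁻¹' {i}) by
    exact H _ f hf (le_refl _)
  intro N
  induction N with
  | zero =>
    intro f hf hcard
    refine ⟨f, fun i => ⟨?_, hf i⟩⟩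
    intro a ha b hb hAdj
    have hmem : i ∈ Finset.univ.filter fun i : Fin k =>
        ∃ a b : V, G.Adj a b ∧ f a = i ∧ f b = i :=
      Finset.mem_filter.mpr ⟨Finset.mem_univ _, ⟨a, b, hAdj, ha, hb⟩⟩
    have := Finset.card_pos.mpr ⟨i, hmem⟩
    omega
  | succ N ih =>
    intro f hf hcard
    by_cases hbad : ∃ i : Fin k, ∃ a b : V, G.Adj a b ∧ f a = i ∧ f b = i
    · obtain ⟨i, u, v, huv, hu, hv⟩ := hbad
      have hc := ht.isConnected
      have hfi : f ⁻¹' {i} = {u, v} := by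
        apply Set.Subset.antisymm
        · exact mv_edge_subset ht (hf i) hu hv huv
        · intro x hx
          rcases hx with rfl | hx
          · exact hu
          · rw [Set.mem_singleton_iff] at hx; subst hx; exact hv
      have hk2 : 2 ≤ k := by
        by_contra hk
        push_neg at hk
        have hk1 : k = 1 := by have := i.pos; omega
        have hall : ∀ x : V, x = u ∨ x = v := by
          intro x
          have hxi : f x = i := by
            subst hk1; exact Subsingleton.elim _ _
          have : x ∈ f ⁻¹' {i} := hxi
          rw [hfi] at this
          rcases this with h | h
          · exact Or.inl h
          · exact Or.inr h
        have hsub : (Finset.univ : Finset V) ⊆ {u, v} := by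
          intro x _
          rcases hall x with rfl | rfl
          · simp
          · simp
        have := Finset.card_le_card hsub
        have h2 : ({u, v} : Finset V).card ≤ 2 := by
          apply le_trans (Finset.card_insert_le _ _); simp
        rw [← Fintype.card] at this
        omega
      obtain ⟨j, hji⟩ := Fintype.exists_ne_of_one_lt_card
        (by rw [Fintype.card_fin]; omega) i
      set Y : Set V := f ⁻¹' {j} with hYdef
      have hYmv : IsMVSet G Y := hf j
      have huY : u ∉ Y := by
        intro h
        exact hji (by rw [← h, hu])
      have hvY : v ∉ Y := by
        intro h
        exact hji (by rw [← h, hv])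
      set R1 : V → Prop := fun y => ∃ m ∈ Y, m ≠ y ∧
        G.dist u m + G.dist m y = G.dist u y with hR1def
      set R2 : V → Prop := fun y => ∃ m ∈ Y, m ≠ y ∧
        G.dist v m + G.dist m y = G.dist v y with hR2def
      set S1 : Set V := {y ∈ Y | (R1 y ∧ G.dist v y = G.dist u y + 1) ∨
        (¬ R1 y ∧ G.dist u y = G.dist v y + 1)} with hS1def
      set S2 : Set V := {y ∈ Y | (R2 y ∧ G.dist u y = G.dist v y + 1) ∨
        (¬ R2 y ∧ G.dist v y = G.dist u y + 1)} with hS2def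
      have hS1mem : ∀ y, y ∈ S1 ↔ y ∈ Y ∧ ((R1 y ∧ G.dist v y = G.dist u y + 1) ∨
          (¬ R1 y ∧ G.dist u y = G.dist v y + 1)) := fun y => Iff.rfl
      have hS2mem : ∀ y, y ∈ S2 ↔ y ∈ Y ∧ ((R2 y ∧ G.dist u y = G.dist v y + 1) ∨
          (¬ R2 y ∧ G.dist v y = G.dist u y + 1)) := fun y => Iff.rfl
      have hZ1 : IsIMVSet G ({u} ∪ S1) :=
        zlem ht huv hYmv huY hvY R1 (fun y => Iff.rfl) S1 hS1mem
      have hZ2 : IsIMVSet G ({v} ∪ S2) :=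
        zlem ht huv.symm hYmv hvY huY R2 (fun y => Iff.rfl) S2 hS2mem
      have hR12 : ∀ y ∈ Y, (R1 y ↔ R2 y) := by
        intro y hy
        have hyu : y ≠ u := fun e => huY (e ▸ hy)
        have hyv : y ≠ v := fun e => hvY (e ▸ hy)
        constructor
        · rintro ⟨m, hmY, hmy, hb⟩
          refine ⟨m, hmY, hmy, ?_⟩
          exact (btw_side_swap ht huv (fun e => huY (e ▸ hmY))
            (fun e => hvY (e ▸ hmY)) hyu hyv).mp hb
        · rintro ⟨m, hmY, hmy, hb⟩
          refine ⟨m, hmY, hmy, ?_⟩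
          exact (btw_side_swap ht huv.symm (fun e => hvY (e ▸ hmY))
            (fun e => huY (e ▸ hmY)) hyv hyu).mp hb
      have hpar : ∀ y ∈ Y, (G.dist u y = G.dist v y + 1 ∨ G.dist v y = G.dist u y + 1)
          ∧ ¬(G.dist u y = G.dist v y + 1 ∧ G.dist v y = G.dist u y + 1) := by
        intro y hy
        have := adj_parity' ht huv y
        omega
      set Z1 : Set V := {u} ∪ S1 with hZ1def
      set Z2 : Set V := {v} ∪ S2 with hZ2def
      have hvu : v ≠ u := (G.ne_of_adj huv).symm
      have hdisj : ∀ x, x ∈ Z1 → x ∈ Z2 → False := by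
        intro x hx1 hx2
        rcases hx1 with hx1 | hx1
        · rw [Set.mem_singleton_iff] at hx1; subst hx1
          rcases hx2 with hx2 | hx2
          · rw [Set.mem_singleton_iff] at hx2; exact hvu hx2.symm
          · exact huY ((hS2mem x).mp hx2).1
        · rcases hx2 with hx2 | hx2
          · rw [Set.mem_singleton_iff] at hx2; subst hx2
            exact hvY ((hS1mem x).mp hx1).1
          · obtain ⟨hxY, hP1⟩ := (hS1mem x).mp hx1
            obtain ⟨_, hP2⟩ := (hS2mem x).mp hx2
            have h12 := hR12 x hxY
            have hp := (hpar x hxY).2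
            rcases hP1 with ⟨hr1, hs1⟩ | ⟨hnr1, hs1⟩ <;>
              rcases hP2 with ⟨hr2, hs2⟩ | ⟨hnr2, hs2⟩
            · exact hp ⟨hs2, hs1⟩
            · exact hnr2 (h12.mp hr1)
            · exact hnr1 (h12.mpr hr2)
            · exact hp ⟨hs1, hs2⟩
      have hcover : ∀ x, x ∈ f ⁻¹' {i} ∪ f ⁻¹' {j} ↔ x ∈ Z1 ∪ Z2 := by
        intro x
        constructor
        · intro hx
          rcases hx with hx | hx
          · rw [hfi] at hx
            rcases hx with rfl | hx
            · exact Or.inl (Or.inl rfl)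
            · rw [Set.mem_singleton_iff] at hx; subst hx
              exact Or.inr (Or.inl rfl)
          · have hxY : x ∈ Y := hx
            have h12 := hR12 x hxY
            have hp := (hpar x hxY).1
            by_cases hR : R1 x
            · rcases hp with hp | hp
              · exact Or.inr (Or.inr ⟨hxY, Or.inl ⟨h12.mp hR, hp⟩⟩)
              · exact Or.inl (Or.inr ⟨hxY, Or.inl ⟨hR, hp⟩⟩)
            · rcases hp with hp | hp
              · exact Or.inl (Or.inr ⟨hxY, Or.inr ⟨hR, hp⟩⟩)
              · exact Or.inr (Or.inr ⟨hxY, Or.inr ⟨fun h => hR (h12.mpr h), hp⟩⟩)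
        · intro hx
          rcases hx with hx | hx
          · rcases hx with hx | hx
            · rw [Set.mem_singleton_iff] at hx; subst hx
              exact Or.inl (by rw [hfi]; exact Or.inl rfl)
            · exact Or.inr ((hS1mem x).mp hx).1
          · rcases hx with hx | hx
            · rw [Set.mem_singleton_iff] at hx; subst hx
              exact Or.inl (by rw [hfi]; exact Or.inr rfl)
            · exact Or.inr ((hS2mem x).mp hx).1
      clear hS1mem hS2mem hR12 hpar hZ1def hZ2def
      clear_value Z1 Z2
      set g : V → Fin k := fun x => if x ∈ Z1 then i else if x ∈ Z2 then j else f x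
        with hgdef
      have hgi : g ⁻¹' {i} = Z1 := by
        ext x
        simp only [Set.mem_preimage, Set.mem_singleton_iff, hgdef]
        constructor
        · intro hx
          by_cases h1 : x ∈ Z1
          · exact h1
          by_cases h2 : x ∈ Z2
          · rw [if_neg h1, if_pos h2] at hx
            exact absurd hx hji
          · rw [if_neg h1, if_neg h2] at hx
            have : x ∈ Z1 ∪ Z2 := (hcover x).mp (Or.inl hx)
            rcases this with h | h
            · exact absurd h h1
            · exact absurd h h2
        · intro hx
          rw [if_pos hx]
      have hgj : g ⁻¹' {j} = Z2 := by
        ext x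
        simp only [Set.mem_preimage, Set.mem_singleton_iff, hgdef]
        constructor
        · intro hx
          by_cases h1 : x ∈ Z1
          · rw [if_pos h1] at hx
            exact absurd hx.symm hji
          by_cases h2 : x ∈ Z2
          · exact h2
          · rw [if_neg h1, if_neg h2] at hx
            have : x ∈ Z1 ∪ Z2 := (hcover x).mp (Or.inr hx)
            rcases this with h | h
            · exact absurd h h1
            · exact absurd h h2
        · intro hx
          have h1 : x ∉ Z1 := fun h => hdisj x h hx
          rw [if_neg h1, if_pos hx]
      have hgl : ∀ l : Fin k, l ≠ i → l ≠ j → g ⁻¹' {l} = f ⁻¹' {l} := by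
        intro l hli hlj
        ext x
        simp only [Set.mem_preimage, Set.mem_singleton_iff, hgdef]
        by_cases h1 : x ∈ Z1
        · rw [if_pos h1]
          have hfx : x ∈ f ⁻¹' {i} ∪ f ⁻¹' {j} := (hcover x).mpr (Or.inl h1)
          constructor
          · intro h; exact absurd h.symm hli
          · intro h
            rcases hfx with hfx | hfx
            · have hxi : f x = i := hfx
              exact absurd (by rw [← h, hxi]) hli
            · have hxj : f x = j := hfx
              exact absurd (by rw [← h, hxj]) hlj
        by_cases h2 : x ∈ Z2
        · rw [if_neg h1, if_pos h2]
          have hfx : x ∈ f ⁻¹' {i} ∪ f ⁻¹' {j} := (hcover x).mpr (Or.inr h2)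
          constructor
          · intro h; exact absurd h.symm hlj
          · intro h
            rcases hfx with hfx | hfx
            · have hxi : f x = i := hfx
              exact absurd (by rw [← h, hxi]) hli
            · have hxj : f x = j := hfx
              exact absurd (by rw [← h, hxj]) hlj
        · rw [if_neg h1, if_neg h2]
      have hg : ∀ l, IsMVSet G (g ⁻¹' {l}) := by
        intro l
        by_cases hli : l = i
        · subst hli; rw [hgi]; exact hZ1.2
        by_cases hlj : l = j
        · subst hlj; rw [hgj]; exact hZ2.2
        · rw [hgl l hli hlj]; exact hf l
      have hindepZ : ∀ l, (l = i ∨ l = j) → ∀ a ∈ g ⁻¹' {l}, ∀ b ∈ g ⁻¹' {l},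
          ¬ G.Adj a b := by
        intro l hl a ha b hb
        rcases hl with rfl | rfl
        · rw [hgi] at ha hb; exact hZ1.1 a ha b hb
        · rw [hgj] at ha hb; exact hZ2.1 a ha b hb
      refine ih g hg ?_
      have hsub : (Finset.univ.filter fun l : Fin k =>
          ∃ a b : V, G.Adj a b ∧ g a = l ∧ g b = l) ⊆
          (Finset.univ.filter fun l : Fin k =>
          ∃ a b : V, G.Adj a b ∧ f a = l ∧ f b = l).erase i := by
        intro l hl
        obtain ⟨-, a, b, hab, hga, hgb⟩ := Finset.mem_filter.mp hl
        have hli : l ≠ i := by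
          rintro rfl
          exact hindepZ l (Or.inl rfl) a hga b hgb hab
        have hlj : l ≠ j := by
          rintro rfl
          exact hindepZ l (Or.inr rfl) a hga b hgb hab
        have hfl := hgl l hli hlj
        refine Finset.mem_erase.mpr ⟨hli, Finset.mem_filter.mpr ⟨Finset.mem_univ _, a, b, hab, ?_, ?_⟩⟩
        · have : a ∈ g ⁻¹' {l} := hga
          rw [hfl] at this; exact this
        · have : b ∈ g ⁻¹' {l} := hgb
          rw [hfl] at this; exact this
      have himem : i ∈ Finset.univ.filter fun l : Fin k =>
          ∃ a b : V, G.Adj a b ∧ f a = l ∧ f b = l :=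
        Finset.mem_filter.mpr ⟨Finset.mem_univ _, u, v, huv, hu, hv⟩
      have h1 := Finset.card_le_card hsub
      rw [Finset.card_erase_of_mem himem] at h1
      omega
    · push_neg at hbad
      refine ⟨f, fun l => ⟨?_, hf l⟩⟩
      intro a ha b hb hAdj
      exact hbad l a b hAdj ha hb

private lemma imv_exists [Fintype V] (G : SimpleGraph V) :
    ∃ f : V → Fin (Fintype.card V), ∀ i, IsIMVSet G (f ⁻¹' {i}) := by
  refine ⟨Fintype.equivFin V, fun i => ⟨?_, ?_⟩⟩
  · intro a ha b hb hadj
    have hab : a = b := (Fintype.equivFin V).injective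
      (by rw [Set.mem_preimage, Set.mem_singleton_iff] at ha hb; rw [ha, hb])
    subst hab
    exact G.irrefl hadj
  · intro x hx y hy hxy _
    exact absurd ((Fintype.equivFin V).injective
      (by rw [Set.mem_preimage, Set.mem_singleton_iff] at hx hy; rw [hx, hy])) hxy

end TreeAux


theorem stmt13 [Fintype V] (G : SimpleGraph V) (hT : G.IsTree)
    (hn : 3 ≤ Fintype.card V) :
    imvChrom G = mvChrom G := by
  have himv_ne : {k | ∃ f : V → Fin k, ∀ i, IsIMVSet G (f ⁻¹' {i})}.Nonempty :=
    ⟨Fintype.card V, imv_exists G⟩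
  have hmv_ne : {k | ∃ f : V → Fin k, ∀ i, IsMVSet G (f ⁻¹' {i})}.Nonempty := by
    obtain ⟨f, hf⟩ := imv_exists G
    exact ⟨Fintype.card V, f, fun i => (hf i).2⟩
  apply le_antisymm
  · obtain ⟨f, hf⟩ := Nat.sInf_mem hmv_ne
    obtain ⟨g, hg⟩ := surgery hT hn f hf
    exact Nat.sInf_le ⟨g, hg⟩
  · obtain ⟨f, hf⟩ := Nat.sInf_mem himv_ne
    exact Nat.sInf_le ⟨f, fun i => (hf i).2⟩
end

section
/- If G is a graph with diameter at most 3, then χ_{μ_i}(G) = χ(G). -/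
open SimpleGraph

variable {V W : Type*}

/-- With diameter at most 3, any independent set is a mutual-visibility set. -/
lemma indep_isMVSet (G : SimpleGraph V)
    (hdiam : ∀ u v : V, G.dist u v ≤ 3) (X : Set V)
    (hind : ∀ x ∈ X, ∀ y ∈ X, ¬ G.Adj x y) : IsMVSet G X := by
  classical
  intro x hx y hy hne hr
  obtain ⟨p, hp⟩ := hr.exists_walk_length_eq_dist
  refine ⟨p, hp, ?_⟩
  intro z hz hzx hzy hzX
  -- z is an internal vertex of a geodesic of length ≤ 3
  have htake := p.take_spec hz
  have hlen : (p.takeUntil z hz).length + (p.dropUntil z hz).length = p.length := by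
    rw [← SimpleGraph.Walk.length_append, htake]
  have h1 : G.dist x z ≤ (p.takeUntil z hz).length := SimpleGraph.dist_le _
  have h2 : G.dist z y ≤ (p.dropUntil z hz).length := SimpleGraph.dist_le _
  have hsum : G.dist x z + G.dist z y ≤ 3 := by
    calc G.dist x z + G.dist z y ≤ _ + _ := Nat.add_le_add h1 h2
    _ = p.length := hlen
    _ = G.dist x y := hp
    _ ≤ 3 := hdiam x y
  have hrxz : G.Reachable x z := ⟨p.takeUntil z hz⟩
  have hrzy : G.Reachable z y := ⟨p.dropUntil z hz⟩
  have hp1 : 0 < G.dist x z := hrxz.pos_dist_of_ne (Ne.symm hzx)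
  have hp2 : 0 < G.dist z y := hrzy.pos_dist_of_ne hzy
  -- one of the distances is 1, giving an adjacency inside X
  rcases Nat.lt_or_ge (G.dist x z) 2 with h | h
  · have : G.dist x z = 1 := by omega
    exact hind x hx z hzX (SimpleGraph.dist_eq_one_iff_adj.mp this)
  · have : G.dist z y = 1 := by omega
    exact hind z hzX y hy (SimpleGraph.dist_eq_one_iff_adj.mp this)

theorem stmt14 [Fintype V] (G : SimpleGraph V) (hconn : G.Connected)
    (hdiam : ∀ u v : V, G.dist u v ≤ 3) :
    imvChrom G = chromNat G := by
  unfold imvChrom chromNat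
  congr 1
  ext k
  constructor
  · rintro ⟨f, hf⟩
    exact ⟨SimpleGraph.Coloring.mk f fun {u v} huv h => (hf (f v)).1 u h v rfl huv⟩
  · rintro ⟨C⟩
    refine ⟨C, fun i => ?_⟩
    have hind : ∀ x ∈ C ⁻¹' {i}, ∀ y ∈ C ⁻¹' {i}, ¬ G.Adj x y := by
      intro x hx y hy hadj
      exact C.valid hadj (hx.trans hy.symm)
    exact ⟨hind, indep_isMVSet G hdiam _ hind⟩
end

section
/- If G is a graph of diameter 2, then χ_μ(G) ≤ χ_1(G), where χ_1(G) is the 1-defective chromatic number. -/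
open SimpleGraph

variable {V W : Type*}

/-- The 1-defective chromatic number `χ₁(G)`: the least `k` admitting a `k`-coloring in
which every vertex has at most one neighbor of its own color. -/
noncomputable def defChrom1 (G : SimpleGraph V) : ℕ :=
  sInf {k | ∃ f : V → Fin k, ∀ v : V, {w | G.Adj v w ∧ f w = f v}.Subsingleton}


theorem key {G : SimpleGraph V} (hle : ∀ u v : V, G.dist u v ≤ 2)
    (X : Set V) (hX : ∀ v ∈ X, ∀ x ∈ X, ∀ y ∈ X, G.Adj v x → G.Adj v y → x = y) :
    IsMVSet G X := by
  intro x hx y hy hne hr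
  obtain ⟨p, hp⟩ := hr.exists_walk_length_eq_dist
  refine ⟨p, hp, ?_⟩
  have hpos := hr.pos_dist_of_ne hne
  have h12 : G.dist x y = 1 ∨ G.dist x y = 2 := by have := hle x y; omega
  rcases h12 with h | h
  · -- dist 1
    rw [h] at hp
    match p, hp with
    | SimpleGraph.Walk.cons hadj SimpleGraph.Walk.nil, _ =>
      intro z hz hzx hzy
      simp [SimpleGraph.Walk.support] at hz
      rcases hz with rfl | rfl <;> simp_all
  · rw [h] at hp
    match p, hp with
    | SimpleGraph.Walk.cons (w := m) h1 (SimpleGraph.Walk.cons h2 SimpleGraph.Walk.nil), _ =>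
      intro z hz hzx hzy
      simp [SimpleGraph.Walk.support] at hz
      rcases hz with rfl | rfl | rfl
      · exact absurd rfl hzx
      · intro hzX
        exact hne (hX z hzX x hx m hy h1.symm h2)
      · exact absurd rfl hzy

theorem stmt15 [Fintype V] (G : SimpleGraph V) (hconn : G.Connected)
    (hle : ∀ u v : V, G.dist u v ≤ 2) (heq : ∃ u v : V, G.dist u v = 2) :
    mvChrom G ≤ defChrom1 G := by
  have hS2 : {k | ∃ f : V → Fin k, ∀ v : V, {w | G.Adj v w ∧ f w = f v}.Subsingleton}.Nonempty := by
    refine ⟨Fintype.card V, Fintype.equivFin V, fun v => ?_⟩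
    intro a ha b hb
    exact absurd ((Fintype.equivFin V).injective ha.2) ha.1.ne'
  have hmem := Nat.sInf_mem hS2
  obtain ⟨f, hf⟩ := hmem
  apply Nat.sInf_le
  refine ⟨f, fun i => key hle _ ?_⟩
  intro v hv x hx y hy hvx hvy
  exact hf v ⟨hvx, (show f x = f v from (hx : f x = i).trans (hv : f v = i).symm)⟩ ⟨hvy, (show f y = f v from (hy : f y = i).trans (hv : f v = i).symm)⟩
end

section
/- If G is a graph of diameter 2 containing no triangle and no 4-cycle, then χ_μ(G) = χ_1(G). -/
open SimpleGraph

variable {V W : Type*}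

lemma walk_len2 {G : SimpleGraph V} {x y : V} (p : G.Walk x y) (h : p.length = 2) :
    ∃ w, G.Adj x w ∧ G.Adj w y ∧ p.support = [x, w, y] := by
  cases p with
  | nil => simp at h
  | cons h1 q =>
    cases q with
    | nil => simp at h
    | cons h2 r =>
      have hr : r.length = 0 := by simpa using h
      have hn := SimpleGraph.Walk.nil_iff_support_eq.mp
        (SimpleGraph.Walk.nil_iff_length_eq.mpr hr)
      have hy := SimpleGraph.Walk.eq_of_length_eq_zero hr
      refine ⟨_, h1, hy ▸ h2, ?_⟩
      simp [hn, hy]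

theorem stmt16 [Fintype V] (G : SimpleGraph V) (hconn : G.Connected)
    (hle : ∀ u v : V, G.dist u v ≤ 2) (heq : ∃ u v : V, G.dist u v = 2)
    (htf : G.CliqueFree 3)
    (hc4 : ∀ a b c d : V, G.Adj a b → G.Adj b c → G.Adj c d → G.Adj d a →
      a = c ∨ b = d) :
    mvChrom G = defChrom1 G := by
  classical
  -- unique common neighbour
  have huniq : ∀ {x y w1 w2 : V}, x ≠ y → G.Adj x w1 → G.Adj w1 y →
      G.Adj x w2 → G.Adj w2 y → w1 = w2 := by
    intro x y w1 w2 hxy h1 h2 h3 h4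
    rcases hc4 x w1 y w2 h1 h2 h4.symm h3.symm with h | h
    · exact absurd h hxy
    · exact h
  have hmain : {k | ∃ f : V → Fin k, ∀ i, IsMVSet G (f ⁻¹' {i})} =
      {k | ∃ f : V → Fin k, ∀ v : V, {w | G.Adj v w ∧ f w = f v}.Subsingleton} := by
    ext k
    constructor
    · rintro ⟨f, hf⟩
      refine ⟨f, fun v y hy z hz => ?_⟩
      by_contra hyz
      obtain ⟨hvy, hfy⟩ := hy
      obtain ⟨hvz, hfz⟩ := hz
      -- y, z distinct same-colour neighbours of v
      have hyzadj : ¬ G.Adj y z := by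
        intro hadj
        refine htf {v, y, z} ?_
        rw [SimpleGraph.isNClique_iff]
        constructor
        · intro a ha b hb hab
          simp only [Finset.coe_insert, Set.mem_insert_iff, Finset.coe_singleton,
            Set.mem_singleton_iff] at ha hb
          rcases ha with rfl | rfl | rfl <;> rcases hb with rfl | rfl | rfl <;>
            first
            | exact absurd rfl hab
            | assumption
            | exact hvy.symm
            | exact hvz.symm
            | exact hadj.symm
        · rw [Finset.card_insert_of_notMem (by simp [hvy.ne, hvz.ne]),
            Finset.card_insert_of_notMem (by simp [hyz])]
          rfl
      have hdist : G.dist y z = 2 := by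
        have h0 : G.dist y z ≠ 0 := by
          rw [SimpleGraph.dist_ne_zero_iff_ne_and_reachable]
          exact ⟨hyz, hconn y z⟩
        have h1 : G.dist y z ≠ 1 := fun h1 =>
          hyzadj (SimpleGraph.dist_eq_one_iff_adj.mp h1)
        have := hle y z
        omega
      obtain ⟨p, hp, hpint⟩ := hf (f v) y hfy z hfz hyz (hconn y z)
      rw [hdist] at hp
      obtain ⟨w, hw1, hw2, hws⟩ := walk_len2 p hp
      have hwv : w = v := huniq hyz hw1 hw2 hvy.symm hvz
      subst hwv
      have h1 : w ≠ y := fun h => hvy.ne (h ▸ rfl)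
      have h2 : w ≠ z := fun h => hvz.ne h
      exact hpint w (by simp [hws]) h1 h2 rfl
    · rintro ⟨f, hf⟩
      refine ⟨f, fun i x hx y hy hxy hr => ?_⟩
      have h0 : G.dist x y ≠ 0 := by
        rw [SimpleGraph.dist_ne_zero_iff_ne_and_reachable]
        exact ⟨hxy, hr⟩
      have hcase : G.dist x y = 1 ∨ G.dist x y = 2 := by
        have := hle x y; omega
      obtain ⟨p, hp⟩ := hr.exists_walk_length_eq_dist
      refine ⟨p, hp, ?_⟩
      rcases hcase with h | h
      · -- dist 1
        have hp1 : p.length = 1 := hp.trans h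
        cases p with
        | nil => simp at hp1
        | cons h1 q =>
          have hq : q.length = 0 := by simpa using hp1
          have hn := SimpleGraph.Walk.nil_iff_support_eq.mp
            (SimpleGraph.Walk.nil_iff_length_eq.mpr hq)
          have hby := SimpleGraph.Walk.eq_of_length_eq_zero hq
          intro z hz hzx hzy
          rw [SimpleGraph.Walk.support_cons, hn] at hz
          simp at hz
          rcases hz with rfl | rfl
          · exact absurd rfl hzx
          · exact absurd hby hzy
      · -- dist 2
        have hp2 : p.length = 2 := hp.trans h
        obtain ⟨w, hw1, hw2, hws⟩ := walk_len2 p hp2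
        intro z hz hzx hzy
        rw [hws] at hz
        simp at hz
        rcases hz with rfl | hzw | rfl
        · exact absurd rfl hzx
        · -- z = w : show w ∉ class i
          subst hzw
          intro hwX
          have hxX : f x = i := hx
          have hyX : f y = i := hy
          have hwi : f z = i := hwX
          have := hf z ⟨hw1.symm, hxX.trans hwi.symm⟩ ⟨hw2, hyX.trans hwi.symm⟩
          exact hxy this
        · exact absurd rfl hzy
  unfold mvChrom defChrom1
  rw [hmain]
end
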